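/- arXiv:0904.1968 — 7 statements merged into one kernel-verified Lean document; each statement's English description precedes it below -/
import Mathlib

section
/- Let G = ⟨z⟩ be a multiplicative cyclic group of order n = p^r with p prime and r ≥ 1, let ω ∈ ℂ be a primitive n-th root of unity, and let φ : ℤG → ℂ be the ring homomorphism with φ(z) = ω. Then ℕG ∩ ker(φ) = ℕG·σ(P_p); that is, an element of ℤG with all coefficients nonnegative is mapped to 0 by φ if and only if it equals α·σ(P_p) for some α ∈ ℕG, where P_p is the unique subgroup of G of order p. -/
open Polynomial Finset in
private lemma key_periodic (p r : ℕ) (hp : p.Prime) (hr : 1 ≤ r) (ω : ℂ)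
    (hω : IsPrimitiveRoot ω (p ^ r)) (a : ℕ → ℤ)
    (h0 : ∑ k ∈ Finset.range (p ^ r), (a k : ℂ) * ω ^ k = 0) :
    ∀ i < p ^ (r - 1), ∀ j < p, a (i + j * p ^ (r - 1)) = a i := by
  classical
  set d := p ^ (r - 1) with hd
  set n := p ^ r with hn
  have hdp : n = d * p := by
    rw [hn, hd, ← pow_succ]; congr 1; omega
  have hd0 : 0 < d := pow_pos hp.pos _
  have hn0 : 0 < n := pow_pos hp.pos _
  have hdn : d ≤ n := by
    rw [hdp]; exact Nat.le_mul_of_pos_right d hp.pos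
  set F : ℚ[X] := ∑ k ∈ range n, monomial k ((a k : ℚ)) with hF
  have hFcoeff : ∀ k < n, F.coeff k = (a k : ℚ) := by
    intro k hk
    rw [hF, finset_sum_coeff, Finset.sum_eq_single k]
    · simp
    · intro b _ hbk; simp [coeff_monomial, hbk]
    · intro hk'; exact absurd (mem_range.2 hk) hk'
  have haev : Polynomial.aeval ω F = 0 := by
    rw [hF, map_sum, ← h0]
    refine Finset.sum_congr rfl fun k _ => ?_
    rw [aeval_monomial]
    simp only [eq_ratCast]
    push_cast
    ring
  have hmin : Polynomial.cyclotomic n ℚ = minpoly ℚ ω :=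
    Polynomial.cyclotomic_eq_minpoly_rat hω hn0
  obtain ⟨Q, hQ⟩ : Polynomial.cyclotomic n ℚ ∣ F := hmin ▸ minpoly.dvd ℚ ω haev
  have hdegF : F.natDegree ≤ n - 1 := by
    rw [hF]
    refine Polynomial.natDegree_sum_le_of_forall_le _ _ fun k hk => ?_
    exact le_trans (natDegree_monomial_le _) (by have := mem_range.1 hk; omega)
  have hdegC : (Polynomial.cyclotomic n ℚ).natDegree = n - d := by
    rw [natDegree_cyclotomic, hn, Nat.totient_prime_pow hp hr]
    have h7 : p ^ r = p ^ (r-1) * p := by rw [← pow_succ]; congr 1; omega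
    rw [h7, ← hd, Nat.mul_sub, mul_one]
  have hQsmall : ∀ m, d ≤ m → Q.coeff m = 0 := by
    intro m hm
    by_cases hQ0 : Q = 0
    · simp [hQ0]
    apply coeff_eq_zero_of_natDegree_lt
    have hC0 : Polynomial.cyclotomic n ℚ ≠ 0 := (cyclotomic.monic n ℚ).ne_zero
    have hmul := Polynomial.natDegree_mul hC0 hQ0
    rw [← hQ, hdegC] at hmul
    omega
  have hCgeom : Polynomial.cyclotomic n ℚ = ∑ t ∈ range p, X ^ (d * t) := by
    rw [hn, show r = (r-1)+1 by omega, cyclotomic_prime_pow_eq_geom_sum hp]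
    exact Finset.sum_congr rfl fun t _ => by rw [← pow_mul, ← hd]
  have hcoe : ∀ m, F.coeff m = ∑ t ∈ range p,
      if d * t ≤ m then Q.coeff (m - d * t) else 0 := by
    intro m
    rw [hQ, hCgeom, Finset.sum_mul, finset_sum_coeff]
    exact Finset.sum_congr rfl fun t _ => by rw [coeff_X_pow_mul']
  intro i hi j hj
  have key : ∀ j' < p, F.coeff (i + j' * d) = Q.coeff i := by
    intro j' hj'
    rw [hcoe, Finset.sum_eq_single j']
    · rw [if_pos (by rw [mul_comm]; exact Nat.le_add_left _ _),
        mul_comm d j', Nat.add_sub_cancel]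
    · intro t ht htj
      rcases lt_or_gt_of_ne htj with hlt | hgt
      · have h2 : d * t + d ≤ j' * d := by
          rw [mul_comm j' d, ← Nat.mul_succ]; exact Nat.mul_le_mul_left d hlt
        rw [if_pos (by linarith), hQsmall]
        exact Nat.le_sub_of_add_le (by linarith)
      · have h2 : d * j' + d ≤ d * t := by
          rw [← Nat.mul_succ]; exact Nat.mul_le_mul_left d hgt
        rw [if_neg]
        rw [mul_comm d j'] at h2
        intro hcon
        linarith
    · intro h; exact absurd (mem_range.2 hj') h
  have hlt1 : i + j * d < n := by
    have h5 : (j+1) * d ≤ p * d := Nat.mul_le_mul_right d hj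
    have h6 : i + j * d < (j+1) * d := by rw [Nat.succ_mul]; linarith
    rw [hdp, mul_comm d p]; linarith
  have hlt2 : i < n := lt_of_lt_of_le hi hdn
  have : (a (i + j * d) : ℚ) = (a i : ℚ) := by
    rw [← hFcoeff _ hlt1, ← hFcoeff _ hlt2, key j hj]
    have := key 0 hp.pos
    simpa using this.symm
  exact_mod_cast this



open scoped Classical in
/-- Lam–Leung for prime-power order (`s = 1`): if `G = ⟨z⟩` is cyclic of order
`n = p^r` and `φ : ℤG → ℂ` is the ring homomorphism sending `z` to a primitive
`n`-th root of unity `ω`, then `ℕG ∩ ker φ = ℕG·σ(P_p)`: an element of `ℤG` with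
nonnegative coefficients is mapped to `0` by `φ` iff it equals `β·σ(P_p)` for some
`β ∈ ℕG`, where `P_p` is the unique subgroup of `G` of order `p`. -/
theorem nonneg_ker_eq_of_prime_pow_order (p r : ℕ) (hp : p.Prime) (hr : 1 ≤ r)
    (G : Type*) [CommGroup G] [Fintype G]
    (z : G) (hz : ∀ g : G, g ∈ Subgroup.zpowers z) (hcard : Fintype.card G = p ^ r)
    (ω : ℂ) (hω : IsPrimitiveRoot ω (p ^ r))
    (φ : MonoidAlgebra ℤ G →+* ℂ) (hφ : φ (MonoidAlgebra.single z 1) = ω)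
    (P : Subgroup G) (hP : Nat.card P = p)
    (α : MonoidAlgebra ℤ G) (hα : ∀ g : G, 0 ≤ α.coeff g) :
    φ α = 0 ↔ ∃ β : MonoidAlgebra ℤ G, (∀ g : G, 0 ≤ β.coeff g) ∧
      α = β * ∑ h : P, MonoidAlgebra.single (h : G) (1 : ℤ) := by
  classical
  set d := p ^ (r - 1) with hd
  set n := p ^ r with hn
  have hdp : n = d * p := by rw [hn, hd, ← pow_succ]; congr 1; omega
  have hd0 : 0 < d := pow_pos hp.pos _
  have hn0 : 0 < n := pow_pos hp.pos _
  have horder : orderOf z = n := by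
    rw [orderOf_eq_card_of_forall_mem_zpowers hz, Nat.card_eq_fintype_card, hcard]
  clear_value d n
  -- the equivalence Fin n ≃ G
  have hinj : Function.Injective (fun k : Fin n => z ^ (k : ℕ)) := by
    intro k l hkl
    exact Fin.ext (pow_injOn_Iio_orderOf (Set.mem_Iio.2 (by rw [horder]; exact k.isLt))
      (Set.mem_Iio.2 (by rw [horder]; exact l.isLt)) hkl)
  have hbij : Function.Bijective (fun k : Fin n => z ^ (k : ℕ)) :=
    (Fintype.bijective_iff_injective_and_card _).2 ⟨hinj, by simp [hcard, hn]⟩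
  set e : Fin n ≃ G := Equiv.ofBijective _ hbij with he
  -- the generator of the subgroup of order p
  set w : G := z ^ d with hw
  have hword : orderOf w = p := by
    rw [hw, orderOf_pow, horder, Nat.gcd_eq_right ⟨p, hdp⟩, hdp,
      Nat.mul_div_cancel_left p hd0]
  have hPw : P = Subgroup.zpowers w := by
    have hle : P ≤ Subgroup.zpowers w := by
      intro x hx
      obtain ⟨m, hk'⟩ : ∃ m : ℕ, z ^ m = x := ⟨(e.symm x : ℕ), e.apply_symm_apply x⟩
      have hxp : x ^ p = 1 := by
        have h1 : (⟨x, hx⟩ : P) ^ p = 1 := by rw [← hP]; exact pow_card_eq_one'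
        simpa using congrArg Subtype.val h1
      have hdvd : orderOf z ∣ m * p :=
        orderOf_dvd_iff_pow_eq_one.2 (by rw [pow_mul, hk', hxp])
      rw [horder, hdp] at hdvd
      have hdk : d ∣ m := (Nat.mul_dvd_mul_iff_right hp.pos).1 hdvd
      obtain ⟨t, ht⟩ := hdk
      refine ⟨(t : ℤ), ?_⟩
      show w ^ (t : ℤ) = x
      rw [zpow_natCast, hw, ← pow_mul, ← ht]
      exact hk'
    have hcards : Nat.card (Subgroup.zpowers w) ≤ Nat.card P := by
      rw [Nat.card_zpowers, hword, hP]
    exact SetLike.ext' (Set.eq_of_subset_of_ncard_le hle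
      (by rw [← Nat.card_coe_set_eq, ← Nat.card_coe_set_eq]; exact hcards)
      (Set.toFinite _))
  subst hPw
  -- rewrite the subgroup sum
  have hwinj : Function.Injective (fun j : Fin p => (⟨w ^ (j : ℕ), pow_mem (Subgroup.mem_zpowers w) (j : ℕ)⟩ : Subgroup.zpowers w)) := by
    intro k l hkl
    have : w ^ (k : ℕ) = w ^ (l : ℕ) := congrArg Subtype.val hkl
    exact Fin.ext (pow_injOn_Iio_orderOf (Set.mem_Iio.2 (by rw [hword]; exact k.isLt))
      (Set.mem_Iio.2 (by rw [hword]; exact l.isLt)) this)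
  have hwbij : Function.Bijective (fun j : Fin p => (⟨w ^ (j : ℕ), pow_mem (Subgroup.mem_zpowers w) (j : ℕ)⟩ : Subgroup.zpowers w)) := by
    refine (Fintype.bijective_iff_injective_and_card _).2 ⟨hwinj, ?_⟩
    rw [Fintype.card_fin, ← Nat.card_eq_fintype_card, hP]
  have hσ : (∑ h : Subgroup.zpowers w, MonoidAlgebra.single (h : G) (1 : ℤ)) =
      ∑ j ∈ Finset.range p, MonoidAlgebra.single (w ^ j) (1 : ℤ) := by
    rw [← Equiv.sum_comp (Equiv.ofBijective _ hwbij)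
      (fun h : Subgroup.zpowers w => MonoidAlgebra.single (h : G) (1 : ℤ)),
      ← Fin.sum_univ_eq_sum_range]
    rfl
  -- φ on powers of z
  have hφk : ∀ k : ℕ, φ (MonoidAlgebra.single (z ^ k) (1 : ℤ)) = ω ^ k := by
    intro k
    rw [show (1 : ℤ) = 1 ^ k by simp, ← MonoidAlgebra.single_pow, map_pow, hφ]
  have hφσ : φ (∑ h : Subgroup.zpowers w, MonoidAlgebra.single (h : G) (1 : ℤ)) = 0 := by
    rw [hσ, map_sum]
    have : ∀ j ∈ Finset.range p, φ (MonoidAlgebra.single (w ^ j) (1 : ℤ)) = (ω ^ d) ^ j := by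
      intro j _
      rw [hw, ← pow_mul, hφk, pow_mul]
    rw [Finset.sum_congr rfl this]
    exact (hω.pow hn0 hdp).geom_sum_eq_zero hp.one_lt
  constructor
  · -- forward direction
    intro hker
    have hsum : α = ∑ g : G, MonoidAlgebra.single g (α.coeff g) := by
      refine MonoidAlgebra.ext (Finsupp.ext fun g' => ?_)
      rw [MonoidAlgebra.coeff_sum, Finsupp.finset_sum_apply, Finset.sum_eq_single g']
      · simp [Finsupp.single_apply]
      · intro b _ hbg; simp [Finsupp.single_apply, hbg]
      · simp
    have hdecomp : α = ∑ k ∈ Finset.range n, MonoidAlgebra.single (z ^ k) (α.coeff (z ^ k)) := by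
      conv_lhs => rw [hsum]
      rw [← Equiv.sum_comp e (fun g => MonoidAlgebra.single g (α.coeff g)),
        ← Fin.sum_univ_eq_sum_range]
      rfl
    have hφα : ∑ k ∈ Finset.range n, ((α.coeff (z ^ k) : ℤ) : ℂ) * ω ^ k = 0 := by
      rw [← hker]
      conv_rhs => rw [hdecomp]
      rw [map_sum]
      refine (Finset.sum_congr rfl fun k _ => ?_).symm
      have h1 : MonoidAlgebra.single (z ^ k) (α.coeff (z ^ k))
          = (α.coeff (z ^ k)) • MonoidAlgebra.single (z ^ k) (1 : ℤ) := by
        rw [MonoidAlgebra.smul_single', mul_one]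
      rw [h1, map_zsmul, hφk k, zsmul_eq_mul]
    have hper := key_periodic p r hp hr ω (by rw [← hn]; exact hω)
      (fun k => α.coeff (z ^ k)) (by rw [← hn]; exact hφα)
    beta_reduce at hper
    rw [← hd] at hper
    refine ⟨∑ i ∈ Finset.range d, MonoidAlgebra.single (z ^ i) (α.coeff (z ^ i)), ?_, ?_⟩
    · intro g
      rw [MonoidAlgebra.coeff_sum, Finsupp.finset_sum_apply]
      refine Finset.sum_nonneg fun i _ => ?_
      rw [MonoidAlgebra.coeff_single, Finsupp.single_apply]
      split
      · exact hα _
      · exact le_refl 0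
    · rw [hσ, Finset.sum_mul_sum]
      have hprod : ∀ i ∈ Finset.range d, ∀ j ∈ Finset.range p,
          MonoidAlgebra.single (z ^ i) (α.coeff (z ^ i)) * MonoidAlgebra.single (w ^ j) (1 : ℤ)
          = MonoidAlgebra.single (z ^ (i + j * d)) (α.coeff (z ^ (i + j * d))) := by
        intro i hi j hj
        rw [MonoidAlgebra.single_mul_single, mul_one, hw, ← pow_mul, ← pow_add,
          hper i (Finset.mem_range.1 hi) j (Finset.mem_range.1 hj)]
        congr 2
        ring
      rw [Finset.sum_congr rfl fun i hi => Finset.sum_congr rfl fun j hj => hprod i hi j hj]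
      rw [← Finset.sum_product']
      conv_lhs => rw [hdecomp]
      refine Finset.sum_nbij' (fun k => (k % d, k / d)) (fun x => x.1 + x.2 * d)
        ?_ ?_ ?_ ?_ ?_
      · intro k hk
        have hk' := Finset.mem_range.1 hk
        refine Finset.mem_product.2 ⟨Finset.mem_range.2 (Nat.mod_lt _ hd0),
          Finset.mem_range.2 ((Nat.div_lt_iff_lt_mul hd0).2 ?_)⟩
        rw [mul_comm p d, ← hdp]
        exact hk'
      · intro x hx
        rw [Finset.mem_product] at hx
        obtain ⟨h1, h2⟩ := hx
        have hi := Finset.mem_range.1 h1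
        have hj := Finset.mem_range.1 h2
        refine Finset.mem_range.2 ?_
        have h5 : (x.2 + 1) * d ≤ p * d := Nat.mul_le_mul_right d hj
        have h6 : x.1 + x.2 * d < (x.2 + 1) * d := by rw [Nat.succ_mul]; linarith
        rw [hdp, mul_comm d p]; linarith
      · intro k _
        exact Nat.mod_add_div' k d
      · intro x hx
        rw [Finset.mem_product] at hx
        obtain ⟨h1, h2⟩ := hx
        have hi := Finset.mem_range.1 h1
        ext
        · simp only
          rw [Nat.add_mul_mod_self_right, Nat.mod_eq_of_lt hi]
        · simp only
          rw [Nat.add_mul_div_right _ _ hd0, Nat.div_eq_of_lt hi, zero_add]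
      · intro k _
        rw [Nat.mod_add_div' k d]
  · rintro ⟨β, hβ, rfl⟩
    rw [map_mul, hφσ, mul_zero]
end

section
/- Let G = ⟨z⟩ be a multiplicative cyclic group of order n = p₁^{r₁} p₂^{r₂} where p₁ < p₂ are primes and r₁, r₂ ≥ 1, let ω ∈ ℂ be a primitive n-th root of unity, and let φ : ℤG → ℂ be the ring homomorphism with φ(z) = ω. Then ℕG ∩ ker(φ) = ℕG·σ(P_{p₁}) + ℕG·σ(P_{p₂}); that is, an element of ℤG with all coefficients nonnegative is mapped to 0 by φ if and only if it equals α·σ(P_{p₁}) + β·σ(P_{p₂}) for some α, β ∈ ℕG. -/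
open Finset

namespace LLaux

/-! ### translation invariance helpers -/

lemma inv_add_nsmul {M α : Type*} [AddCommGroup M] (A : M → α) (v : M)
    (h : ∀ k, A (k + v) = A k) : ∀ (t : ℕ) (k : M), A (k + t • v) = A k := by
  intro t
  induction t with
  | zero => intro k; simp
  | succ t ih =>
      intro k
      rw [succ_nsmul, ← add_assoc, h, ih]

lemma inv_sub_nsmul {M α : Type*} [AddCommGroup M] (A : M → α) (v : M)
    (h : ∀ k, A (k + v) = A k) : ∀ (t : ℕ) (k : M), A (k - t • v) = A k := by
  intro t k
  have h2 := inv_add_nsmul A v h t (k - t • v)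
  rw [sub_add_cancel] at h2
  exact h2.symm

/-! ### ZMod cast helpers -/

variable {n : ℕ}

lemma nsmul_natCast (t u : ℕ) : t • ((u : ZMod n)) = ((t * u : ℕ) : ZMod n) := by
  rw [nsmul_eq_mul]; push_cast; ring

lemma natCast_mul_mod (u p t : ℕ) (hn : n = u * p) :
    (((t % p) * u : ℕ) : ZMod n) = ((t * u : ℕ) : ZMod n) := by
  have h : t * u = t % p * u + t / p * n := by
    conv_lhs => rw [← Nat.div_add_mod t p]
    rw [hn]; ring
  rw [h]
  push_cast [ZMod.natCast_self]
  ring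

lemma nsmul_mod (u p t : ℕ) (hn : n = u * p) :
    (t % p) • ((u : ZMod n)) = t • ((u : ZMod n)) := by
  rw [nsmul_natCast, nsmul_natCast, natCast_mul_mod u p t hn]

lemma nat_mod_block' (r M u p : ℕ) (hr : r < u) (hp : 0 < p) :
    (r + M * u) % (u * p) = r + (M % p) * u := by
  have h1 : r + M * u = (r + (M % p) * u) + (M / p) * (u * p) := by
    conv_lhs => rw [← Nat.div_add_mod M p]
    ring
  rw [h1, Nat.add_mul_mod_self_right]
  apply Nat.mod_eq_of_lt
  have h2 : M % p ≤ p - 1 := by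
    have := Nat.mod_lt M hp
    omega
  have h3 : (M % p) * u ≤ (p - 1) * u := Nat.mul_le_mul_right u h2
  have h4 : u * p = u + (p - 1) * u := by
    have h5 : p = (p - 1) + 1 := by omega
    conv_lhs => rw [h5]
    ring
  omega

lemma nat_mod_block (u p a m : ℕ) (hu : 0 < u) (hp : 0 < p) :
    (a + m * u) % (u * p) = a % u + ((a / u + m) % p) * u := by
  have h1 : a + m * u = a % u + (a / u + m) * u := by
    conv_lhs => rw [← Nat.mod_add_div a u]
    ring
  rw [h1, nat_mod_block' _ _ _ _ (Nat.mod_lt a hu) hp]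

lemma sub_nsmul_eq [NeZero n] (u p t : ℕ) (hn : n = u * p) (ht : t ≤ p) (k : ZMod n) :
    k - ((t * u : ℕ) : ZMod n) = ((k.val + (p - t) * u : ℕ) : ZMod n) := by
  have hk : ((k.val : ℕ) : ZMod n) = k := ZMod.natCast_rightInverse k
  have h2 : ((k.val + (p - t) * u + t * u : ℕ) : ZMod n) = k := by
    have hn' : p * u = n := by rw [hn]; ring
    rw [add_assoc, ← add_mul, Nat.sub_add_cancel ht, hn']
    push_cast [ZMod.natCast_self]
    simpa using hk
  rw [sub_eq_iff_eq_add, ← Nat.cast_add, h2]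

lemma val_sub_nsmul [NeZero n] (u p t : ℕ) (hn : n = u * p) (hu : 0 < u) (hp : 0 < p)
    (ht : t < p) (k : ZMod n) :
    (k - ((t * u : ℕ) : ZMod n)).val = k.val % u + ((k.val / u + (p - t)) % p) * u := by
  rw [sub_nsmul_eq u p t hn ht.le, ZMod.val_natCast]
  have h := nat_mod_block u p k.val (p - t) hu hp
  rwa [← hn] at h

/-! ### transversal sum -/

lemma sum_transversal [NeZero n] (u p : ℕ) (hn : n = u * p) (hu : 0 < u) (hp : 0 < p)
    (B : ZMod n → ℤ) (hB : ∀ k, B (k + ((u : ℕ) : ZMod n)) = B k) (k : ZMod n) :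
    (∑ t ∈ range p, if (k - ((t * u : ℕ) : ZMod n)).val < u
        then B (k - ((t * u : ℕ) : ZMod n)) else 0) = B k := by
  have hinv : ∀ t : ℕ, B (k - ((t * u : ℕ) : ZMod n)) = B k := by
    intro t
    rw [← nsmul_natCast]
    exact inv_sub_nsmul B _ hB t k
  have hkv : k.val < u * p := by rw [← hn]; exact k.val_lt
  have hq : k.val / u < p := (Nat.div_lt_iff_lt_mul hu).mpr (by rw [mul_comm]; exact hkv)
  have key : ∀ t < p, ((k - ((t * u : ℕ) : ZMod n)).val < u ↔ t = k.val / u) := by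
    intro t ht
    rw [val_sub_nsmul u p t hn hu hp ht k]
    have hru : k.val % u < u := Nat.mod_lt _ hu
    obtain ⟨q, hqdef⟩ : ∃ q, k.val / u = q := ⟨_, rfl⟩
    have hq' : q < p := hqdef ▸ hq
    rw [hqdef]
    constructor
    · intro h
      have h1 : (q + (p - t)) % p = 0 := by
        by_contra hne
        have hpos : 0 < (q + (p - t)) % p := Nat.pos_of_ne_zero hne
        have h2 : 1 * u ≤ ((q + (p - t)) % p) * u := Nat.mul_le_mul_right u hpos
        rw [one_mul] at h2
        omega
      obtain ⟨c, hc⟩ := Nat.dvd_of_mod_eq_zero h1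
      have hc1 : c = 1 := by
        by_contra hcne
        rcases Nat.lt_or_ge c 1 with hlt | hge
        · have hc0 : c = 0 := by omega
          rw [hc0, mul_zero] at hc
          omega
        · have h2c : 2 ≤ c := by omega
          have h5 : p * 2 ≤ p * c := Nat.mul_le_mul_left p h2c
          rw [← hc] at h5
          omega
      rw [hc1, mul_one] at hc
      omega
    · rintro rfl
      have h6 : t + (p - t) = p := by omega
      rw [h6, Nat.mod_self, zero_mul, add_zero]
      exact hru
  rw [Finset.sum_congr rfl (fun t _ => by rw [hinv t])]
  rw [Finset.sum_eq_single_of_mem (k.val / u) (Finset.mem_range.mpr hq)]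
  · rw [if_pos ((key _ hq).mpr rfl)]
  · intro t ht hne
    rw [if_neg]
    intro hcond
    exact hne ((key t (Finset.mem_range.mp ht)).mp hcond)

/-! ### min' machinery -/

lemma min'_eq_shift {S T : Finset ℤ} (hS : S.Nonempty) (hT : T.Nonempty) (d : ℤ)
    (h1 : ∀ x ∈ S, ∃ y ∈ T, y ≤ x + d) (h2 : ∀ y ∈ T, ∃ x ∈ S, x + d ≤ y) :
    T.min' hT = S.min' hS + d := by
  apply le_antisymm
  · obtain ⟨y, hy, hle⟩ := h1 _ (S.min'_mem hS)
    exact (T.min'_le y hy).trans hle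
  · obtain ⟨x, hx, hle⟩ := h2 _ (T.min'_mem hT)
    exact le_trans (add_le_add (S.min'_le x hx) le_rfl) hle

/-! ### combinatorial decomposition -/

lemma exists_decomp [NeZero n] (p₁ u₁ u₂ : ℕ) (hn₁ : n = u₁ * p₁) (hp₁ : 0 < p₁)
    (A : ZMod n → ℤ) (hA : ∀ k, 0 ≤ A k)
    (hstar : ∀ (k : ZMod n) (t : ℕ),
      A (k + t • ((u₁ : ℕ) : ZMod n) + ((u₂ : ℕ) : ZMod n)) + A k
        = A (k + t • ((u₁ : ℕ) : ZMod n)) + A (k + ((u₂ : ℕ) : ZMod n))) :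
    ∃ B C : ZMod n → ℤ, (∀ k, 0 ≤ B k) ∧ (∀ k, 0 ≤ C k) ∧
      (∀ k, B (k + ((u₁ : ℕ) : ZMod n)) = B k) ∧ (∀ k, C (k + ((u₂ : ℕ) : ZMod n)) = C k) ∧
      (∀ k, A k = B k + C k) := by
  set v₁ : ZMod n := ((u₁ : ℕ) : ZMod n) with hv₁
  set v₂ : ZMod n := ((u₂ : ℕ) : ZMod n) with hv₂
  have hne : ∀ k : ZMod n, ((range p₁).image (fun t => A (k + t • v₁))).Nonempty :=
    fun k => (Finset.nonempty_range_iff.mpr hp₁.ne').image _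
  set B : ZMod n → ℤ := fun k => ((range p₁).image (fun t => A (k + t • v₁))).min' (hne k)
    with hBdef
  have hBmem : ∀ k, ∃ t < p₁, B k = A (k + t • v₁) := by
    intro k
    obtain ⟨t, ht, hte⟩ := Finset.mem_image.mp (Finset.min'_mem _ (hne k))
    exact ⟨t, Finset.mem_range.mp ht, hte.symm⟩
  have hBle : ∀ (k : ZMod n) (t : ℕ), t < p₁ → B k ≤ A (k + t • v₁) :=
    fun k t ht => Finset.min'_le _ _ (Finset.mem_image_of_mem _ (Finset.mem_range.mpr ht))
  have hB0 : ∀ k, 0 ≤ B k := by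
    intro k
    obtain ⟨t, _, h⟩ := hBmem k
    rw [h]; exact hA _
  have hBA : ∀ k, B k ≤ A k := by
    intro k
    have := hBle k 0 hp₁
    simpa using this
  have hshift : ∀ (k : ZMod n) (t : ℕ), A (k + v₁ + t • v₁) = A (k + ((t + 1) % p₁) • v₁) := by
    intro k t
    rw [add_assoc, ← succ_nsmul' v₁ t, nsmul_mod u₁ p₁ (t + 1) hn₁]
  have hBinv : ∀ k, B (k + v₁) = B k := by
    intro k
    have h := min'_eq_shift (hne k) (hne (k + v₁)) 0 ?_ ?_
    · rw [add_zero] at h; exact h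
    · rintro x hx
      obtain ⟨t, ht, rfl⟩ := Finset.mem_image.mp hx
      refine ⟨A (k + v₁ + ((t + (p₁ - 1)) % p₁) • v₁),
        Finset.mem_image_of_mem _ (Finset.mem_range.mpr (Nat.mod_lt _ hp₁)), ?_⟩
      rw [hshift, add_zero]
      apply le_of_eq
      have hmod : ((t + (p₁ - 1)) % p₁ + 1) % p₁ = t % p₁ := by
        have h2 : ((t + (p₁ - 1)) % p₁ + 1) % p₁ = (t + (p₁ - 1) + 1) % p₁ :=
          (Nat.ModEq.add_right 1 (Nat.mod_modEq (t + (p₁ - 1)) p₁))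
        rw [h2, show t + (p₁ - 1) + 1 = t + p₁ by omega, Nat.add_mod_right]
      rw [hmod, nsmul_mod u₁ p₁ t hn₁]
    · rintro y hy
      obtain ⟨t, ht, rfl⟩ := Finset.mem_image.mp hy
      refine ⟨A (k + ((t + 1) % p₁) • v₁),
        Finset.mem_image_of_mem _ (Finset.mem_range.mpr (Nat.mod_lt _ hp₁)), ?_⟩
      rw [add_zero]
      exact le_of_eq (hshift k t).symm
  have hBshift : ∀ k, B (k + v₂) = B k + (A (k + v₂) - A k) := by
    intro k
    apply min'_eq_shift (hne k) (hne (k + v₂)) (A (k + v₂) - A k)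
    · rintro x hx
      obtain ⟨t, ht, rfl⟩ := Finset.mem_image.mp hx
      refine ⟨A (k + v₂ + t • v₁), Finset.mem_image_of_mem _ ht, ?_⟩
      have hs := hstar k t
      have hcomm : k + v₂ + t • v₁ = k + t • v₁ + v₂ := by abel
      rw [hcomm]
      omega
    · rintro y hy
      obtain ⟨t, ht, rfl⟩ := Finset.mem_image.mp hy
      refine ⟨A (k + t • v₁), Finset.mem_image_of_mem _ ht, ?_⟩
      have hs := hstar k t
      have hcomm : k + v₂ + t • v₁ = k + t • v₁ + v₂ := by abel
      rw [hcomm]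
      omega
  refine ⟨B, fun k => A k - B k, hB0,
    fun k => by show 0 ≤ A k - B k; have := hBA k; omega, hBinv, ?_,
    fun k => by show A k = B k + (A k - B k); ring⟩
  intro k
  show A (k + v₂) - B (k + v₂) = A k - B k
  have := hBshift k
  omega

/-! ### the evaluation linear map and invariant subspaces -/

noncomputable def Lmap (n : ℕ) [NeZero n] (ω : ℂ) : (ZMod n → ℚ) →ₗ[ℚ] ℂ where
  toFun A := ∑ k : ZMod n, A k • (ω ^ k.val)
  map_add' A B := by
    simp [add_smul, Finset.sum_add_distrib]
  map_smul' c A := by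
    simp [Finset.smul_sum, mul_smul]

lemma Lmap_apply (n : ℕ) [NeZero n] (ω : ℂ) (A : ZMod n → ℚ) :
    Lmap n ω A = ∑ k : ZMod n, A k • ω ^ k.val := rfl

def Einv (n : ℕ) (v : ZMod n) : Submodule ℚ (ZMod n → ℚ) where
  carrier := {A | ∀ k, A (k + v) = A k}
  add_mem' := by
    intro a b ha hb k
    simp only [Pi.add_apply, ha k, hb k]
  zero_mem' := by intro k; rfl
  smul_mem' := by
    intro c A hA k
    simp only [Pi.smul_apply, hA k]

lemma mem_Einv {n : ℕ} {v : ZMod n} {A : ZMod n → ℚ} :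
    A ∈ Einv n v ↔ ∀ k, A (k + v) = A k := Iff.rfl

lemma pow_val_add {n : ℕ} [NeZero n] {ω : ℂ} (hω : ω ^ n = 1) (a b : ZMod n) :
    ω ^ (a + b).val = ω ^ a.val * ω ^ b.val := by
  rw [ZMod.val_add, ← pow_add]
  conv_rhs => rw [← Nat.div_add_mod (a.val + b.val) n]
  rw [pow_add, pow_mul, hω, one_pow, one_mul]

lemma Einv_le_ker {n : ℕ} [NeZero n] {ω : ℂ} (hω : IsPrimitiveRoot ω n)
    (u : ℕ) (hu : 0 < u) (hun : u < n) :
    Einv n ((u : ℕ) : ZMod n) ≤ LinearMap.ker (Lmap n ω) := by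
  intro A hA
  rw [LinearMap.mem_ker]
  set v : ZMod n := ((u : ℕ) : ZMod n) with hv
  have hωn : ω ^ n = 1 := hω.pow_eq_one
  have hval : v.val = u := ZMod.val_natCast_of_lt hun
  have h1 : Lmap n ω A = Lmap n ω A * ω ^ u := by
    have hre : ∑ k : ZMod n, A (k + v) • ω ^ (k + v).val = ∑ k : ZMod n, A k • ω ^ k.val :=
      Fintype.sum_equiv (Equiv.addRight v) _ _ (fun k => rfl)
    calc Lmap n ω A = ∑ k : ZMod n, A k • ω ^ k.val := Lmap_apply n ω A
      _ = ∑ k : ZMod n, A (k + v) • ω ^ (k + v).val := hre.symm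
      _ = ∑ k : ZMod n, A k • (ω ^ k.val * ω ^ u) := by
          refine Finset.sum_congr rfl (fun k _ => ?_)
          rw [hA k, pow_val_add hωn, hval]
      _ = (∑ k : ZMod n, A k • ω ^ k.val) * ω ^ u := by
          rw [Finset.sum_mul]
          exact Finset.sum_congr rfl (fun k _ => (smul_mul_assoc _ _ _).symm)
      _ = Lmap n ω A * ω ^ u := by rw [Lmap_apply]
  have h2 : Lmap n ω A * (1 - ω ^ u) = 0 := by
    rw [mul_sub, mul_one, sub_eq_zero]
    exact h1
  rcases mul_eq_zero.mp h2 with h | h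
  · exact h
  · exfalso
    exact hω.pow_ne_one_of_pos_of_lt hu.ne' hun (by linear_combination -h)

lemma finrank_Einv_ge (n : ℕ) [NeZero n] (u : ℕ) [NeZero u] (hdvd : u ∣ n) :
    u ≤ Module.finrank ℚ (Einv n ((u : ℕ) : ZMod n)) := by
  classical
  set π : ZMod n →+* ZMod u := ZMod.castHom hdvd (ZMod u) with hπ
  have hmem : ∀ F : ZMod u → ℚ, (fun k => F (π k)) ∈ Einv n ((u : ℕ) : ZMod n) := by
    intro F k
    have : π (k + ((u : ℕ) : ZMod n)) = π k := by
      rw [map_add, map_natCast, ZMod.natCast_self, add_zero]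
    simp only [this]
  set f : (ZMod u → ℚ) →ₗ[ℚ] (Einv n ((u : ℕ) : ZMod n)) :=
    { toFun := fun F => ⟨fun k => F (π k), hmem F⟩
      map_add' := fun a b => rfl
      map_smul' := fun c a => rfl } with hf
  have hinj : Function.Injective f := by
    intro F₁ F₂ hF
    funext j
    have h1 : ((f F₁ : Einv n ((u : ℕ) : ZMod n)) : ZMod n → ℚ) ((j.val : ℕ) : ZMod n)
        = ((f F₂ : Einv n ((u : ℕ) : ZMod n)) : ZMod n → ℚ) ((j.val : ℕ) : ZMod n) := by
      rw [hF]
    have h2 : π ((j.val : ℕ) : ZMod n) = j := by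
      rw [map_natCast]
      exact ZMod.natCast_rightInverse j
    simpa [hf, h2] using h1
  have := LinearMap.finrank_le_finrank_of_injective hinj
  rwa [Module.finrank_pi, ZMod.card] at this

lemma finrank_inf_le (n : ℕ) [NeZero n] (u₁ u₂ g : ℕ) (hg : 0 < g)
    (hbez : ∃ x y : ℤ, (g : ℤ) = x * u₁ + y * u₂) :
    Module.finrank ℚ
      ↥(Einv n ((u₁ : ℕ) : ZMod n) ⊓ Einv n ((u₂ : ℕ) : ZMod n)) ≤ g := by
  classical
  haveI : NeZero g := ⟨hg.ne'⟩
  set E := Einv n ((u₁ : ℕ) : ZMod n) ⊓ Einv n ((u₂ : ℕ) : ZMod n) with hE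
  set Ψ : E →ₗ[ℚ] (ZMod g → ℚ) :=
    { toFun := fun A => fun j => (A : ZMod n → ℚ) ((j.val : ℕ) : ZMod n)
      map_add' := fun a b => rfl
      map_smul' := fun c a => rfl } with hΨ
  have hinj : Function.Injective Ψ := by
    rw [injective_iff_map_eq_zero]
    intro A hA0
    have hA₁ : ∀ k, (A : ZMod n → ℚ) (k + ((u₁ : ℕ) : ZMod n)) = (A : ZMod n → ℚ) k :=
      (Submodule.mem_inf.mp A.2).1
    have hA₂ : ∀ k, (A : ZMod n → ℚ) (k + ((u₂ : ℕ) : ZMod n)) = (A : ZMod n → ℚ) k :=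
      (Submodule.mem_inf.mp A.2).2
    have key : ∀ c ∈ AddSubgroup.closure
        ({((u₁ : ℕ) : ZMod n), ((u₂ : ℕ) : ZMod n)} : Set (ZMod n)),
        ∀ k, (A : ZMod n → ℚ) (k + c) = (A : ZMod n → ℚ) k := by
      intro c hc
      induction hc using AddSubgroup.closure_induction with
      | mem x hx =>
          rcases hx with rfl | hx
          · exact hA₁
          · rw [Set.mem_singleton_iff] at hx
            subst hx
            exact hA₂
      | zero => intro k; rw [add_zero]
      | add x y hx hy ihx ihy =>
          intro k
          rw [← add_assoc, ihy, ihx]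
      | neg x hx ihx =>
          intro k
          have := ihx (k + -x)
          rw [add_assoc, neg_add_cancel, add_zero] at this
          exact this.symm
    have hgc : ((g : ℕ) : ZMod n) ∈ AddSubgroup.closure
        ({((u₁ : ℕ) : ZMod n), ((u₂ : ℕ) : ZMod n)} : Set (ZMod n)) := by
      obtain ⟨x, y, hxy⟩ := hbez
      have hcast : ((g : ℕ) : ZMod n)
          = x • ((u₁ : ℕ) : ZMod n) + y • ((u₂ : ℕ) : ZMod n) := by
        have := congrArg (fun m : ℤ => (m : ZMod n)) hxy
        push_cast at this
        rw [zsmul_eq_mul, zsmul_eq_mul]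
        exact_mod_cast this
      rw [hcast]
      exact add_mem
        (AddSubgroup.zsmul_mem _ (AddSubgroup.subset_closure (Set.mem_insert _ _)) x)
        (AddSubgroup.zsmul_mem _ (AddSubgroup.subset_closure
          (Set.mem_insert_of_mem _ (Set.mem_singleton _))) y)
    have hval : ∀ k : ZMod n, (A : ZMod n → ℚ) k
        = (A : ZMod n → ℚ) (((k.val % g : ℕ)) : ZMod n) := by
      intro k
      have hsplit : k = (((k.val % g : ℕ)) : ZMod n) + (k.val / g) • ((g : ℕ) : ZMod n) := by
        rw [nsmul_natCast, ← Nat.cast_add, Nat.mod_add_div']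
        exact (ZMod.natCast_rightInverse k).symm
      conv_lhs => rw [hsplit]
      exact key _ (AddSubgroup.nsmul_mem _ hgc _) _
    have : (A : ZMod n → ℚ) = 0 := by
      funext k
      rw [hval k]
      have h4 : (((k.val % g : ℕ) : ZMod g)).val = k.val % g :=
        ZMod.val_natCast_of_lt (Nat.mod_lt _ hg)
      have h3 : (A : ZMod n → ℚ) (((((k.val % g : ℕ) : ZMod g)).val : ℕ) : ZMod n) = 0 :=
        congrFun hA0 ((k.val % g : ℕ) : ZMod g)
      rw [h4] at h3
      exact h3
    exact Subtype.ext this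
  have := LinearMap.finrank_le_finrank_of_injective hinj
  rwa [Module.finrank_pi, ZMod.card] at this

open Polynomial in
lemma finrank_ker_le (n : ℕ) [NeZero n] {ω : ℂ} (hω : IsPrimitiveRoot ω n) :
    Module.finrank ℚ ↥(LinearMap.ker (Lmap n ω)) + n.totient ≤ n := by
  classical
  have h0 : 0 < n := Nat.pos_of_ne_zero (NeZero.ne n)
  have hmin : (minpoly ℚ ω).natDegree = n.totient := by
    rw [← Polynomial.cyclotomic_eq_minpoly_rat hω h0, Polynomial.natDegree_cyclotomic]
  have h0t : 0 < n.totient := Nat.totient_pos.mpr h0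
  have hli : LinearIndependent ℚ (fun j : Fin n.totient => ω ^ (j : ℕ)) := by
    rw [Fintype.linearIndependent_iff]
    intro c hc
    by_contra hne
    push_neg at hne
    obtain ⟨j₀, hj₀⟩ := hne
    set P : ℚ[X] := ∑ j : Fin n.totient, Polynomial.C (c j) * Polynomial.X ^ (j : ℕ) with hP
    have hPeval : Polynomial.aeval ω P = 0 := by
      rw [hP, map_sum]
      rw [← hc]
      refine Finset.sum_congr rfl (fun j _ => ?_)
      rw [map_mul, map_pow, Polynomial.aeval_C, Polynomial.aeval_X, Algebra.smul_def]
    have hP0 : P ≠ 0 := by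
      intro h
      apply hj₀
      have hco := congrArg (fun q : ℚ[X] => q.coeff (j₀ : ℕ)) h
      simp only [hP, Polynomial.finset_sum_coeff, Polynomial.coeff_C_mul,
        Polynomial.coeff_X_pow, Polynomial.coeff_zero] at hco
      rw [Finset.sum_eq_single j₀] at hco
      · simpa using hco
      · intro j _ hj
        rw [if_neg]
        · ring
        · intro hjj
          exact hj (Fin.ext hjj.symm)
      · intro hmem
        exact absurd (Finset.mem_univ j₀) hmem
    have hdeg : P.natDegree < n.totient := by
      have h1 : P.natDegree ≤ n.totient - 1 := by
        apply Polynomial.natDegree_sum_le_of_forall_le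
        intro j _
        refine le_trans (Polynomial.natDegree_C_mul_le _ _) ?_
        refine le_trans (Polynomial.natDegree_X_pow_le _) ?_
        omega
      omega
    have hdvd := minpoly.dvd ℚ ω hPeval
    have := Polynomial.natDegree_le_of_dvd hdvd hP0
    omega
  have hsub : Submodule.span ℚ (Set.range (fun j : Fin n.totient => ω ^ (j : ℕ)))
      ≤ LinearMap.range (Lmap n ω) := by
    rw [Submodule.span_le]
    rintro x ⟨j, rfl⟩
    refine ⟨Pi.single (((j : ℕ) : ZMod n)) (1 : ℚ), ?_⟩
    have hjn : (j : ℕ) < n := lt_of_lt_of_le j.2 (Nat.totient_le n)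
    rw [Lmap_apply]
    rw [Finset.sum_eq_single (((j : ℕ) : ZMod n))]
    · rw [Pi.single_eq_same, one_smul, ZMod.val_natCast_of_lt hjn]
    · intro k _ hk
      rw [Pi.single_eq_of_ne hk, zero_smul]
    · intro hmem
      exact absurd (Finset.mem_univ _) hmem
  haveI := (Lmap n ω).finiteDimensional_range
  have h1 : n.totient ≤ Module.finrank ℚ ↥(LinearMap.range (Lmap n ω)) := by
    have hrk := finrank_span_eq_card hli
    rw [Fintype.card_fin] at hrk
    calc n.totient
        = Module.finrank ℚ ↥(Submodule.span ℚ
            (Set.range (fun j : Fin n.totient => ω ^ (j : ℕ)))) := hrk.symm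
      _ ≤ Module.finrank ℚ ↥(LinearMap.range (Lmap n ω)) := Submodule.finrank_mono hsub
  have h2 := LinearMap.finrank_range_add_finrank_ker (Lmap n ω)
  have h3 : Module.finrank ℚ (ZMod n → ℚ) = n := by
    rw [Module.finrank_pi, ZMod.card]
  omega

lemma ker_eq_sup (n : ℕ) [NeZero n] {ω : ℂ} (hω : IsPrimitiveRoot ω n)
    (u₁ u₂ g : ℕ) [NeZero u₁] [NeZero u₂]
    (hu₁ : 0 < u₁) (hu₂ : 0 < u₂) (hun₁ : u₁ < n) (hun₂ : u₂ < n)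
    (hd₁ : u₁ ∣ n) (hd₂ : u₂ ∣ n) (hg : 0 < g)
    (hbez : ∃ x y : ℤ, (g : ℤ) = x * u₁ + y * u₂)
    (harith : n.totient + u₁ + u₂ = n + g) :
    LinearMap.ker (Lmap n ω)
      = Einv n ((u₁ : ℕ) : ZMod n) ⊔ Einv n ((u₂ : ℕ) : ZMod n) := by
  have hle : Einv n ((u₁ : ℕ) : ZMod n) ⊔ Einv n ((u₂ : ℕ) : ZMod n)
      ≤ LinearMap.ker (Lmap n ω) :=
    sup_le (Einv_le_ker hω u₁ hu₁ hun₁) (Einv_le_ker hω u₂ hu₂ hun₂)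
  refine (Submodule.eq_of_le_of_finrank_le hle ?_).symm
  have hsupinf := Submodule.finrank_sup_add_finrank_inf_eq
    (Einv n ((u₁ : ℕ) : ZMod n)) (Einv n ((u₂ : ℕ) : ZMod n))
  have hker := finrank_ker_le n hω
  have hinf := finrank_inf_le n u₁ u₂ g hg hbez
  have hE₁ := finrank_Einv_ge n u₁ hd₁
  have hE₂ := finrank_Einv_ge n u₂ hd₂
  omega

/-! ### group-side helpers -/

lemma arith_helper (p₁ p₂ r₁ r₂ : ℕ) (h₁ : 1 ≤ p₁) (h₂ : 1 ≤ p₂)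
    (hr₁ : 1 ≤ r₁) (hr₂ : 1 ≤ r₂) :
    (p₁ ^ (r₁ - 1) * (p₁ - 1)) * (p₂ ^ (r₂ - 1) * (p₂ - 1))
      + p₁ ^ (r₁ - 1) * p₂ ^ r₂ + p₁ ^ r₁ * p₂ ^ (r₂ - 1)
      = p₁ ^ r₁ * p₂ ^ r₂ + p₁ ^ (r₁ - 1) * p₂ ^ (r₂ - 1) := by
  obtain ⟨c₁, rfl⟩ : ∃ c, p₁ = c + 1 := ⟨p₁ - 1, by omega⟩
  obtain ⟨c₂, rfl⟩ : ∃ c, p₂ = c + 1 := ⟨p₂ - 1, by omega⟩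
  obtain ⟨s₁, rfl⟩ : ∃ s, r₁ = s + 1 := ⟨r₁ - 1, by omega⟩
  obtain ⟨s₂, rfl⟩ : ∃ s, r₂ = s + 1 := ⟨r₂ - 1, by omega⟩
  simp only [Nat.add_sub_cancel, pow_succ]
  ring

lemma sum_subgroup_eq {G : Type*} [Group G] (H : Subgroup G) [Fintype H] (w : G) (p : ℕ)
    (hp : 0 < p) (hH : H = Subgroup.zpowers w) (hord : orderOf w = p)
    {M : Type*} [AddCommMonoid M] (F : G → M) :
    ∑ h : H, F h = ∑ t ∈ Finset.range p, F (w ^ t) := by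
  subst hH
  have hcard : Fintype.card ↥(Subgroup.zpowers w) = p := by
    rw [← Nat.card_eq_fintype_card, Nat.card_zpowers, hord]
  have hinj : Function.Injective (fun t : Fin p =>
      (⟨w ^ (t : ℕ), Subgroup.mem_zpowers_iff.mpr ⟨(t : ℕ), zpow_natCast w (t : ℕ)⟩⟩ :
        ↥(Subgroup.zpowers w))) := by
    intro a b hab
    have h1 : w ^ (a : ℕ) = w ^ (b : ℕ) := congrArg Subtype.val hab
    rw [pow_eq_pow_iff_modEq, hord] at h1
    have h2 : (a : ℕ) % p = (b : ℕ) % p := h1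
    rw [Nat.mod_eq_of_lt a.2, Nat.mod_eq_of_lt b.2] at h2
    exact Fin.ext h2
  have hbij : Function.Bijective (fun t : Fin p =>
      (⟨w ^ (t : ℕ), Subgroup.mem_zpowers_iff.mpr ⟨(t : ℕ), zpow_natCast w (t : ℕ)⟩⟩ :
        ↥(Subgroup.zpowers w))) :=
    (Fintype.bijective_iff_injective_and_card _).mpr ⟨hinj, by rw [Fintype.card_fin, hcard]⟩
  have hsum := Fintype.sum_bijective _ hbij
    (fun t : Fin p => F (w ^ (t : ℕ))) (fun h : ↥(Subgroup.zpowers w) => F h) (fun t => rfl)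
  rw [← hsum, ← Fin.sum_univ_eq_sum_range]

lemma subgroup_eq_zpowers {G : Type*} [CommGroup G] [Finite G] (z : G)
    (hz : ∀ g : G, g ∈ Subgroup.zpowers z) (n : ℕ) (hordz : orderOf z = n)
    (P : Subgroup G) (p u : ℕ)
    (hp : Nat.card P = p) (hnu : n = u * p) (hu : 0 < u) (hp0 : 0 < p) :
    P = Subgroup.zpowers (z ^ u) := by
  have hword : orderOf (z ^ u) = p := by
    rw [orderOf_pow, hordz, Nat.gcd_comm, Nat.gcd_eq_left ⟨p, hnu⟩, hnu,
      Nat.mul_div_cancel_left _ hu]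
  have hle : P ≤ Subgroup.zpowers (z ^ u) := by
    intro g hg
    have hgp : g ^ p = 1 := by
      have h1 : (⟨g, hg⟩ : P) ^ p = 1 := by
        rw [← hp]; exact pow_card_eq_one'
      have h2 := congrArg (Subtype.val) h1
      simpa using h2
    obtain ⟨m, hm⟩ := Subgroup.mem_zpowers_iff.mp (hz g)
    have h3 : z ^ (m * (p : ℤ)) = 1 := by
      rw [zpow_mul, hm, zpow_natCast]
      exact hgp
    have h4 : ((n : ℕ) : ℤ) ∣ m * (p : ℤ) := by
      have := orderOf_dvd_iff_zpow_eq_one.mpr h3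
      rwa [hordz] at this
    have h5 : ((u : ℕ) : ℤ) ∣ m := by
      rw [hnu] at h4
      push_cast at h4
      exact (mul_dvd_mul_iff_right
        (by exact_mod_cast hp0.ne' : ((p : ℕ) : ℤ) ≠ 0)).mp h4
    obtain ⟨m', hm'⟩ := h5
    refine Subgroup.mem_zpowers_iff.mpr ⟨m', ?_⟩
    calc (z ^ u) ^ m' = z ^ ((u : ℤ) * m') := by rw [← zpow_natCast z u, ← zpow_mul]
      _ = z ^ m := by rw [← hm']
      _ = g := hm
  exact Subgroup.eq_of_le_of_card_ge hle
    (le_of_eq (by rw [Nat.card_zpowers, hword, hp]))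

end LLaux

open LLaux Finset in
open scoped Classical in
/-- Lam–Leung for two prime divisors (`s = 2`): if `G = ⟨z⟩` is cyclic of order
`n = p₁^{r₁} p₂^{r₂}` with `p₁ < p₂` primes and `φ : ℤG → ℂ` is the ring
homomorphism sending `z` to a primitive `n`-th root of unity `ω`, then
`ℕG ∩ ker φ = ℕG·σ(P_{p₁}) + ℕG·σ(P_{p₂})`: an element of `ℤG` with nonnegative
coefficients is mapped to `0` by `φ` iff it equals `β·σ(P_{p₁}) + γ·σ(P_{p₂})`
for some `β, γ ∈ ℕG`. -/
theorem nonneg_ker_eq_of_two_prime_order (p₁ p₂ r₁ r₂ : ℕ)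
    (hp₁ : p₁.Prime) (hp₂ : p₂.Prime) (hlt : p₁ < p₂) (hr₁ : 1 ≤ r₁) (hr₂ : 1 ≤ r₂)
    (n : ℕ) (hn : n = p₁ ^ r₁ * p₂ ^ r₂)
    (G : Type*) [CommGroup G] [Fintype G]
    (z : G) (hz : ∀ g : G, g ∈ Subgroup.zpowers z) (hcard : Fintype.card G = n)
    (ω : ℂ) (hω : IsPrimitiveRoot ω n)
    (φ : MonoidAlgebra ℤ G →+* ℂ) (hφ : φ (MonoidAlgebra.single z 1) = ω)
    (P₁ : Subgroup G) (hP₁ : Nat.card P₁ = p₁)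
    (P₂ : Subgroup G) (hP₂ : Nat.card P₂ = p₂)
    (α : MonoidAlgebra ℤ G) (hα : ∀ g : G, 0 ≤ α.coeff g) :
    φ α = 0 ↔ ∃ β γ : MonoidAlgebra ℤ G,
      (∀ g : G, 0 ≤ β.coeff g) ∧ (∀ g : G, 0 ≤ γ.coeff g) ∧
      α = β * (∑ h : P₁, MonoidAlgebra.single (h : G) (1 : ℤ)) +
          γ * (∑ h : P₂, MonoidAlgebra.single (h : G) (1 : ℤ)) := by
  have hp₁1 : 1 < p₁ := hp₁.one_lt
  have hp₂1 : 1 < p₂ := hp₂.one_lt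
  have hp₁0 : 0 < p₁ := hp₁.pos
  have hp₂0 : 0 < p₂ := hp₂.pos
  have hn0 : 0 < n := by
    rw [hn]; positivity
  haveI : NeZero n := ⟨hn0.ne'⟩
  set u₁ : ℕ := p₁ ^ (r₁ - 1) * p₂ ^ r₂ with hu₁def
  set u₂ : ℕ := p₁ ^ r₁ * p₂ ^ (r₂ - 1) with hu₂def
  set gg : ℕ := p₁ ^ (r₁ - 1) * p₂ ^ (r₂ - 1) with hggdef
  have hr₁e : r₁ - 1 + 1 = r₁ := by omega
  have hr₂e : r₂ - 1 + 1 = r₂ := by omega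
  have hnu₁ : n = u₁ * p₁ := by
    rw [hn, hu₁def]
    conv_lhs => rw [← hr₁e]
    rw [pow_succ]; ring
  have hnu₂ : n = u₂ * p₂ := by
    rw [hn, hu₂def]
    conv_lhs => rw [← hr₂e]
    rw [pow_succ]; ring
  have hu₁0 : 0 < u₁ := by positivity
  have hu₂0 : 0 < u₂ := by positivity
  have hgg0 : 0 < gg := by positivity
  haveI : NeZero u₁ := ⟨hu₁0.ne'⟩
  haveI : NeZero u₂ := ⟨hu₂0.ne'⟩
  have hun₁ : u₁ < n := by
    rw [hnu₁]
    exact (lt_mul_iff_one_lt_right hu₁0).mpr hp₁1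
  have hun₂ : u₂ < n := by
    rw [hnu₂]
    exact (lt_mul_iff_one_lt_right hu₂0).mpr hp₂1
  have hd₁ : u₁ ∣ n := ⟨p₁, hnu₁⟩
  have hd₂ : u₂ ∣ n := ⟨p₂, hnu₂⟩
  have hgcd : Nat.gcd u₁ u₂ = gg := by
    have h1 : u₁ = gg * p₂ := by
      rw [hu₁def, hggdef]
      conv_lhs => rw [← hr₂e]
      rw [pow_succ]; ring
    have h2 : u₂ = gg * p₁ := by
      rw [hu₂def, hggdef]
      conv_lhs => rw [← hr₁e]
      rw [pow_succ]; ring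
    have hco : Nat.gcd p₂ p₁ = 1 := (Nat.coprime_primes hp₂ hp₁).mpr (ne_of_gt hlt)
    rw [h1, h2, Nat.gcd_mul_left, hco, mul_one]
  have hbez : ∃ x y : ℤ, (gg : ℤ) = x * u₁ + y * u₂ := by
    refine ⟨Nat.gcdA u₁ u₂, Nat.gcdB u₁ u₂, ?_⟩
    have h := Nat.gcd_eq_gcd_ab u₁ u₂
    rw [hgcd] at h
    rw [h]; ring
  have harith : n.totient + u₁ + u₂ = n + gg := by
    have hco : Nat.Coprime (p₁ ^ r₁) (p₂ ^ r₂) :=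
      Nat.Coprime.pow _ _ ((Nat.coprime_primes hp₁ hp₂).mpr (ne_of_lt hlt))
    have ht : n.totient = (p₁ ^ (r₁ - 1) * (p₁ - 1)) * (p₂ ^ (r₂ - 1) * (p₂ - 1)) := by
      rw [hn, Nat.totient_mul hco, Nat.totient_prime_pow hp₁ (by omega),
        Nat.totient_prime_pow hp₂ (by omega)]
    rw [ht, hn, hu₁def, hu₂def, hggdef]
    exact arith_helper p₁ p₂ r₁ r₂ hp₁0 hp₂0 hr₁ hr₂
  -- group-side setup
  have hordz : orderOf z = n := by
    rw [orderOf_eq_card_of_forall_mem_zpowers hz, Nat.card_eq_fintype_card, hcard]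
  have hzn : ∀ m : ℕ, z ^ (m % n) = z ^ m := by
    intro m
    have h := pow_mod_orderOf z m
    rwa [hordz] at h
  have hfinj : Function.Injective (fun k : ZMod n => z ^ k.val) := by
    intro a b hab
    simp only at hab
    rw [pow_eq_pow_iff_modEq, hordz] at hab
    have h1 : a.val % n = b.val % n := hab
    rw [Nat.mod_eq_of_lt a.val_lt, Nat.mod_eq_of_lt b.val_lt] at h1
    exact ZMod.val_injective n h1
  have hfbij : Function.Bijective (fun k : ZMod n => z ^ k.val) :=
    (Fintype.bijective_iff_injective_and_card _).mpr ⟨hfinj, by rw [ZMod.card, hcard]⟩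
  set efn : ZMod n ≃ G := Equiv.ofBijective _ hfbij with hefndef
  have hefn_apply : ∀ k : ZMod n, efn k = z ^ k.val := fun k => rfl
  have hfmul : ∀ a b : ZMod n, efn (a + b) = efn a * efn b := by
    intro a b
    rw [hefn_apply, hefn_apply, hefn_apply, ZMod.val_add, ← pow_add]
    exact hzn _
  -- φ computations
  have hφpow : ∀ m : ℕ, φ (MonoidAlgebra.single (z ^ m) (1 : ℤ)) = ω ^ m := by
    intro m
    have h1 : (MonoidAlgebra.single z (1 : ℤ)) ^ m = MonoidAlgebra.single (z ^ m) (1 : ℤ) := by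
      rw [MonoidAlgebra.single_pow, one_pow]
    rw [← h1, map_pow, hφ]
  have hφsingle : ∀ (g : G) (c : ℤ), φ (MonoidAlgebra.single g c)
      = (c : ℂ) * φ (MonoidAlgebra.single g (1 : ℤ)) := by
    intro g c
    have h1 : MonoidAlgebra.single g c = c • MonoidAlgebra.single g (1 : ℤ) := by
      rw [MonoidAlgebra.smul_single, smul_eq_mul, mul_one]
    rw [h1, map_zsmul, zsmul_eq_mul]
  have hφdecomp : ∀ β : MonoidAlgebra ℤ G,
      φ β = ∑ k : ZMod n, ((β.coeff (efn k) : ℤ) : ℂ) * ω ^ (k : ZMod n).val := by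
    intro β
    have hrepr : (β : MonoidAlgebra ℤ G) = ∑ g : G, MonoidAlgebra.single g (β.coeff g) := by
      conv_lhs => rw [← MonoidAlgebra.sum_coeff_single β]
      rw [Finsupp.sum]
      exact Finset.sum_subset (Finset.subset_univ _)
        (fun g _ hg => by rw [Finsupp.notMem_support_iff.mp hg, MonoidAlgebra.single_zero])
    calc φ β = ∑ g : G, φ (MonoidAlgebra.single g (β.coeff g)) := by
          conv_lhs => rw [hrepr]
          rw [map_sum]
      _ = ∑ k : ZMod n, φ (MonoidAlgebra.single (efn k) (β.coeff (efn k))) :=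
          (Fintype.sum_equiv efn _ _ (fun k => rfl)).symm
      _ = ∑ k : ZMod n, ((β.coeff (efn k) : ℤ) : ℂ) * ω ^ (k : ZMod n).val := by
          refine Finset.sum_congr rfl (fun k _ => ?_)
          rw [hφsingle, hefn_apply, hφpow]
  -- concrete subgroups
  set w₁ : G := z ^ u₁ with hw₁def
  set w₂ : G := z ^ u₂ with hw₂def
  have hP₁w : P₁ = Subgroup.zpowers w₁ :=
    subgroup_eq_zpowers z hz n hordz P₁ p₁ u₁ hP₁ hnu₁ hu₁0 hp₁0
  have hP₂w : P₂ = Subgroup.zpowers w₂ :=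
    subgroup_eq_zpowers z hz n hordz P₂ p₂ u₂ hP₂ hnu₂ hu₂0 hp₂0
  have hw₁ord : orderOf w₁ = p₁ := by
    rw [hw₁def, orderOf_pow, hordz, Nat.gcd_comm, Nat.gcd_eq_left hd₁, hnu₁,
      Nat.mul_div_cancel_left _ hu₁0]
  have hw₂ord : orderOf w₂ = p₂ := by
    rw [hw₂def, orderOf_pow, hordz, Nat.gcd_comm, Nat.gcd_eq_left hd₂, hnu₂,
      Nat.mul_div_cancel_left _ hu₂0]
  have hw₁pow : ∀ t : ℕ, efn ((t * u₁ : ℕ) : ZMod n) = w₁ ^ t := by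
    intro t
    rw [hefn_apply, ZMod.val_natCast, hzn (t * u₁), hw₁def, mul_comm t u₁, pow_mul]
  have hw₂pow : ∀ t : ℕ, efn ((t * u₂ : ℕ) : ZMod n) = w₂ ^ t := by
    intro t
    rw [hefn_apply, ZMod.val_natCast, hzn (t * u₂), hw₂def, mul_comm t u₂, pow_mul]
  have hφσ₁ : φ (∑ h : P₁, MonoidAlgebra.single (h : G) (1 : ℤ)) = 0 := by
    rw [map_sum, sum_subgroup_eq P₁ w₁ p₁ hp₁0 hP₁w hw₁ord
      (fun g => φ (MonoidAlgebra.single g (1 : ℤ)))]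
    have h1 : ∀ t : ℕ, φ (MonoidAlgebra.single (w₁ ^ t) (1 : ℤ)) = (ω ^ u₁) ^ t := by
      intro t
      rw [hw₁def, ← pow_mul, hφpow, pow_mul]
    rw [Finset.sum_congr rfl (fun t _ => h1 t)]
    exact (hω.pow hn0 hnu₁).geom_sum_eq_zero hp₁1
  have hφσ₂ : φ (∑ h : P₂, MonoidAlgebra.single (h : G) (1 : ℤ)) = 0 := by
    rw [map_sum, sum_subgroup_eq P₂ w₂ p₂ hp₂0 hP₂w hw₂ord
      (fun g => φ (MonoidAlgebra.single g (1 : ℤ)))]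
    have h1 : ∀ t : ℕ, φ (MonoidAlgebra.single (w₂ ^ t) (1 : ℤ)) = (ω ^ u₂) ^ t := by
      intro t
      rw [hw₂def, ← pow_mul, hφpow, pow_mul]
    rw [Finset.sum_congr rfl (fun t _ => h1 t)]
    exact (hω.pow hn0 hnu₂).geom_sum_eq_zero hp₂1
  constructor
  · -- forward direction
    intro hphi
    set A : ZMod n → ℤ := fun k => α.coeff (efn k) with hAdef
    have hA0 : ∀ k, 0 ≤ A k := fun k => hα _
    have hker : (fun k => ((A k : ℚ))) ∈ LinearMap.ker (Lmap n ω) := by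
      rw [LinearMap.mem_ker, Lmap_apply, ← hphi, hφdecomp α]
      refine Finset.sum_congr rfl (fun k _ => ?_)
      rw [Rat.smul_def]
      push_cast
      ring
    rw [ker_eq_sup n hω u₁ u₂ gg hu₁0 hu₂0 hun₁ hun₂ hd₁ hd₂ hgg0 hbez harith] at hker
    obtain ⟨B', hB', C', hC', hBC⟩ := Submodule.mem_sup.mp hker
    have hB'inv : ∀ k, B' (k + ((u₁ : ℕ) : ZMod n)) = B' k := hB'
    have hC'inv : ∀ k, C' (k + ((u₂ : ℕ) : ZMod n)) = C' k := hC'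
    have hstar : ∀ (k : ZMod n) (t : ℕ),
        A (k + t • ((u₁ : ℕ) : ZMod n) + ((u₂ : ℕ) : ZMod n)) + A k
          = A (k + t • ((u₁ : ℕ) : ZMod n)) + A (k + ((u₂ : ℕ) : ZMod n)) := by
      intro k t
      have hq : ∀ m : ZMod n, (A m : ℚ) = B' m + C' m := by
        intro m
        have h := congrFun hBC m
        simp only [Pi.add_apply] at h
        exact h.symm
      have b1 : B' (k + t • ((u₁ : ℕ) : ZMod n) + ((u₂ : ℕ) : ZMod n))
          = B' (k + ((u₂ : ℕ) : ZMod n)) := by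
        rw [show k + t • ((u₁ : ℕ) : ZMod n) + ((u₂ : ℕ) : ZMod n)
          = (k + ((u₂ : ℕ) : ZMod n)) + t • ((u₁ : ℕ) : ZMod n) by abel]
        exact inv_add_nsmul B' _ hB'inv t _
      have c1 : C' (k + t • ((u₁ : ℕ) : ZMod n) + ((u₂ : ℕ) : ZMod n))
          = C' (k + t • ((u₁ : ℕ) : ZMod n)) := hC'inv _
      have b2 : B' (k + t • ((u₁ : ℕ) : ZMod n)) = B' k := inv_add_nsmul B' _ hB'inv t k
      have c2 : C' (k + ((u₂ : ℕ) : ZMod n)) = C' k := hC'inv k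
      have hQ : (A (k + t • ((u₁ : ℕ) : ZMod n) + ((u₂ : ℕ) : ZMod n)) : ℚ) + (A k : ℚ)
          = (A (k + t • ((u₁ : ℕ) : ZMod n)) : ℚ) + (A (k + ((u₂ : ℕ) : ZMod n)) : ℚ) := by
        rw [hq, hq, hq, hq, b1, c1, b2, c2]
        ring
      exact_mod_cast hQ
    obtain ⟨B, C, hB0, hC0, hBinv, hCinv, hABC⟩ :=
      exists_decomp p₁ u₁ u₂ hnu₁ hp₁0 A hA0 hstar
    set b : ZMod n → ℤ := fun k => if k.val < u₁ then B k else 0 with hbdef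
    set c : ZMod n → ℤ := fun k => if k.val < u₂ then C k else 0 with hcdef
    set βf : MonoidAlgebra ℤ G := MonoidAlgebra.ofCoeff (Finsupp.equivFunOnFinite.symm (fun g => b (efn.symm g)))
      with hβfdef
    set γf : MonoidAlgebra ℤ G := MonoidAlgebra.ofCoeff (Finsupp.equivFunOnFinite.symm (fun g => c (efn.symm g)))
      with hγfdef
    have hβfco : ∀ g : G, βf.coeff g = b (efn.symm g) := fun g => rfl
    have hγfco : ∀ g : G, γf.coeff g = c (efn.symm g) := fun g => rfl
    refine ⟨βf, γf, ?_, ?_, ?_⟩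
    · intro g
      rw [hβfco]
      show (0 : ℤ) ≤ if (efn.symm g).val < u₁ then B (efn.symm g) else 0
      split_ifs with h
      · exact hB0 _
      · exact le_rfl
    · intro g
      rw [hγfco]
      show (0 : ℤ) ≤ if (efn.symm g).val < u₂ then C (efn.symm g) else 0
      split_ifs with h
      · exact hC0 _
      · exact le_rfl
    · refine MonoidAlgebra.ext (Finsupp.ext ?_)
      intro g
      have hterm₁ : ∀ t : ℕ,
          (βf * MonoidAlgebra.single (w₁ ^ t) (1 : ℤ)).coeff g
            = b (efn.symm g - ((t * u₁ : ℕ) : ZMod n)) := by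
        intro t
        rw [MonoidAlgebra.coeff_mul_single_apply, mul_one, hβfco]
        congr 1
        have he : efn (efn.symm g - ((t * u₁ : ℕ) : ZMod n)) * (w₁ ^ t) = g := by
          calc efn (efn.symm g - ((t * u₁ : ℕ) : ZMod n)) * (w₁ ^ t)
              = efn (efn.symm g - ((t * u₁ : ℕ) : ZMod n)) * efn ((t * u₁ : ℕ) : ZMod n) := by
                rw [hw₁pow]
            _ = efn (efn.symm g - ((t * u₁ : ℕ) : ZMod n) + ((t * u₁ : ℕ) : ZMod n)) :=
                (hfmul _ _).symm
            _ = efn (efn.symm g) := by rw [sub_add_cancel]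
            _ = g := efn.apply_symm_apply g
        rw [Equiv.symm_apply_eq]
        exact (eq_mul_inv_iff_mul_eq.mpr he).symm
      have hterm₂ : ∀ t : ℕ,
          (γf * MonoidAlgebra.single (w₂ ^ t) (1 : ℤ)).coeff g
            = c (efn.symm g - ((t * u₂ : ℕ) : ZMod n)) := by
        intro t
        rw [MonoidAlgebra.coeff_mul_single_apply, mul_one, hγfco]
        congr 1
        have he : efn (efn.symm g - ((t * u₂ : ℕ) : ZMod n)) * (w₂ ^ t) = g := by
          calc efn (efn.symm g - ((t * u₂ : ℕ) : ZMod n)) * (w₂ ^ t)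
              = efn (efn.symm g - ((t * u₂ : ℕ) : ZMod n)) * efn ((t * u₂ : ℕ) : ZMod n) := by
                rw [hw₂pow]
            _ = efn (efn.symm g - ((t * u₂ : ℕ) : ZMod n) + ((t * u₂ : ℕ) : ZMod n)) :=
                (hfmul _ _).symm
            _ = efn (efn.symm g) := by rw [sub_add_cancel]
            _ = g := efn.apply_symm_apply g
        rw [Equiv.symm_apply_eq]
        exact (eq_mul_inv_iff_mul_eq.mpr he).symm
      have h₁ : (βf * (∑ h : P₁, MonoidAlgebra.single (h : G) (1 : ℤ))).coeff g
          = B (efn.symm g) := by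
        rw [Finset.mul_sum, MonoidAlgebra.coeff_sum, Finsupp.finset_sum_apply,
          sum_subgroup_eq P₁ w₁ p₁ hp₁0 hP₁w hw₁ord
            (fun x => (βf * MonoidAlgebra.single x (1 : ℤ)).coeff g),
          Finset.sum_congr rfl (fun t _ => hterm₁ t)]
        exact sum_transversal u₁ p₁ hnu₁ hu₁0 hp₁0 B hBinv (efn.symm g)
      have h₂ : (γf * (∑ h : P₂, MonoidAlgebra.single (h : G) (1 : ℤ))).coeff g
          = C (efn.symm g) := by
        rw [Finset.mul_sum, MonoidAlgebra.coeff_sum, Finsupp.finset_sum_apply,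
          sum_subgroup_eq P₂ w₂ p₂ hp₂0 hP₂w hw₂ord
            (fun x => (γf * MonoidAlgebra.single x (1 : ℤ)).coeff g),
          Finset.sum_congr rfl (fun t _ => hterm₂ t)]
        exact sum_transversal u₂ p₂ hnu₂ hu₂0 hp₂0 C hCinv (efn.symm g)
      rw [MonoidAlgebra.coeff_add, Finsupp.add_apply, h₁, h₂]
      have h3 := hABC (efn.symm g)
      have h4 : A (efn.symm g) = α.coeff g := by
        show α.coeff (efn (efn.symm g)) = α.coeff g
        rw [Equiv.apply_symm_apply]
      rw [h4] at h3
      exact h3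
  · rintro ⟨β, γ, hβ, hγ, rfl⟩
    rw [map_add, map_mul, map_mul, hφσ₁, hφσ₂, mul_zero, mul_zero, add_zero]
end

section
/- Let ω ∈ ℂ be a primitive 12th root of unity, let G = ⟨z⟩ be cyclic of order 12, let P₁ = {1, z⁶} and P₂ = {1, z⁴, z⁸} be the subgroups of G of orders 2 and 3, and let φ : ℤG → ℂ be the ring homomorphism with φ(z) = ω. Then φ(z + z⁵ + z⁹) = ω + ω⁵ + ω⁹ = 0, yet z + z⁵ + z⁹ cannot be written as α·σ(P₂) + β·σ(P₁) where α is a nonnegative integer combination of elements of P₁ and β is a nonnegative integer combination of elements of P₂. (In particular, Theorem 3.3 of Lam–Leung as literally stated, ℕG ∩ ker(φ) = ℕP₁·σ(P₂) + ℕP₂·σ(P₁), is false for n = 12.) -/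
/-- Counterexample to the literal statement of Lam–Leung Theorem 3.3 for `n = 12`:
with `G = ⟨z⟩` cyclic of order `12`, `ω` a primitive `12`-th root of unity and
`φ : ℤG → ℂ` the ring homomorphism with `φ(z) = ω`, one has
`φ(z + z⁵ + z⁹) = ω + ω⁵ + ω⁹ = 0`, yet `z + z⁵ + z⁹` cannot be written as
`α·σ(P₂) + β·σ(P₁)` with `α ∈ ℕP₁` and `β ∈ ℕP₂`, where `P₁ = {1, z⁶}` and
`P₂ = {1, z⁴, z⁸}`. -/
theorem lam_leung_counterexample_n12
    (G : Type*) [CommGroup G] [Fintype G]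
    (z : G) (hz : ∀ g : G, g ∈ Subgroup.zpowers z) (hcard : Fintype.card G = 12)
    (ω : ℂ) (hω : IsPrimitiveRoot ω 12)
    (φ : MonoidAlgebra ℤ G →+* ℂ) (hφ : φ (MonoidAlgebra.single z 1) = ω) :
    φ (MonoidAlgebra.single z 1 + MonoidAlgebra.single (z ^ 5) 1 +
        MonoidAlgebra.single (z ^ 9) 1) = ω + ω ^ 5 + ω ^ 9 ∧
    ω + ω ^ 5 + ω ^ 9 = 0 ∧
    ¬ ∃ α β : MonoidAlgebra ℤ G,
        (∀ g : G, 0 ≤ α.coeff g) ∧ (∀ g : G, α.coeff g ≠ 0 → g = 1 ∨ g = z ^ 6) ∧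
        (∀ g : G, 0 ≤ β.coeff g) ∧ (∀ g : G, β.coeff g ≠ 0 → g = 1 ∨ g = z ^ 4 ∨ g = z ^ 8) ∧
        MonoidAlgebra.single z 1 + MonoidAlgebra.single (z ^ 5) 1 +
            MonoidAlgebra.single (z ^ 9) 1 =
          α * (MonoidAlgebra.single (1 : G) (1 : ℤ) + MonoidAlgebra.single (z ^ 4) 1 +
                MonoidAlgebra.single (z ^ 8) 1) +
          β * (MonoidAlgebra.single (1 : G) (1 : ℤ) + MonoidAlgebra.single (z ^ 6) 1) := by
  have hord : orderOf z = 12 := by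
    rw [orderOf_eq_card_of_forall_mem_zpowers hz, Nat.card_eq_fintype_card, hcard]
  have hpow : ∀ a b : ℕ, z ^ a = z ^ b ↔ a % 12 = b % 12 := by
    intro a b; rw [pow_eq_pow_iff_modEq, hord]; rfl
  have hsingle : ∀ k : ℕ, φ (MonoidAlgebra.single (z ^ k) (1 : ℤ)) = ω ^ k := by
    intro k
    have : (MonoidAlgebra.single (z ^ k) (1 : ℤ)) = (MonoidAlgebra.single z (1 : ℤ)) ^ k := by
      rw [MonoidAlgebra.single_pow, one_pow]
    rw [this, map_pow, hφ]
  refine ⟨by rw [map_add, map_add, hφ, hsingle 5, hsingle 9], ?_, ?_⟩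
  · have h12 : ω ^ 12 = 1 := hω.pow_eq_one
    have h4 : ω ^ 4 ≠ 1 := hω.pow_ne_one_of_pos_of_lt (by norm_num) (by norm_num)
    have key : (ω ^ 4 - 1) * (1 + ω ^ 4 + ω ^ 8) = 0 := by linear_combination h12
    rcases mul_eq_zero.mp key with h | h
    · exact absurd (by linear_combination h : ω ^ 4 = 1) h4
    · linear_combination ω * h
  · rintro ⟨α, β, hα0, hαs, hβ0, hβs, heq⟩
    have hαz : ∀ g : G, g ≠ 1 → g ≠ z ^ 6 → α.coeff g = 0 := by
      intro g h1 h2; by_contra h; rcases hαs g h with h' | h' <;> tauto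
    have hβz : ∀ g : G, g ≠ 1 → g ≠ z ^ 4 → g ≠ z ^ 8 → β.coeff g = 0 := by
      intro g h1 h2 h3; by_contra h; rcases hβs g h with h' | h' | h' <;> tauto
    have ne1 : ∀ a : ℕ, a % 12 ≠ 0 % 12 → z ^ a ≠ 1 := by
      intro a h hc; exact h ((hpow a 0).mp (by simpa using hc))
    have nab : ∀ a b : ℕ, a % 12 ≠ b % 12 → z ^ a ≠ z ^ b := by
      intro a b h hc; exact h ((hpow a b).mp hc)
    have e1 : (MonoidAlgebra.single z (1 : ℤ)).coeff z = 1 := Finsupp.single_eq_same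
    have e5 : (MonoidAlgebra.single (z ^ 5) (1 : ℤ)).coeff z = 0 :=
      Finsupp.single_eq_of_ne (by simpa using nab 1 5 (by decide))
    have e9 : (MonoidAlgebra.single (z ^ 9) (1 : ℤ)).coeff z = 0 :=
      Finsupp.single_eq_of_ne (by simpa using nab 1 9 (by decide))
    have w1 : z * (1 : G)⁻¹ = z ^ 1 := by rw [inv_one, mul_one, pow_one]
    have w4 : z * (z ^ 4)⁻¹ = z ^ 9 := by
      rw [mul_inv_eq_iff_eq_mul, ← pow_add]
      calc z = z ^ 1 := (pow_one z).symm
        _ = z ^ (9 + 4) := (hpow 1 (9 + 4)).mpr (by decide)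
    have w8 : z * (z ^ 8)⁻¹ = z ^ 5 := by
      rw [mul_inv_eq_iff_eq_mul, ← pow_add]
      calc z = z ^ 1 := (pow_one z).symm
        _ = z ^ (5 + 8) := (hpow 1 (5 + 8)).mpr (by decide)
    have w6 : z * (z ^ 6)⁻¹ = z ^ 7 := by
      rw [mul_inv_eq_iff_eq_mul, ← pow_add]
      calc z = z ^ 1 := (pow_one z).symm
        _ = z ^ (7 + 6) := (hpow 1 (7 + 6)).mpr (by decide)
    have a1 : α.coeff (z ^ 1) = 0 :=
      hαz _ (ne1 1 (by decide)) (nab 1 6 (by decide))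
    have a9 : α.coeff (z ^ 9) = 0 :=
      hαz _ (ne1 9 (by decide)) (nab 9 6 (by decide))
    have a5 : α.coeff (z ^ 5) = 0 :=
      hαz _ (ne1 5 (by decide)) (nab 5 6 (by decide))
    have b1 : β.coeff (z ^ 1) = 0 :=
      hβz _ (ne1 1 (by decide)) (nab 1 4 (by decide)) (nab 1 8 (by decide))
    have b7 : β.coeff (z ^ 7) = 0 :=
      hβz _ (ne1 7 (by decide)) (nab 7 4 (by decide)) (nab 7 8 (by decide))
    have key := congrArg (fun f : MonoidAlgebra ℤ G => f.coeff z) heq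
    simp only [mul_add, MonoidAlgebra.coeff_add] at key
    repeat rw [Finsupp.add_apply] at key
    repeat rw [MonoidAlgebra.coeff_mul_single_apply] at key
    rw [e1, e5, e9, w1, w4, w8, w6, a1, a9, a5, b1, b7] at key
    norm_num at key
end

section
/- Let n ≥ 1 and let A be a multiset of nonzero elements of ℤ/nℤ with at most two elements (counted with multiplicity). Then every circulant multigraph Cay(ℤ/nℤ, B), with B a multiset of nonzero elements of ℤ/nℤ, that is isospectral to Cay(ℤ/nℤ, A) is isomorphic to Cay(ℤ/nℤ, A). -/
open Finset Polynomial Complex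
set_option linter.unusedSectionVars false

section Char
variable (n : ℕ) [NeZero n]

noncomputable def zz : ℂ := Complex.exp (2 * Real.pi * Complex.I / n)

lemma zz_prim : IsPrimitiveRoot (zz n) n :=
  Complex.isPrimitiveRoot_exp n (NeZero.ne n)

noncomputable def ee (x : ZMod n) : ℂ := zz n ^ x.val

lemma zz_pow_n : zz n ^ n = 1 := (zz_prim n).pow_eq_one

lemma zz_pow_mod (a : ℕ) : zz n ^ (a % n) = zz n ^ a := by
  conv_rhs => rw [show a = n * (a / n) + a % n from (Nat.div_add_mod a n).symm]
  rw [pow_add, pow_mul, zz_pow_n, one_pow, one_mul]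

lemma ee_zero : ee n 0 = 1 := by simp [ee]

lemma ee_add (x y : ZMod n) : ee n (x + y) = ee n x * ee n y := by
  rw [ee, ee, ee, ZMod.val_add, zz_pow_mod, pow_add]

lemma ee_nat_mul (k : ℕ) (x : ZMod n) : ee n ((k : ZMod n) * x) = ee n x ^ k := by
  have : ((k : ZMod n) * x) = ((k * x.val : ℕ) : ZMod n) := by
    push_cast [ZMod.natCast_zmod_val]; ring
  rw [this, ee, ZMod.val_natCast, zz_pow_mod, mul_comm k, pow_mul]; rfl

lemma ee_ne_zero (x : ZMod n) : ee n x ≠ 0 :=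
  pow_ne_zero _ (Complex.exp_ne_zero _)

lemma ee_eq_one_iff {x : ZMod n} : ee n x = 1 ↔ x = 0 := by
  constructor
  · intro h
    have := (zz_prim n).pow_inj (ZMod.val_lt x) (Nat.pos_of_ne_zero (NeZero.ne n))
      (by simpa [ee] using h)
    exact (ZMod.val_eq_zero x).mp this
  · rintro rfl; exact ee_zero n

lemma abs_ee (x : ZMod n) : ‖ee n x‖ = 1 := by
  have h1 : ‖zz n‖ = 1 := by
    rw [zz, Complex.norm_exp]
    norm_num [Complex.div_re, Complex.mul_re, Complex.mul_im]
  rw [ee, norm_pow, h1, one_pow]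

noncomputable def valEquiv : ZMod n ≃ Fin n where
  toFun x := ⟨x.val, ZMod.val_lt x⟩
  invFun i := (i : ℕ)
  left_inv x := ZMod.natCast_zmod_val x
  right_inv i := by
    ext; exact ZMod.val_natCast_of_lt i.2

lemma ee_pow_n (x : ZMod n) : ee n x ^ n = 1 := by
  rw [ee, ← pow_mul, mul_comm, pow_mul, zz_pow_n, one_pow]

lemma sum_ee (x : ZMod n) :
    (∑ j : ZMod n, ee n (j * x)) = if x = 0 then (n : ℂ) else 0 := by
  have key : (∑ j : ZMod n, ee n (j * x)) = ∑ i ∈ Finset.range n, ee n x ^ i := by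
    rw [← Fin.sum_univ_eq_sum_range]
    apply Fintype.sum_equiv (valEquiv n)
    intro j
    simp only [valEquiv, Equiv.coe_fn_mk]
    rw [← ee_nat_mul, ZMod.natCast_zmod_val]
  rw [key]
  by_cases hx : x = 0
  · simp [hx, ee_zero]
  · have hne : ee n x ≠ 1 := fun h => hx ((ee_eq_one_iff n).mp h)
    rw [geom_sum_eq hne, ee_pow_n, sub_self, zero_div, if_neg hx]

end Char

/-- Adjacency matrix of the circulant multigraph `Cay(ℤ/nℤ, S)`:
the `(u,v)` entry is the multiplicity of `v - u` in the connection multiset `S`. -/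
def circulantAdj (n : ℕ) [NeZero n] (S : Multiset (ZMod n)) :
    Matrix (ZMod n) (ZMod n) ℂ :=
  Matrix.of fun u v => (S.count (v - u) : ℂ)

section Spec
variable (n : ℕ) [NeZero n]

noncomputable def lam (S : Multiset (ZMod n)) (j : ZMod n) : ℂ :=
  (S.map fun s => ee n (s * j)).sum

lemma msum_univ (S : Multiset (ZMod n)) (f : ZMod n → ℂ) :
    (S.map f).sum = ∑ t : ZMod n, (S.count t : ℂ) * f t := by
  rw [Finset.sum_multiset_map_count]
  rw [Finset.sum_subset (Finset.subset_univ S.toFinset)]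
  · apply Finset.sum_congr rfl
    intro t _
    simp [nsmul_eq_mul]
  · intro t _ ht
    simp [Multiset.count_eq_zero_of_notMem (by simpa using ht)]

noncomputable def Fm : Matrix (ZMod n) (ZMod n) ℂ :=
  Matrix.of fun u j => ee n (u * j)

lemma mulF (S : Multiset (ZMod n)) :
    circulantAdj n S * Fm n = Fm n * Matrix.diagonal (lam n S) := by
  ext u j
  rw [Matrix.mul_apply, Matrix.mul_diagonal]
  show (∑ v : ZMod n, (S.count (v - u) : ℂ) * ee n (v * j)) = ee n (u * j) * lam n S j
  rw [lam, msum_univ, Finset.mul_sum]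
  apply Fintype.sum_equiv (Equiv.addLeft u).symm
  intro v
  have h2 : (Equiv.addLeft u).symm v = v - u := by
    simp [sub_eq_neg_add]
  rw [h2]
  have h3 : ee n (v * j) = ee n (u * j) * ee n ((v - u) * j) := by
    rw [← ee_add, ← add_mul, add_sub_cancel]
  rw [h3]; ring

lemma Fm_eq_vandermonde :
    Fm n = (Matrix.vandermonde fun i : Fin n => zz n ^ (i : ℕ)).submatrix
      (valEquiv n) (valEquiv n) := by
  ext u j
  show ee n (u * j) = (zz n ^ u.val) ^ j.val
  rw [ee, ZMod.val_mul, zz_pow_mod, pow_mul]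

lemma det_Fm_ne : (Fm n).det ≠ 0 := by
  rw [Fm_eq_vandermonde, Matrix.det_submatrix_equiv_self, Matrix.det_vandermonde]
  rw [Finset.prod_ne_zero_iff]
  intro i _
  rw [Finset.prod_ne_zero_iff]
  intro j hj
  rw [Finset.mem_Ioi] at hj
  refine sub_ne_zero_of_ne fun h => ?_
  exact absurd ((zz_prim n).pow_inj j.2 i.2 h) (by omega)

lemma charmatrix_diagonal (d : ZMod n → ℂ) :
    Matrix.charmatrix (Matrix.diagonal d) =
      Matrix.diagonal fun j => (Polynomial.X - Polynomial.C (d j)) := by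
  refine Matrix.ext fun i j => ?_
  by_cases h : i = j
  · subst h
    simp
  · rw [Matrix.charmatrix_apply_ne _ _ _ h, Matrix.diagonal_apply_ne _ h,
      Matrix.diagonal_apply_ne _ h, map_zero, neg_zero]

lemma charpoly_circ (S : Multiset (ZMod n)) :
    (circulantAdj n S).charpoly =
      ∏ j : ZMod n, (Polynomial.X - Polynomial.C (lam n S j)) := by
  classical
  have key : Matrix.charmatrix (circulantAdj n S) * (Fm n).map Polynomial.C
      = (Fm n).map Polynomial.C * Matrix.charmatrix (Matrix.diagonal (lam n S)) := by
    rw [Matrix.charmatrix, Matrix.charmatrix, RingHom.mapMatrix_apply, RingHom.mapMatrix_apply]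
    rw [sub_mul, mul_sub]
    congr 1
    · rw [Matrix.scalar_commute _ (fun r => Commute.all _ r) _]
    · rw [← Matrix.map_mul, ← Matrix.map_mul, mulF]
  have hdet := congrArg Matrix.det key
  rw [Matrix.det_mul, Matrix.det_mul] at hdet
  have hC : ((Fm n).map Polynomial.C).det = Polynomial.C (Fm n).det := by
    rw [← RingHom.mapMatrix_apply, ← RingHom.map_det]
  have hne : (Polynomial.C (Fm n).det : Polynomial ℂ) ≠ 0 := by
    rw [Ne, Polynomial.C_eq_zero]
    exact det_Fm_ne n
  have : (circulantAdj n S).charpoly = (Matrix.diagonal (lam n S)).charpoly := by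
    rw [Matrix.charpoly, Matrix.charpoly]
    rw [hC, mul_comm (Polynomial.C (Fm n).det)] at hdet
    exact mul_right_cancel₀ hne hdet
  rw [this, Matrix.charpoly, charmatrix_diagonal, Matrix.det_diagonal]

lemma spec_eq {A B : Multiset (ZMod n)}
    (h : (circulantAdj n B).charpoly = (circulantAdj n A).charpoly) :
    Finset.univ.val.map (lam n B) = Finset.univ.val.map (lam n A) := by
  have hB := charpoly_circ n B
  have hA := charpoly_circ n A
  have key : ∀ S : Multiset (ZMod n),
      (∏ j : ZMod n, (Polynomial.X - Polynomial.C (lam n S j)))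
      = ((Finset.univ.val.map (lam n S)).map
          fun z : ℂ => Polynomial.X - Polynomial.C z).prod := by
    intro S
    rw [Multiset.map_map]
    rfl
  have := h
  rw [hB, hA, key, key] at this
  have := congrArg Polynomial.roots this
  rwa [Polynomial.roots_multiset_prod_X_sub_C, Polynomial.roots_multiset_prod_X_sub_C] at this

lemma sum_invariant {A B : Multiset (ZMod n)}
    (h : Finset.univ.val.map (lam n B) = Finset.univ.val.map (lam n A))
    (f : ℂ → ℂ) : (∑ j : ZMod n, f (lam n B j)) = ∑ j : ZMod n, f (lam n A j) := by
  have : ∀ S : Multiset (ZMod n), (∑ j : ZMod n, f (lam n S j))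
      = ((Finset.univ.val.map (lam n S)).map f).sum := by
    intro S
    rw [Multiset.map_map]
    rfl
  rw [this, this, h]

end Spec

section NT
variable (n : ℕ) [NeZero n]

lemma card_ann (x : ZMod n) :
    (Finset.univ.filter fun j : ZMod n => j * x = 0).card = n.gcd x.val := by
  classical
  have hg : n.gcd x.val ∣ n := Nat.gcd_dvd_left n x.val
  set g := n.gcd x.val with hgdef
  have hnpos : 0 < n := Nat.pos_of_ne_zero (NeZero.ne n)
  have hgpos : 0 < g := Nat.gcd_pos_of_pos_left _ hnpos
  set d := n / g with hddef
  have hdg : d * g = n := Nat.div_mul_cancel hg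
  have hdpos : 0 < d := Nat.div_pos (Nat.le_of_dvd hnpos hg) hgpos
  have hord : addOrderOf x = d := by
    conv_lhs => rw [← ZMod.natCast_zmod_val x]
    rw [ZMod.addOrderOf_coe _ (NeZero.ne n)]
  have hcrit : ∀ j : ZMod n, (j * x = 0) ↔ d ∣ j.val := by
    intro j
    have h1 : j * x = j.val • x := by rw [nsmul_eq_mul, ZMod.natCast_zmod_val]
    rw [h1, ← addOrderOf_dvd_iff_nsmul_eq_zero, hord]
  have hfe : (Finset.univ.filter fun j : ZMod n => j * x = 0)
      = (Finset.univ.filter fun j : ZMod n => d ∣ j.val) := by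
    ext j; simp [hcrit]
  rw [hfe, ← Finset.card_range g]
  symm
  apply Finset.card_bij' (fun (i : ℕ) (_ : i ∈ Finset.range g) => ((d * i : ℕ) : ZMod n))
    (fun (j : ZMod n) (_ : j ∈ Finset.univ.filter fun j : ZMod n => d ∣ j.val) => j.val / d)
  · intro i hi
    rw [Finset.mem_range] at hi
    have hlt : d * i < n := by
      calc d * i < d * g := by exact (Nat.mul_lt_mul_left hdpos).mpr hi
      _ = n := hdg
    refine Finset.mem_filter.mpr ⟨Finset.mem_univ _, ?_⟩
    rw [ZMod.val_natCast_of_lt hlt]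
    exact Dvd.intro i rfl
  · intro j hj
    rw [Finset.mem_filter] at hj
    obtain ⟨_, m, hm⟩ := hj
    rw [Finset.mem_range, hm]
    rw [Nat.mul_div_cancel_left _ hdpos]
    have : d * m < d * g := by rw [hdg, ← hm]; exact ZMod.val_lt j
    exact lt_of_mul_lt_mul_left this (le_of_lt hdpos)
  · intro i hi
    rw [Finset.mem_range] at hi
    have hlt : d * i < n := by
      calc d * i < d * g := (Nat.mul_lt_mul_left hdpos).mpr hi
      _ = n := hdg
    rw [ZMod.val_natCast_of_lt hlt, Nat.mul_div_cancel_left _ hdpos]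
  · intro j hj
    rw [Finset.mem_filter] at hj
    obtain ⟨_, m, hm⟩ := hj
    rw [hm, Nat.mul_div_cancel_left _ hdpos, ← hm, ZMod.natCast_zmod_val]

lemma exists_unit_of_gcd_eq {x y : ZMod n} (h : n.gcd x.val = n.gcd y.val) :
    ∃ u : (ZMod n)ˣ, y = u * x := by
  have hnpos : 0 < n := Nat.pos_of_ne_zero (NeZero.ne n)
  set g := n.gcd x.val with hgdef
  have hgx : g ∣ x.val := Nat.gcd_dvd_right n x.val
  have hgy : g ∣ y.val := h ▸ Nat.gcd_dvd_right n y.val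
  have hgn : g ∣ n := Nat.gcd_dvd_left n x.val
  have hgpos : 0 < g := Nat.gcd_pos_of_pos_left _ hnpos
  set n1 := n / g with hn1def
  have hn1n : n1 ∣ n := Nat.div_dvd_of_dvd hgn
  have hn1pos : 0 < n1 := Nat.div_pos (Nat.le_of_dvd hnpos hgn) hgpos
  haveI : NeZero n1 := ⟨hn1pos.ne'⟩
  set a1 := x.val / g with ha1def
  set b1 := y.val / g with hb1def
  have hco_a : Nat.Coprime a1 n1 := (Nat.coprime_div_gcd_div_gcd hgpos).symm
  have hco_b : Nat.Coprime b1 n1 := by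
    have : Nat.Coprime (n / n.gcd y.val) (y.val / n.gcd y.val) :=
      Nat.coprime_div_gcd_div_gcd (h ▸ hgpos)
    rw [← h] at this
    exact this.symm
  set α := ZMod.unitOfCoprime a1 hco_a with hα
  set β := ZMod.unitOfCoprime b1 hco_b with hβ
  obtain ⟨u, hu⟩ := ZMod.unitsMap_surjective hn1n (β * α⁻¹)
  refine ⟨u, ?_⟩
  set w : ZMod n := (b1 : ZMod n) - (u : ZMod n) * (a1 : ZMod n) with hw
  have hcast : ZMod.castHom hn1n (ZMod n1) w = 0 := by
    have hcu : ZMod.castHom hn1n (ZMod n1) (u : ZMod n) = ((β * α⁻¹ : (ZMod n1)ˣ) : ZMod n1) := by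
      rw [← hu, ZMod.unitsMap_def, Units.coe_map]
      rfl
    rw [hw, map_sub, map_mul, hcu, map_natCast, map_natCast]
    have : ((β * α⁻¹ : (ZMod n1)ˣ) : ZMod n1) * (a1 : ZMod n1)
        = ((β * α⁻¹ * α : (ZMod n1)ˣ) : ZMod n1) := by
      rw [Units.val_mul]
      congr 1
    rw [this]
    rw [inv_mul_cancel_right, ZMod.coe_unitOfCoprime, sub_self]
  have hdvd : n1 ∣ w.val := by
    have h1 : ((w.val : ℕ) : ZMod n1) = 0 := by
      rw [ZMod.natCast_val] at *
      rw [← ZMod.castHom_apply (h := hn1n)] at *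
      exact hcast
    exact (ZMod.natCast_eq_zero_iff _ _).mp h1
  obtain ⟨m, hm⟩ := hdvd
  have hgw : (g : ZMod n) * w = 0 := by
    have : (g : ZMod n) * w = ((g * w.val : ℕ) : ZMod n) := by
      push_cast [ZMod.natCast_zmod_val]; ring
    rw [this, hm, ← mul_assoc, Nat.mul_div_cancel' hgn]
    push_cast [ZMod.natCast_self]
    ring
  have hx : x = (g : ZMod n) * (a1 : ZMod n) := by
    conv_lhs => rw [← ZMod.natCast_zmod_val x, ← Nat.mul_div_cancel' hgx]
    push_cast; rfl
  have hy : y = (g : ZMod n) * (b1 : ZMod n) := by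
    conv_lhs => rw [← ZMod.natCast_zmod_val y, ← Nat.mul_div_cancel' hgy]
    push_cast; rfl
  have : y - (u : ZMod n) * x = (g : ZMod n) * w := by
    rw [hx, hy, hw]; ring
  have h0 : y - (u : ZMod n) * x = 0 := by rw [this, hgw]
  linear_combination h0

lemma endgame {a c b d : ZMod n}
    (h : ∀ k l : ZMod n, k * a + l * c = 0 ↔ k * b + l * d = 0) :
    ∃ u : (ZMod n)ˣ, b = u * a ∧ d = u * c := by
  classical
  set g0 := Nat.gcd a.val c.val with hg0
  set e := Nat.gcd g0 n with he
  have hen : e ∣ n := Nat.gcd_dvd_right g0 n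
  have hea : e ∣ a.val := (Nat.gcd_dvd_left g0 n).trans (Nat.gcd_dvd_left _ _)
  have hec : e ∣ c.val := (Nat.gcd_dvd_left g0 n).trans (Nat.gcd_dvd_right _ _)
  -- Bezout: get κ λ : ZMod n with κ*a + λ*c = e
  obtain ⟨κ, lam0, hkl⟩ : ∃ κ lam0 : ZMod n, κ * a + lam0 * c = (e : ZMod n) := by
    have h1 : (g0 : ℤ) = a.val * Nat.gcdA a.val c.val + c.val * Nat.gcdB a.val c.val :=
      Nat.gcd_eq_gcd_ab a.val c.val
    have h2 : (e : ℤ) = g0 * Nat.gcdA g0 n + n * Nat.gcdB g0 n :=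
      Nat.gcd_eq_gcd_ab g0 n
    refine ⟨((Nat.gcdA a.val c.val * Nat.gcdA g0 n : ℤ) : ZMod n),
      ((Nat.gcdB a.val c.val * Nat.gcdA g0 n : ℤ) : ZMod n), ?_⟩
    have := congrArg (fun z : ℤ => (z : ZMod n)) h2
    rw [h1] at this
    push_cast [ZMod.natCast_self, ZMod.natCast_zmod_val] at this
    rw [this]; push_cast; ring
  set v := κ * b + lam0 * d with hv
  have hiff : ∀ r : ZMod n, r * (e : ZMod n) = 0 ↔ r * v = 0 := by
    intro r
    have h1 : r * (e : ZMod n) = (r * κ) * a + (r * lam0) * c := by rw [← hkl]; ring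
    have h2 : r * v = (r * κ) * b + (r * lam0) * d := by rw [hv]; ring
    rw [h1, h2]
    exact h _ _
  have hgcd : n.gcd ((e : ZMod n)).val = n.gcd v.val := by
    rw [← card_ann, ← card_ann]
    congr 1
    ext j
    simp [hiff j]
  have hge : n.gcd ((e : ZMod n)).val = e := by
    rw [ZMod.val_natCast]
    rcases eq_or_lt_of_le (Nat.le_of_dvd (Nat.pos_of_ne_zero (NeZero.ne n)) hen) with heq | hlt
    · rw [heq, Nat.mod_self, Nat.gcd_zero_right]
    · rw [Nat.mod_eq_of_lt hlt]
      exact Nat.gcd_eq_right hen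
  obtain ⟨u, hu⟩ := exists_unit_of_gcd_eq n (x := (e : ZMod n)) (y := v) hgcd
  refine ⟨u, ?_, ?_⟩
  · -- b = u * a
    set a' : ZMod n := ((a.val / e : ℕ) : ZMod n) with ha'
    have haa : a' * (e : ZMod n) = a := by
      rw [ha']
      conv_rhs => rw [← ZMod.natCast_zmod_val a, ← Nat.div_mul_cancel hea]
      push_cast; ring
    have h0 : (1 - a' * κ) * a + (-(a' * lam0)) * c = 0 := by
      have : a' * (κ * a + lam0 * c) = a := by rw [hkl, haa]
      linear_combination -this
    have h1 := (h _ _).mp h0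
    have : b = a' * v := by rw [hv]; linear_combination h1
    rw [this, hu, ← mul_assoc, mul_comm a' (u : ZMod n), mul_assoc, haa]
  · set c' : ZMod n := ((c.val / e : ℕ) : ZMod n) with hc'
    have hcc : c' * (e : ZMod n) = c := by
      rw [hc']
      conv_rhs => rw [← ZMod.natCast_zmod_val c, ← Nat.div_mul_cancel hec]
      push_cast; ring
    have h0 : (-(c' * κ)) * a + (1 - c' * lam0) * c = 0 := by
      have : c' * (κ * a + lam0 * c) = c := by rw [hkl, hcc]
      linear_combination -this
    have h1 := (h _ _).mp h0
    have : d = c' * v := by rw [hv]; linear_combination h1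
    rw [this, hu, ← mul_assoc, mul_comm c' (u : ZMod n), mul_assoc, hcc]

lemma endgame1 {x y : ZMod n}
    (h : ∀ r : ZMod n, r * x = 0 ↔ r * y = 0) :
    ∃ u : (ZMod n)ˣ, y = u * x := by
  obtain ⟨u, hu, -⟩ := endgame n (a := x) (c := 0) (b := y) (d := 0)
    (fun k l => by simpa using h k)
  exact ⟨u, hu⟩

end NT

section SubgroupLemmas
variable {G : Type*} [AddCommGroup G]

lemma sub_union (H K1 K2 : AddSubgroup G)
    (hsub : ∀ x ∈ H, x ∈ K1 ∨ x ∈ K2) : (∀ x ∈ H, x ∈ K1) ∨ (∀ x ∈ H, x ∈ K2) := by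
  by_contra hc
  push_neg at hc
  obtain ⟨⟨x1, hx1H, hx1⟩, ⟨x2, hx2H, hx2⟩⟩ := hc
  have hx1K2 : x1 ∈ K2 := (hsub x1 hx1H).resolve_left hx1
  have hx2K1 : x2 ∈ K1 := (hsub x2 hx2H).resolve_right hx2
  have hs : x1 + x2 ∈ H := add_mem hx1H hx2H
  rcases hsub _ hs with hmem | hmem
  · refine hx1 ?_
    have := sub_mem hmem hx2K1
    rwa [add_sub_cancel_right] at this
  · refine hx2 ?_
    have := sub_mem hmem hx1K2
    rwa [add_sub_cancel_left] at this

lemma eq_of_ind (A B : AddSubgroup G) [DecidablePred (· ∈ A)] [DecidablePred (· ∈ B)]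
    (h : ∀ x : G, ((if x ∈ A then 1 else 0 : ℕ)) = (if x ∈ B then 1 else 0)) : A = B := by
  classical
  ext x
  have hx := h x
  by_cases hA : x ∈ A <;> by_cases hB : x ∈ B <;> simp [hA, hB] at hx ⊢

variable [Fintype G]

open Finset in
lemma eq_of_le_of_cardeq (P R : AddSubgroup G) [DecidablePred (· ∈ P)]
    [DecidablePred (· ∈ R)]
    (hle : ∀ x ∈ P, x ∈ R)
    (hcard : (univ.filter (· ∈ P)).card = (univ.filter (· ∈ R)).card) : P = R := by
  have hsub : (univ.filter (· ∈ P)) ⊆ (univ.filter (· ∈ R)) := by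
    intro x hx
    rw [mem_filter] at *
    exact ⟨mem_univ x, hle x hx.2⟩
  have heq := Finset.eq_of_subset_of_card_le hsub (le_of_eq hcard.symm)
  ext x
  constructor
  · exact fun hx => hle x hx
  · intro hx
    have : x ∈ univ.filter (· ∈ P) := by rw [heq]; simp [hx]
    simpa using this

open Finset in
lemma indicator_lemma_aux (P Q R S : AddSubgroup G) [DecidablePred (· ∈ P)]
    [DecidablePred (· ∈ Q)] [DecidablePred (· ∈ R)] [DecidablePred (· ∈ S)]
    (h : ∀ x : G, ((if x ∈ P then 1 else 0) + (if x ∈ Q then 1 else 0) : ℕ)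
      = (if x ∈ R then 1 else 0) + (if x ∈ S then 1 else 0))
    (hPR : ∀ x ∈ P, x ∈ R) :
    (P = R ∧ Q = S) ∨ (P = S ∧ Q = R) := by
  classical
  have hRPQ : ∀ x ∈ R, x ∈ P ∨ x ∈ Q := by
    intro x hx
    by_contra hc
    push_neg at hc
    have hh := h x
    rw [if_neg hc.1, if_neg hc.2, if_pos hx] at hh
    omega
  have hQRS : ∀ x ∈ Q, x ∈ R ∨ x ∈ S := by
    intro x hx
    by_contra hc
    push_neg at hc
    have hh := h x
    rw [if_neg hc.1, if_neg hc.2, if_pos hx] at hh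
    omega
  rcases sub_union R P Q hRPQ with hRP | hRQ
  · have hPReq : P = R := by
      ext x; exact ⟨fun hx => hPR x hx, fun hx => hRP x hx⟩
    left
    refine ⟨hPReq, eq_of_ind _ _ fun x => ?_⟩
    have hx := h x
    have hiff : x ∈ P ↔ x ∈ R := by rw [hPReq]
    have hPR' : (if x ∈ P then 1 else 0 : ℕ) = (if x ∈ R then 1 else 0) := by
      by_cases hp : x ∈ P
      · rw [if_pos hp, if_pos (hiff.mp hp)]
      · rw [if_neg hp, if_neg (fun hr => hp (hiff.mpr hr))]
    rw [hPR'] at hx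
    exact Nat.add_left_cancel hx
  · rcases sub_union Q R S hQRS with hQR | hQS
    · have hQReq : Q = R := by
        ext x; exact ⟨fun hx => hQR x hx, fun hx => hRQ x hx⟩
      right
      refine ⟨eq_of_ind _ _ fun x => ?_, hQReq⟩
      have hx := h x
      have hiff : x ∈ Q ↔ x ∈ R := by rw [hQReq]
      have hQR' : (if x ∈ Q then 1 else 0 : ℕ) = (if x ∈ R then 1 else 0) := by
        by_cases hp : x ∈ Q
        · rw [if_pos hp, if_pos (hiff.mp hp)]
        · rw [if_neg hp, if_neg (fun hr => hp (hiff.mpr hr))]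
      rw [hQR'] at hx
      rw [add_comm ((if x ∈ P then 1 else 0 : ℕ)) ((if x ∈ R then 1 else 0 : ℕ))] at hx
      exact Nat.add_left_cancel hx
    · have h1 : (univ.filter (· ∈ P)).card ≤ (univ.filter (· ∈ R)).card :=
        Finset.card_le_card fun x hx => by
          rw [mem_filter] at *; exact ⟨mem_univ x, hPR x hx.2⟩
      have h2 : (univ.filter (· ∈ Q)).card ≤ (univ.filter (· ∈ S)).card :=
        Finset.card_le_card fun x hx => by
          rw [mem_filter] at *; exact ⟨mem_univ x, hQS x hx.2⟩
      have hcards : (univ.filter (· ∈ P)).card + (univ.filter (· ∈ Q)).card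
          = (univ.filter (· ∈ R)).card + (univ.filter (· ∈ S)).card := by
        rw [Finset.card_filter, Finset.card_filter, Finset.card_filter, Finset.card_filter,
          ← Finset.sum_add_distrib, ← Finset.sum_add_distrib]
        exact Finset.sum_congr rfl fun x _ => h x
      have e1 : (univ.filter (· ∈ P)).card = (univ.filter (· ∈ R)).card := by omega
      have e2 : (univ.filter (· ∈ Q)).card = (univ.filter (· ∈ S)).card := by omega
      exact Or.inl ⟨eq_of_le_of_cardeq P R hPR e1, eq_of_le_of_cardeq Q S hQS e2⟩

open Finset in
lemma indicator_lemma (P Q R S : AddSubgroup G) [DecidablePred (· ∈ P)]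
    [DecidablePred (· ∈ Q)] [DecidablePred (· ∈ R)] [DecidablePred (· ∈ S)]
    (h : ∀ x : G, ((if x ∈ P then 1 else 0) + (if x ∈ Q then 1 else 0) : ℕ)
      = (if x ∈ R then 1 else 0) + (if x ∈ S then 1 else 0)) :
    (P = R ∧ Q = S) ∨ (P = S ∧ Q = R) := by
  classical
  have hPRS : ∀ x ∈ P, x ∈ R ∨ x ∈ S := by
    intro x hx
    by_contra hc
    push_neg at hc
    have hh := h x
    rw [if_neg hc.1, if_neg hc.2, if_pos hx] at hh
    omega
  rcases sub_union P R S hPRS with hPR | hPS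
  · exact indicator_lemma_aux P Q R S h hPR
  · have h' : ∀ x : G, ((if x ∈ P then 1 else 0) + (if x ∈ Q then 1 else 0) : ℕ)
        = (if x ∈ S then 1 else 0) + (if x ∈ R then 1 else 0) := by
      intro x; rw [h x]; omega
    rcases indicator_lemma_aux P Q S R h' hPS with ⟨h1, h2⟩ | ⟨h1, h2⟩
    · exact Or.inr ⟨h1, h2⟩
    · exact Or.inl ⟨h1, h2⟩
end SubgroupLemmas

section PairOf

noncomputable def pairOf (z : ℂ) : Multiset ℂ :=
  (Polynomial.X ^ 2 - Polynomial.C z * Polynomial.X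
    + Polynomial.C (z ^ 2 / (z * (starRingEnd ℂ) z))).roots

lemma pairOf_eq {x y : ℂ} (hx : ‖x‖ = 1) (hy : ‖y‖ = 1)
    (hne : x + y ≠ 0) : pairOf (x + y) = {x, y} := by
  have hx0 : x ≠ 0 := by intro h; rw [h] at hx; simp at hx
  have hy0 : y ≠ 0 := by intro h; rw [h] at hy; simp at hy
  have hxc : (starRingEnd ℂ) x = x⁻¹ := by
    refine eq_inv_of_mul_eq_one_right ?_
    rw [Complex.mul_conj, ← Complex.sq_norm, hx]; norm_num
  have hyc : (starRingEnd ℂ) y = y⁻¹ := by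
    refine eq_inv_of_mul_eq_one_right ?_
    rw [Complex.mul_conj, ← Complex.sq_norm, hy]; norm_num
  have hc : (starRingEnd ℂ) (x + y) = (x + y) / (x * y) := by
    rw [map_add, hxc, hyc]
    field_simp
    ring
  have hkey : (x + y) ^ 2 / ((x + y) * (starRingEnd ℂ) (x + y)) = x * y := by
    rw [hc]
    field_simp
  have hfac : Polynomial.X ^ 2 - Polynomial.C (x + y) * Polynomial.X
      + Polynomial.C ((x + y) ^ 2 / ((x + y) * (starRingEnd ℂ) (x + y)))
      = (Polynomial.X - Polynomial.C x) * (Polynomial.X - Polynomial.C y) := by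
    rw [hkey, map_add, map_mul]
    ring
  rw [pairOf, hfac, Polynomial.roots_mul, Polynomial.roots_X_sub_C, Polynomial.roots_X_sub_C]
  · rfl
  · exact mul_ne_zero (Polynomial.X_sub_C_ne_zero x) (Polynomial.X_sub_C_ne_zero y)

end PairOf

section Iso
variable (n : ℕ) [NeZero n]

lemma iso_of_unit (A B : Multiset (ZMod n)) (u : (ZMod n)ˣ)
    (hB : B = A.map fun x => (u : ZMod n) * x) :
    ∃ e : Equiv.Perm (ZMod n), circulantAdj n B = (circulantAdj n A).submatrix e e := by
  refine ⟨{ toFun := fun x => ((u⁻¹ : (ZMod n)ˣ) : ZMod n) * x,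
            invFun := fun x => (u : ZMod n) * x,
            left_inv := fun x => by
              simp [← mul_assoc, ← Units.val_mul],
            right_inv := fun x => by
              simp [← mul_assoc, ← Units.val_mul] }, ?_⟩
  refine Matrix.ext fun p q => ?_
  show (B.count (q - p) : ℂ) = (A.count (((u⁻¹ : (ZMod n)ˣ) : ZMod n) * q
    - ((u⁻¹ : (ZMod n)ˣ) : ZMod n) * p) : ℂ)
  congr 1
  rw [hB]
  have hinj : Function.Injective fun x : ZMod n => (u : ZMod n) * x := fun s t hst => by
    simpa [← mul_assoc, ← Units.val_mul] using congrArg (fun w => ((u⁻¹ : (ZMod n)ˣ) : ZMod n) * w) hst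
  have : q - p = (fun x : ZMod n => (u : ZMod n) * x)
      (((u⁻¹ : (ZMod n)ˣ) : ZMod n) * q - ((u⁻¹ : (ZMod n)ˣ) : ZMod n) * p) := by
    simp only [mul_sub, ← mul_assoc, ← Units.val_mul, mul_inv_cancel, Units.val_one, one_mul]
  rw [this, Multiset.count_map_eq_count' _ _ hinj]

lemma lam_zero (S : Multiset (ZMod n)) : lam n S 0 = (Multiset.card S : ℂ) := by
  rw [lam]
  have : (S.map fun s => ee n (s * 0)) = S.map fun _ => (1 : ℂ) := by
    apply Multiset.map_congr rfl
    intro s _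
    rw [mul_zero, ee_zero]
  rw [this, Multiset.map_const', Multiset.sum_replicate, nsmul_eq_mul, mul_one]

lemma lam_norm_le (S : Multiset (ZMod n)) (j : ZMod n) :
    ‖lam n S j‖ ≤ (Multiset.card S : ℝ) := by
  rw [lam]
  calc ‖(S.map fun s => ee n (s * j)).sum‖
      ≤ ((S.map fun s => ee n (s * j)).map fun x => ‖x‖).sum := norm_multiset_sum_le _
    _ = (Multiset.card S : ℝ) := by
        rw [Multiset.map_map]
        have h2 : (S.map ((fun x => ‖x‖) ∘ fun s => ee n (s * j))) = S.map fun _ => (1 : ℝ) := by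
          apply Multiset.map_congr rfl
          intro s _
          show ‖ee n (s * j)‖ = 1
          rw [abs_ee]
        rw [h2, Multiset.map_const', Multiset.sum_replicate, nsmul_eq_mul, mul_one]

lemma card_eq_of_spec {A B : Multiset (ZMod n)}
    (h : Finset.univ.val.map (lam n B) = Finset.univ.val.map (lam n A)) :
    Multiset.card B = Multiset.card A := by
  have key : ∀ (S T : Multiset (ZMod n)),
      Finset.univ.val.map (lam n S) = Finset.univ.val.map (lam n T) →
      Multiset.card T ≤ Multiset.card S := by
    intro S T hST
    have hmem : (Multiset.card T : ℂ) ∈ Finset.univ.val.map (lam n S) := by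
      rw [hST, ← lam_zero n T]
      exact Multiset.mem_map_of_mem _ (Finset.mem_univ_val _)
    obtain ⟨j, _, hj⟩ := Multiset.mem_map.mp hmem
    have := lam_norm_le n S j
    rw [hj] at this
    simp only [map_natCast, Complex.norm_natCast] at this
    exact_mod_cast this
  exact le_antisymm (key A B h.symm) (key B A h)

end Iso

section Helpers
variable (n : ℕ) [NeZero n]

lemma uniq2 {x y : ZMod n} (h2x : (2 : ZMod n) * x = 0) (hx : x ≠ 0)
    (h2y : (2 : ZMod n) * y = 0) (hy : y ≠ 0) : x = y := by
  have key : ∀ w : ZMod n, (2 : ZMod n) * w = 0 → w ≠ 0 → 2 * w.val = n := by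
    intro w h2w hw
    have hdvd : n ∣ 2 * w.val := by
      rw [← ZMod.natCast_eq_zero_iff]
      push_cast [ZMod.natCast_zmod_val]
      exact h2w
    obtain ⟨k, hk⟩ := hdvd
    have hv0 : w.val ≠ 0 := fun h => hw ((ZMod.val_eq_zero w).mp h)
    have hvlt : w.val < n := ZMod.val_lt w
    have hk2 : n * k < n * 2 := by omega
    have hkpos : k ≠ 0 := by
      intro h; rw [h, mul_zero] at hk; omega
    have : k < 2 := Nat.lt_of_mul_lt_mul_left hk2
    have : k = 1 := by omega
    rw [this, mul_one] at hk
    omega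
  have hxv := key x h2x hx
  have hyv := key y h2y hy
  have : x.val = y.val := by omega
  rw [← ZMod.natCast_zmod_val x, ← ZMod.natCast_zmod_val y, this]

lemma two_mul_eq_zero_iff {τ : ZMod n} (hτ : (2 : ZMod n) * τ = 0) (hτ0 : τ ≠ 0)
    (x : ZMod n) : (2 : ZMod n) * x = 0 ↔ x = 0 ∨ x = τ := by
  constructor
  · intro h
    by_cases hx : x = 0
    · exact Or.inl hx
    · exact Or.inr (uniq2 n h hx hτ hτ0)
  · rintro (rfl | rfl)
    · rw [mul_zero]
    · exact hτ

lemma ncast_ne : (n : ℂ) ≠ 0 := Nat.cast_ne_zero.mpr (NeZero.ne n)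

lemma ite_n_inj {p q : Prop} [Decidable p] [Decidable q]
    (h : (if p then (n : ℂ) else 0) = if q then (n : ℂ) else 0) : p ↔ q := by
  split_ifs at h with h1 h2
  · tauto
  · exact absurd h (ncast_ne n)
  · exact absurd h.symm (ncast_ne n)
  · tauto

lemma ee_pow_r (x j : ZMod n) (r : ℕ) :
    ee n (x * j) ^ r = ee n (j * ((r : ZMod n) * x)) := by
  rw [← ee_nat_mul]
  congr 1
  ring

lemma ee_sub (x y : ZMod n) : ee n (x - y) = ee n x * (ee n y)⁻¹ := by
  have := ee_add n (x - y) y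
  rw [sub_add_cancel] at this
  field_simp [this, ee_ne_zero]
  exact this.symm

lemma pair_lam (a c j : ZMod n) :
    lam n {a, c} j = ee n (a * j) + ee n (c * j) := by
  rw [lam, Multiset.insert_eq_cons, Multiset.map_cons, Multiset.sum_cons,
    Multiset.map_singleton, Multiset.sum_singleton]

lemma lam_factor (a c j : ZMod n) :
    lam n {a, c} j = ee n (a * j) * (1 + ee n ((c - a) * j)) := by
  rw [pair_lam, mul_add, mul_one, ← ee_add]
  congr 2
  ring

lemma lam_zero_iff (a c j : ZMod n) :
    lam n {a, c} j = 0 ↔ ee n ((c - a) * j) = -1 := by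
  rw [lam_factor, mul_eq_zero]
  constructor
  · rintro (h | h)
    · exact absurd h (ee_ne_zero n _)
    · linear_combination h
  · intro h
    right
    rw [h]
    ring

open Finset in
lemma zle (a c : ZMod n) :
    2 * (univ.filter fun j : ZMod n => lam n {a, c} j = 0).card ≤ n := by
  classical
  set Z := univ.filter fun j : ZMod n => lam n {a, c} j = 0 with hZ
  rcases Z.eq_empty_or_nonempty with he | ⟨j₀, hj₀⟩
  · rw [he]
    simp
  · have hj₀' : ee n ((c - a) * j₀) = -1 := by
      rw [hZ, mem_filter] at hj₀
      exact (lam_zero_iff n a c j₀).mp hj₀.2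
    have hmaps : ∀ j ∈ Z, j - j₀ ∈ Zᶜ := by
      intro j hj
      rw [hZ, mem_filter] at hj
      have hj' := (lam_zero_iff n a c j).mp hj.2
      rw [mem_compl, hZ, mem_filter, not_and]
      intro _
      rw [lam_zero_iff]
      have : (c - a) * (j - j₀) = (c - a) * j - (c - a) * j₀ := by ring
      rw [this, ee_sub, hj', hj₀']
      norm_num
    have hinj : Set.InjOn (fun j => j - j₀) Z := fun x _ y _ hxy => by
      simpa using hxy
    have hcard := Finset.card_le_card_of_injOn _ hmaps hinj
    rw [Finset.card_compl] at hcard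
    have h1 : Z.card ≤ Fintype.card (ZMod n) := Finset.card_le_univ Z
    rw [ZMod.card] at *
    omega

open Finset in
lemma zstruct (a c : ZMod n)
    (hz : 2 * (univ.filter fun j : ZMod n => lam n {a, c} j = 0).card = n) :
    (2 : ZMod n) * (c - a) = 0 ∧ c - a ≠ 0 := by
  classical
  set Z := univ.filter fun j : ZMod n => lam n {a, c} j = 0 with hZ
  have hZne : Z.Nonempty := by
    rw [Finset.nonempty_iff_ne_empty]
    intro h
    rw [h] at hz
    simp at hz
    exact NeZero.ne n hz.symm
  obtain ⟨j₀, hj₀⟩ := hZne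
  have hj₀' : ee n ((c - a) * j₀) = -1 := by
    rw [hZ, mem_filter] at hj₀
    exact (lam_zero_iff n a c j₀).mp hj₀.2
  have hτ0 : c - a ≠ 0 := by
    intro h
    rw [h, zero_mul, ee_zero] at hj₀'
    norm_num at hj₀'
  refine ⟨?_, hτ0⟩
  have hmaps : ∀ j ∈ Z, j - j₀ ∈ Zᶜ := by
    intro j hj
    rw [hZ, mem_filter] at hj
    have hj' := (lam_zero_iff n a c j).mp hj.2
    rw [mem_compl, hZ, mem_filter, not_and]
    intro _
    rw [lam_zero_iff]
    have harg : (c - a) * (j - j₀) = (c - a) * j - (c - a) * j₀ := by ring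
    rw [harg, ee_sub, hj', hj₀']
    norm_num
  have himsub : Z.image (fun j => j - j₀) ⊆ Zᶜ := by
    intro x hx
    obtain ⟨j, hj, rfl⟩ := Finset.mem_image.mp hx
    exact hmaps j hj
  have hinj : Set.InjOn (fun j => j - j₀) Z := fun x _ y _ hxy => by simpa using hxy
  have hcardim : (Z.image (fun j => j - j₀)).card = Z.card := Finset.card_image_of_injOn hinj
  have hcompl : (Zᶜ : Finset (ZMod n)).card = Z.card := by
    rw [Finset.card_compl, ZMod.card]
    omega
  have him : Z.image (fun j => j - j₀) = Zᶜ :=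
    Finset.eq_of_subset_of_card_le himsub (by rw [hcardim, hcompl])
  have hall : ∀ j : ZMod n, ee n ((c - a) * j) = 1 ∨ ee n ((c - a) * j) = -1 := by
    intro j
    by_cases hj : j ∈ Z
    · right
      rw [hZ, mem_filter] at hj
      exact (lam_zero_iff n a c j).mp hj.2
    · left
      have : j ∈ Zᶜ := by rwa [mem_compl]
      rw [← him] at this
      obtain ⟨j', hj', hjj⟩ := Finset.mem_image.mp this
      rw [hZ, mem_filter] at hj'
      have hj'' := (lam_zero_iff n a c j').mp hj'.2
      rw [← hjj]
      have harg : (c - a) * (j' - j₀) = (c - a) * j' - (c - a) * j₀ := by ring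
      rw [harg, ee_sub, hj'', hj₀']
      norm_num
  have h1 := hall 1
  have hsq : ee n ((c - a) * 1) ^ 2 = 1 := by
    rcases h1 with h | h <;> rw [h] <;> ring
  rw [mul_one] at hsq
  have : ee n (((2 : ℕ) : ZMod n) * (c - a)) = 1 := by
    rw [ee_nat_mul]
    exact hsq
  have h2 : (((2 : ℕ) : ZMod n)) * (c - a) = 0 := (ee_eq_one_iff n).mp this
  rwa [Nat.cast_ofNat] at h2

open Finset in
lemma zcount_eq {A B : Multiset (ZMod n)}
    (hW : ∀ f : ℂ → ℂ, (∑ j : ZMod n, f (lam n B j)) = ∑ j : ZMod n, f (lam n A j)) :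
    (univ.filter fun j : ZMod n => lam n B j = 0).card
      = (univ.filter fun j : ZMod n => lam n A j = 0).card := by
  classical
  have := hW (fun z => if z = 0 then (1 : ℂ) else 0)
  rw [Finset.sum_boole, Finset.sum_boole] at this
  exact_mod_cast this

end Helpers

section Deg
variable (n : ℕ) [NeZero n]

lemma sq_eq_one_cases {w : ℂ} (h : w ^ 2 = 1) : w = 1 ∨ w = -1 := by
  have : (w - 1) * (w + 1) = 0 := by linear_combination h
  rcases mul_eq_zero.mp this with h1 | h1
  · left; linear_combination h1
  · right; linear_combination h1

lemma ite_sum_ne {P1 P2 : Prop} [Decidable P1] [Decidable P2] :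
    ((if P1 then (n : ℂ) else 0) + (if P2 then (n : ℂ) else 0) ≠ 0) ↔ (P1 ∨ P2) := by
  have hn := ncast_ne n
  constructor
  · intro h
    by_contra hno
    push_neg at hno
    rw [if_neg hno.1, if_neg hno.2, add_zero] at h
    exact h rfl
  · intro h hsum
    rcases h with h1 | h2
    · rw [if_pos h1] at hsum
      by_cases hp : P2
      · rw [if_pos hp] at hsum
        have h2n : (2 : ℂ) * n = 0 := by linear_combination hsum
        rcases mul_eq_zero.mp h2n with h | h
        · norm_num at h
        · exact hn h
      · rw [if_neg hp, add_zero] at hsum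
        exact hn hsum
    · rw [if_pos h2] at hsum
      by_cases hp : P1
      · rw [if_pos hp] at hsum
        have h2n : (2 : ℂ) * n = 0 := by linear_combination hsum
        rcases mul_eq_zero.mp h2n with h | h
        · norm_num at h
        · exact hn h
      · rw [if_neg hp, zero_add] at hsum
        exact hn hsum

lemma map_pair (f : ZMod n → ZMod n) (x y : ZMod n) :
    ({x, y} : Multiset (ZMod n)).map f = {f x, f y} := by
  rw [Multiset.insert_eq_cons, Multiset.map_cons, Multiset.map_singleton]
  rfl

open Finset in
lemma case2_deg (a c b d : ZMod n)
    (hτA : (2 : ZMod n) * (c - a) = 0) (hτA0 : c - a ≠ 0)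
    (hτB : (2 : ZMod n) * (d - b) = 0) (hτB0 : d - b ≠ 0)
    (hW : ∀ f : ℂ → ℂ,
      (∑ j : ZMod n, f (lam n {b, d} j)) = ∑ j : ZMod n, f (lam n {a, c} j)) :
    ∃ u : (ZMod n)ˣ,
      ({b, d} : Multiset (ZMod n)) = ({a, c} : Multiset (ZMod n)).map
        fun x => (u : ZMod n) * x := by
  classical
  set τ := c - a with hτdef
  have hs : d - b = τ := uniq2 n hτB hτB0 hτA hτA0
  have hca : c = a + τ := by rw [hτdef]; ring
  have hdb : d = b + τ := by rw [← hs]; ring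
  have hτj : ∀ j : ZMod n, ee n (τ * j) = 1 ∨ ee n (τ * j) = -1 := by
    intro j
    apply sq_eq_one_cases
    rw [ee_pow_r]
    have harg : j * ((2 : ZMod n) * τ) = 0 := by
      push_cast
      rw [hτA]
      ring
    rw [show ((2 : ℕ) : ZMod n) = (2 : ZMod n) by push_cast; rfl, harg, ee_zero]
  have hsum : ∀ (x : ZMod n) (r : ℕ),
      (∑ j : ZMod n, (fun z => if z = 0 then (0 : ℂ) else (z / 2) ^ r) (lam n {x, x + τ} j))
      = ((if (r : ZMod n) * x = 0 then (n : ℂ) else 0)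
        + (if (r : ZMod n) * x + τ = 0 then (n : ℂ) else 0)) / 2 := by
    intro x r
    have hpoint : ∀ j : ZMod n,
        (fun z => if z = 0 then (0 : ℂ) else (z / 2) ^ r) (lam n {x, x + τ} j)
        = (1 + ee n (τ * j)) / 2 * ee n (j * ((r : ZMod n) * x)) := by
      intro j
      have hfac := lam_factor n x (x + τ) j
      rw [add_sub_cancel_left] at hfac
      rcases hτj j with h1 | h1
      · have hlam : lam n {x, x + τ} j = 2 * ee n (x * j) := by
          rw [hfac, h1]; ring
        have hne : lam n {x, x + τ} j ≠ 0 := by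
          rw [hlam]
          exact mul_ne_zero two_ne_zero (ee_ne_zero n _)
        show (if lam n {x, x + τ} j = 0 then (0 : ℂ) else (lam n {x, x + τ} j / 2) ^ r)
          = (1 + ee n (τ * j)) / 2 * ee n (j * ((r : ZMod n) * x))
        rw [if_neg hne, hlam, h1]
        have h2 : (2 * ee n (x * j)) / 2 = ee n (x * j) := by ring
        rw [h2, ee_pow_r]
        norm_num
      · have hlam : lam n {x, x + τ} j = 0 := by
          rw [hfac, h1]; ring
        show (if lam n {x, x + τ} j = 0 then (0 : ℂ) else (lam n {x, x + τ} j / 2) ^ r)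
          = (1 + ee n (τ * j)) / 2 * ee n (j * ((r : ZMod n) * x))
        rw [if_pos hlam, h1]
        ring
    rw [Finset.sum_congr rfl fun j _ => hpoint j]
    have hexp : ∀ j : ZMod n, (1 + ee n (τ * j)) / 2 * ee n (j * ((r : ZMod n) * x))
        = (ee n (j * ((r : ZMod n) * x)) + ee n (j * ((r : ZMod n) * x + τ))) / 2 := by
      intro j
      have : ee n (j * ((r : ZMod n) * x + τ)) = ee n (τ * j) * ee n (j * ((r : ZMod n) * x)) := by
        rw [← ee_add]
        congr 1
        ring
      rw [this]
      ring
    rw [Finset.sum_congr rfl fun j _ => hexp j, ← Finset.sum_div, Finset.sum_add_distrib,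
      sum_ee, sum_ee]
  have hnegτ : ∀ x : ZMod n, (x + τ = 0 ↔ x = τ) := by
    intro x
    have hττ : τ + τ = 0 := by linear_combination hτA
    constructor
    · intro h; linear_combination h - hττ
    · intro h; rw [h]; exact hττ
  have hr : ∀ r : ℕ, (((r : ZMod n) * b = 0 ∨ (r : ZMod n) * b + τ = 0)
      ↔ ((r : ZMod n) * a = 0 ∨ (r : ZMod n) * a + τ = 0)) := by
    intro r
    have hinv := hW (fun z => if z = 0 then (0 : ℂ) else (z / 2) ^ r)
    have hsA := hsum a r
    have hsB := hsum b r
    rw [← hca] at hsA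
    rw [← hdb] at hsB
    rw [hsA, hsB] at hinv
    have heq2 : ((if (r : ZMod n) * b = 0 then (n : ℂ) else 0)
        + (if (r : ZMod n) * b + τ = 0 then (n : ℂ) else 0))
        = ((if (r : ZMod n) * a = 0 then (n : ℂ) else 0)
        + (if (r : ZMod n) * a + τ = 0 then (n : ℂ) else 0)) := by
      field_simp at hinv
      exact hinv
    rw [← ite_sum_ne n, ← ite_sum_ne n, heq2]
  have hiff : ∀ r : ZMod n, r * ((2 : ZMod n) * a) = 0 ↔ r * ((2 : ZMod n) * b) = 0 := by
    intro r
    have hrr := hr r.val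
    rw [ZMod.natCast_zmod_val] at hrr
    have hcv : ∀ x : ZMod n, (r * ((2 : ZMod n) * x) = 0 ↔ (r * x = 0 ∨ r * x + τ = 0)) := by
      intro x
      have h1 : r * ((2 : ZMod n) * x) = (2 : ZMod n) * (r * x) := by ring
      rw [h1, two_mul_eq_zero_iff n hτA hτA0, hnegτ]
    rw [hcv, hcv]
    exact hrr.symm
  obtain ⟨u, hu⟩ := endgame1 n hiff
  have huτ : (u : ZMod n) * τ = τ := by
    have h2 : (2 : ZMod n) * ((u : ZMod n) * τ) = 0 := by
      have : (2 : ZMod n) * ((u : ZMod n) * τ) = (u : ZMod n) * ((2 : ZMod n) * τ) := by ring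
      rw [this, hτA, mul_zero]
    have hne : (u : ZMod n) * τ ≠ 0 := by
      intro h
      have : τ = ((u⁻¹ : (ZMod n)ˣ) : ZMod n) * ((u : ZMod n) * τ) := by
        rw [← mul_assoc, ← Units.val_mul, inv_mul_cancel, Units.val_one, one_mul]
      rw [h, mul_zero] at this
      exact hτA0 this
    exact uniq2 n h2 hne hτA hτA0
  have hb2 : (2 : ZMod n) * (b - (u : ZMod n) * a) = 0 := by linear_combination hu
  have hττ : τ + τ = 0 := by linear_combination hτA
  rcases (two_mul_eq_zero_iff n hτA hτA0 (b - (u : ZMod n) * a)).mp hb2 with h0 | hτeq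
  · have hbu : b = (u : ZMod n) * a := by linear_combination h0
    have hdu : d = (u : ZMod n) * c := by
      rw [hdb, hbu, hca]
      rw [mul_add, huτ]
    refine ⟨u, ?_⟩
    rw [map_pair, hbu, hdu]
  · have hbu : b = (u : ZMod n) * c := by
      rw [hca, mul_add, huτ]
      linear_combination hτeq
    have hdu : d = (u : ZMod n) * a := by
      rw [hdb, hbu, hca, mul_add, huτ]
      linear_combination hττ
    refine ⟨u, ?_⟩
    rw [map_pair, hbu, hdu, Multiset.pair_comm]

end Deg

section MainCase
variable (n : ℕ) [NeZero n]

noncomputable def mulHom2 (a c : ZMod n) : ZMod n × ZMod n →+ ZMod n where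
  toFun p := p.1 * a + p.2 * c
  map_zero' := by simp
  map_add' p q := by
    simp only [Prod.fst_add, Prod.snd_add]
    ring

open Finset in
lemma case2_main (a c b d : ZMod n)
    (hzeq : (univ.filter fun j : ZMod n => lam n {b, d} j = 0).card
      = (univ.filter fun j : ZMod n => lam n {a, c} j = 0).card)
    (hzlt : 2 * (univ.filter fun j : ZMod n => lam n {a, c} j = 0).card < n)
    (hW : ∀ f : ℂ → ℂ,
      (∑ j : ZMod n, f (lam n {b, d} j)) = ∑ j : ZMod n, f (lam n {a, c} j)) :
    ∃ u : (ZMod n)ˣ,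
      ({b, d} : Multiset (ZMod n)) = ({a, c} : Multiset (ZMod n)).map
        fun x => (u : ZMod n) * x := by
  classical
  have hpair : ∀ x y j : ZMod n, lam n {x, y} j ≠ 0 →
      pairOf (lam n {x, y} j) = {ee n (x * j), ee n (y * j)} := by
    intro x y j hne
    rw [pair_lam] at hne ⊢
    exact pairOf_eq (abs_ee n _) (abs_ee n _) hne
  have hprod : ∀ x y j : ZMod n, lam n {x, y} j ≠ 0 →
      (pairOf (lam n {x, y} j)).prod = ee n ((x + y) * j) := by
    intro x y j hne
    rw [hpair x y j hne, Multiset.insert_eq_cons, Multiset.prod_cons, Multiset.prod_singleton,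
      ← ee_add]
    congr 1
    ring
  -- the sum of the sigma-th power of the product over all j, via the pairOf function
  have hSsum : ∀ (x y : ZMod n) (σ : ℕ),
      (∑ j : ZMod n, (fun z => if z = 0 then (0 : ℂ) else (pairOf z).prod ^ σ) (lam n {x, y} j))
      = (if (σ : ZMod n) * (x + y) = 0 then (n : ℂ) else 0)
        - ∑ j ∈ univ.filter (fun j : ZMod n => lam n {x, y} j = 0),
            ee n (j * ((σ : ZMod n) * (x + y))) := by
    intro x y σ
    have hpoint : ∀ j : ZMod n,
        (fun z => if z = 0 then (0 : ℂ) else (pairOf z).prod ^ σ) (lam n {x, y} j)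
        = ee n (j * ((σ : ZMod n) * (x + y)))
          - (if lam n {x, y} j = 0 then ee n (j * ((σ : ZMod n) * (x + y))) else 0) := by
      intro j
      by_cases hne : lam n {x, y} j = 0
      · show (if lam n {x, y} j = 0 then (0 : ℂ) else _) = _
        rw [if_pos hne, if_pos hne]
        ring
      · show (if lam n {x, y} j = 0 then (0 : ℂ) else (pairOf (lam n {x, y} j)).prod ^ σ) = _
        rw [if_neg hne, if_neg hne, hprod x y j hne, sub_zero, ee_pow_r]
    rw [Finset.sum_congr rfl fun j _ => hpoint j, Finset.sum_sub_distrib, sum_ee,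
      ← Finset.sum_filter]
  have hnormZ : ∀ (x y : ZMod n) (σ : ℕ),
      ‖∑ j ∈ univ.filter (fun j : ZMod n => lam n {x, y} j = 0),
          ee n (j * ((σ : ZMod n) * (x + y)))‖
        ≤ ((univ.filter fun j : ZMod n => lam n {x, y} j = 0).card : ℝ) := by
    intro x y σ
    calc ‖∑ j ∈ univ.filter (fun j : ZMod n => lam n {x, y} j = 0),
          ee n (j * ((σ : ZMod n) * (x + y)))‖
        ≤ ∑ j ∈ univ.filter (fun j : ZMod n => lam n {x, y} j = 0),
            ‖ee n (j * ((σ : ZMod n) * (x + y)))‖ := norm_sum_le _ _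
      _ = ∑ _j ∈ univ.filter (fun j : ZMod n => lam n {x, y} j = 0), (1 : ℝ) := by
          apply Finset.sum_congr rfl
          intro j _
          rw [abs_ee]
      _ = _ := by rw [Finset.sum_const, nsmul_eq_mul, mul_one]
  -- Step A : the gcd-type invariant for a+c versus b+d
  have hG : ∀ σ : ℕ, ((σ : ZMod n) * (a + c) = 0 ↔ (σ : ZMod n) * (b + d) = 0) := by
    intro σ
    have hinv := hW (fun z => if z = 0 then (0 : ℂ) else (pairOf z).prod ^ σ)
    rw [hSsum a c σ, hSsum b d σ] at hinv
    by_contra hne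
    rw [iff_iff_implies_and_implies, not_and_or] at hne
    have hnA := hnormZ a c σ
    have hnB := hnormZ b d σ
    rw [hzeq] at hnB
    set SA := ∑ j ∈ univ.filter (fun j : ZMod n => lam n {a, c} j = 0),
        ee n (j * ((σ : ZMod n) * (a + c))) with hSA
    set SB := ∑ j ∈ univ.filter (fun j : ZMod n => lam n {b, d} j = 0),
        ee n (j * ((σ : ZMod n) * (b + d))) with hSB
    set zA := (univ.filter fun j : ZMod n => lam n {a, c} j = 0).card with hzA
    rcases hne with hne | hne
    · push_neg at hne
      rw [if_pos hne.1] at hinv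
      rw [if_neg hne.2] at hinv
      -- 0 - SB = n - SA, so n = SA - SB
      have hkey : (n : ℂ) = SA - SB := by linear_combination -hinv
      have := congrArg norm hkey
      rw [Complex.norm_natCast] at this
      have hle : ‖SA - SB‖ ≤ (zA : ℝ) + zA := le_trans (norm_sub_le _ _) (by
        exact add_le_add hnA hnB)
      rw [← this] at hle
      have : (n : ℝ) ≤ 2 * zA := by linarith
      have h2 : (2 * zA : ℝ) < n := by exact_mod_cast hzlt
      linarith
    · push_neg at hne
      rw [if_pos hne.1, if_neg hne.2] at hinv
      have hkey : (n : ℂ) = SB - SA := by linear_combination hinv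
      have := congrArg norm hkey
      rw [Complex.norm_natCast] at this
      have hle : ‖SB - SA‖ ≤ (zA : ℝ) + zA := le_trans (norm_sub_le _ _) (by
        exact add_le_add hnB hnA)
      rw [← this] at hle
      have : (n : ℝ) ≤ 2 * zA := by linarith
      have h2 : (2 * zA : ℝ) < n := by exact_mod_cast hzlt
      linarith
  -- the total exponential sum for a pair
  have hT : ∀ (x y : ZMod n) (k l : ℕ),
      (∑ j : ZMod n, (ee n (x * j) ^ k * ee n (y * j) ^ l
        + ee n (y * j) ^ k * ee n (x * j) ^ l))
      = (if (k : ZMod n) * x + (l : ZMod n) * y = 0 then (n : ℂ) else 0)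
        + (if (k : ZMod n) * y + (l : ZMod n) * x = 0 then (n : ℂ) else 0) := by
    intro x y k l
    have hpoint : ∀ j : ZMod n, ee n (x * j) ^ k * ee n (y * j) ^ l
        + ee n (y * j) ^ k * ee n (x * j) ^ l
        = ee n (j * ((k : ZMod n) * x + (l : ZMod n) * y))
          + ee n (j * ((k : ZMod n) * y + (l : ZMod n) * x)) := by
      intro j
      rw [ee_pow_r, ee_pow_r, ee_pow_r, ee_pow_r, ← ee_add, ← ee_add]
      congr 2 <;> ring
    rw [Finset.sum_congr rfl fun j _ => hpoint j, Finset.sum_add_distrib, sum_ee, sum_ee]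
  -- the nonzero part equals the fkl-sum
  have hTnz : ∀ (x y : ZMod n) (k l : ℕ),
      (∑ j ∈ univ.filter (fun j : ZMod n => ¬ lam n {x, y} j = 0),
        (ee n (x * j) ^ k * ee n (y * j) ^ l + ee n (y * j) ^ k * ee n (x * j) ^ l))
      = ∑ j : ZMod n, (fun z => if z = 0 then (0 : ℂ) else
          ((pairOf z).map (· ^ k)).sum * ((pairOf z).map (· ^ l)).sum
            - ((pairOf z).map (· ^ (k + l))).sum) (lam n {x, y} j) := by
    intro x y k l
    rw [← Finset.sum_filter_add_sum_filter_not univ (fun j : ZMod n => lam n {x, y} j = 0)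
      (fun j => (fun z => if z = 0 then (0 : ℂ) else
          ((pairOf z).map (· ^ k)).sum * ((pairOf z).map (· ^ l)).sum
            - ((pairOf z).map (· ^ (k + l))).sum) (lam n {x, y} j))]
    have hzero : (∑ j ∈ univ.filter (fun j : ZMod n => lam n {x, y} j = 0),
        (fun z => if z = 0 then (0 : ℂ) else
          ((pairOf z).map (· ^ k)).sum * ((pairOf z).map (· ^ l)).sum
            - ((pairOf z).map (· ^ (k + l))).sum) (lam n {x, y} j)) = 0 := by
      apply Finset.sum_eq_zero
      intro j hj
      rw [mem_filter] at hj
      show (if lam n {x, y} j = 0 then (0 : ℂ) else _) = 0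
      rw [if_pos hj.2]
    rw [hzero, zero_add]
    apply Finset.sum_congr rfl
    intro j hj
    rw [mem_filter] at hj
    have hne := hj.2
    show _ = (if lam n {x, y} j = 0 then (0 : ℂ) else _)
    rw [if_neg hne, hpair x y j hne]
    rw [Multiset.insert_eq_cons, Multiset.map_cons, Multiset.map_singleton,
      Multiset.sum_cons, Multiset.sum_singleton, Multiset.map_cons, Multiset.map_singleton,
      Multiset.sum_cons, Multiset.sum_singleton, Multiset.map_cons, Multiset.map_singleton,
      Multiset.sum_cons, Multiset.sum_singleton]
    ring
  -- the zero part
  have hTz : ∀ (x y : ZMod n) (k l : ℕ),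
      (∑ j ∈ univ.filter (fun j : ZMod n => lam n {x, y} j = 0),
        (ee n (x * j) ^ k * ee n (y * j) ^ l + ee n (y * j) ^ k * ee n (x * j) ^ l))
      = ((-1 : ℂ) ^ l + (-1 : ℂ) ^ k) *
          ∑ j ∈ univ.filter (fun j : ZMod n => lam n {x, y} j = 0),
            ee n (x * j) ^ (k + l) := by
    intro x y k l
    rw [Finset.mul_sum]
    apply Finset.sum_congr rfl
    intro j hj
    rw [mem_filter] at hj
    have hyx : ee n (y * j) = -ee n (x * j) := by
      have := hj.2
      rw [pair_lam] at this
      linear_combination this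
    rw [hyx, neg_pow, neg_pow, pow_add]
    ring
  -- main invariant hI
  have hI : ∀ k l : ℕ,
      ((if (k : ZMod n) * b + (l : ZMod n) * d = 0 then (n : ℂ) else 0)
        + (if (k : ZMod n) * d + (l : ZMod n) * b = 0 then (n : ℂ) else 0))
      = ((if (k : ZMod n) * a + (l : ZMod n) * c = 0 then (n : ℂ) else 0)
        + (if (k : ZMod n) * c + (l : ZMod n) * a = 0 then (n : ℂ) else 0)) := by
    intro k l
    rw [← hT a c k l, ← hT b d k l]
    rw [← Finset.sum_filter_add_sum_filter_not univ (fun j : ZMod n => lam n {b, d} j = 0)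
        (fun j => ee n (b * j) ^ k * ee n (d * j) ^ l + ee n (d * j) ^ k * ee n (b * j) ^ l),
      ← Finset.sum_filter_add_sum_filter_not univ (fun j : ZMod n => lam n {a, c} j = 0)
        (fun j => ee n (a * j) ^ k * ee n (c * j) ^ l + ee n (c * j) ^ k * ee n (a * j) ^ l)]
    have hfkl := hW (fun z => if z = 0 then (0 : ℂ) else
          ((pairOf z).map (· ^ k)).sum * ((pairOf z).map (· ^ l)).sum
            - ((pairOf z).map (· ^ (k + l))).sum)
    rw [hTz a c k l, hTz b d k l, hTnz a c k l, hTnz b d k l, hfkl]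
    congr 1
    -- remaining : equality of the Z-parts
    rcases Nat.even_or_odd (k + l) with heven | hodd
    · obtain ⟨σ, hσ2⟩ := heven
      have hsq : ∀ (x y : ZMod n), ∀ j ∈ univ.filter (fun j : ZMod n => lam n {x, y} j = 0),
          ee n (x * j) ^ (k + l) = (-1 : ℂ) ^ σ * ee n (j * ((σ : ZMod n) * (x + y))) := by
        intro x y j hj
        rw [mem_filter] at hj
        have hyx : ee n (y * j) = -ee n (x * j) := by
          have := hj.2
          rw [pair_lam] at this
          linear_combination this
        have hsq2 : ee n (x * j) ^ 2 = -ee n ((x + y) * j) := by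
          have : ee n ((x + y) * j) = ee n (x * j) * ee n (y * j) := by
            rw [← ee_add]; congr 1; ring
          rw [this, hyx]
          ring
        calc ee n (x * j) ^ (k + l) = (ee n (x * j) ^ 2) ^ σ := by
              rw [← pow_mul, hσ2, two_mul]
          _ = (-1 : ℂ) ^ σ * (ee n ((x + y) * j)) ^ σ := by rw [hsq2, neg_pow]
          _ = (-1 : ℂ) ^ σ * ee n (j * ((σ : ZMod n) * (x + y))) := by rw [ee_pow_r]
      rw [Finset.sum_congr rfl (hsq a c), Finset.sum_congr rfl (hsq b d)]
      rw [← Finset.mul_sum, ← Finset.mul_sum]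
      -- suffices : the Z-sums SA and SB are equal
      have hZeq : (∑ j ∈ univ.filter (fun j : ZMod n => lam n {a, c} j = 0),
            ee n (j * ((σ : ZMod n) * (a + c))))
          = ∑ j ∈ univ.filter (fun j : ZMod n => lam n {b, d} j = 0),
            ee n (j * ((σ : ZMod n) * (b + d))) := by
        have hinv := hW (fun z => if z = 0 then (0 : ℂ) else (pairOf z).prod ^ σ)
        rw [hSsum a c σ, hSsum b d σ] at hinv
        have hGσ := hG σ
        by_cases hc : (σ : ZMod n) * (a + c) = 0
        · rw [if_pos hc, if_pos (hGσ.mp hc)] at hinv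
          linear_combination hinv
        · rw [if_neg hc, if_neg (fun hh => hc (hGσ.mpr hh))] at hinv
          linear_combination hinv
      rw [hZeq]
    · have hpm : (-1 : ℂ) ^ l + (-1 : ℂ) ^ k = 0 := by
        rcases Nat.even_or_odd k with hk | hk
        · have hl : Odd l := by
            rcases Nat.even_or_odd l with hl | hl
            · exact absurd (hk.add hl) (Nat.not_even_iff_odd.mpr hodd)
            · exact hl
          rw [hk.neg_one_pow, hl.neg_one_pow]
          ring
        · have hl : Even l := by
            rcases Nat.even_or_odd l with hl | hl
            · exact hl
            · exact absurd (Odd.add_odd hk hl) (Nat.not_even_iff_odd.mpr hodd)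
          rw [hk.neg_one_pow, hl.neg_one_pow]
          ring
      rw [hpm, zero_mul, zero_mul]
  -- convert to ℕ indicators and apply the subgroup lemma
  have hconv : ∀ (P1 P2 : Prop) [Decidable P1] [Decidable P2],
      (if P1 then (n : ℂ) else 0) + (if P2 then (n : ℂ) else 0)
      = n * ((((if P1 then 1 else 0) + (if P2 then 1 else 0) : ℕ) : ℂ)) := by
    intro P1 P2 _ _
    split_ifs <;> push_cast <;> ring
  have hind : ∀ p : ZMod n × ZMod n,
      ((if p ∈ (mulHom2 n a c).ker then 1 else 0)
        + (if p ∈ (mulHom2 n c a).ker then 1 else 0) : ℕ)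
      = (if p ∈ (mulHom2 n b d).ker then 1 else 0)
        + (if p ∈ (mulHom2 n d b).ker then 1 else 0) := by
    rintro ⟨k, l⟩
    have hIkl := hI k.val l.val
    rw [ZMod.natCast_zmod_val, ZMod.natCast_zmod_val] at hIkl
    rw [hconv, hconv] at hIkl
    have hnat := mul_left_cancel₀ (ncast_ne n) hIkl
    have hnat2 : ((if k * b + l * d = 0 then 1 else 0) + (if k * d + l * b = 0 then 1 else 0) : ℕ)
        = (if k * a + l * c = 0 then 1 else 0) + (if k * c + l * a = 0 then 1 else 0) := by
      exact_mod_cast hnat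
    have hm1 : ((k, l) ∈ (mulHom2 n a c).ker) = (k * a + l * c = 0) := by
      simp [AddMonoidHom.mem_ker, mulHom2]
    have hm2 : ((k, l) ∈ (mulHom2 n c a).ker) = (k * c + l * a = 0) := by
      simp [AddMonoidHom.mem_ker, mulHom2]
    have hm3 : ((k, l) ∈ (mulHom2 n b d).ker) = (k * b + l * d = 0) := by
      simp [AddMonoidHom.mem_ker, mulHom2]
    have hm4 : ((k, l) ∈ (mulHom2 n d b).ker) = (k * d + l * b = 0) := by
      simp [AddMonoidHom.mem_ker, mulHom2]
    simp only [hm1, hm2, hm3, hm4]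
    exact hnat2.symm
  rcases indicator_lemma (mulHom2 n a c).ker (mulHom2 n c a).ker
      (mulHom2 n b d).ker (mulHom2 n d b).ker hind with ⟨hPR, _⟩ | ⟨hPS, _⟩
  · have hiff2 : ∀ k l : ZMod n, k * a + l * c = 0 ↔ k * b + l * d = 0 := by
      intro k l
      have := SetLike.ext_iff.mp hPR (k, l)
      simpa [AddMonoidHom.mem_ker, mulHom2] using this
    obtain ⟨u, hb, hd⟩ := endgame n hiff2
    exact ⟨u, by rw [map_pair, hb, hd]⟩
  · have hiff2 : ∀ k l : ZMod n, k * a + l * c = 0 ↔ k * d + l * b = 0 := by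
      intro k l
      have := SetLike.ext_iff.mp hPS (k, l)
      simpa [AddMonoidHom.mem_ker, mulHom2] using this
    obtain ⟨u, hdd, hbb⟩ := endgame n hiff2
    exact ⟨u, by rw [map_pair, hbb, hdd, Multiset.pair_comm]⟩

end MainCase

section Assemble
variable (n : ℕ) [NeZero n]

open Finset in
lemma spec_to_unit (A B : Multiset (ZMod n)) (hA : Multiset.card A ≤ 2)
    (h : Finset.univ.val.map (lam n B) = Finset.univ.val.map (lam n A)) :
    ∃ u : (ZMod n)ˣ, B = A.map fun x => (u : ZMod n) * x := by
  classical
  have hcard := card_eq_of_spec n h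
  have hW : ∀ f : ℂ → ℂ, (∑ j : ZMod n, f (lam n B j)) = ∑ j : ZMod n, f (lam n A j) :=
    fun f => sum_invariant n h f
  have hc3 : Multiset.card A = 0 ∨ Multiset.card A = 1 ∨ Multiset.card A = 2 := by omega
  rcases hc3 with h0 | h1 | h2
  · have hA0 := Multiset.card_eq_zero.mp h0
    have hB0 := Multiset.card_eq_zero.mp (hcard.trans h0)
    exact ⟨1, by rw [hA0, hB0]; simp⟩
  · obtain ⟨a, rfl⟩ := Multiset.card_eq_one.mp h1
    obtain ⟨b, rfl⟩ := Multiset.card_eq_one.mp (hcard.trans h1)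
    have hiff : ∀ r : ZMod n, r * a = 0 ↔ r * b = 0 := by
      intro r
      have hrW := hW (fun z : ℂ => z ^ r.val)
      have hside : ∀ x : ZMod n, (∑ j : ZMod n, (fun z : ℂ => z ^ r.val) (lam n {x} j))
          = if r * x = 0 then (n : ℂ) else 0 := by
        intro x
        have hpt : ∀ j : ZMod n, (fun z : ℂ => z ^ r.val) (lam n {x} j)
            = ee n (j * (r * x)) := by
          intro j
          show lam n {x} j ^ r.val = _
          rw [lam, Multiset.map_singleton, Multiset.sum_singleton, ee_pow_r,
            ZMod.natCast_zmod_val]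
        rw [Finset.sum_congr rfl fun j _ => hpt j, sum_ee]
      rw [hside a, hside b] at hrW
      exact (ite_n_inj n hrW).symm
    obtain ⟨u, hu⟩ := endgame1 n hiff
    exact ⟨u, by rw [Multiset.map_singleton, hu]⟩
  · obtain ⟨a, c, rfl⟩ := Multiset.card_eq_two.mp h2
    obtain ⟨b, d, rfl⟩ := Multiset.card_eq_two.mp (hcard.trans h2)
    have hz := zcount_eq n hW
    have hle := zle n a c
    rcases lt_or_eq_of_le hle with hlt | heq
    · exact case2_main n a c b d hz hlt hW
    · have hA2 := zstruct n a c heq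
      have hB2 := zstruct n b d (by rw [hz]; exact heq)
      exact case2_deg n a c b d hA2.1 hA2.2 hB2.1 hB2.2 hW

end Assemble

/-- Circulant multigraphs whose connection multiset has at most two elements
(counted with multiplicity) are characterized by their spectra: any circulant
multigraph `Cay(ℤ/nℤ, B)` isospectral to `Cay(ℤ/nℤ, A)` with
`|A| ≤ 2` is isomorphic to it. -/
theorem isospectral_implies_isomorphic_of_card_le_two
    (n : ℕ) [NeZero n] (A : Multiset (ZMod n)) (hA0 : (0 : ZMod n) ∉ A)
    (hA : Multiset.card A ≤ 2) :
    ∀ B : Multiset (ZMod n), (0 : ZMod n) ∉ B →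
      (circulantAdj n B).charpoly = (circulantAdj n A).charpoly →
      ∃ e : Equiv.Perm (ZMod n),
        circulantAdj n B = (circulantAdj n A).submatrix e e := by
  intro B _ hchar
  obtain ⟨u, hu⟩ := spec_to_unit n A B hA (spec_eq n hchar)
  exact iso_of_unit n A B u hu
end

section
/- Let p be an odd prime, let r ≥ 2 be an integer, let n = 2^r·p, and let ω ∈ ℂ be a primitive n-th root of unity. For x ∈ ℤ, set λ_x = Σ_{i=0}^{(p−1)/2} ω^{x(1 + i·2^r)} + Σ_{j=1}^{(p−1)/2} ω^{x(1 + j·2^r + n/2)} and μ_x = Σ_{i=0}^{(p−1)/2} ω^{x(1 − i·2^r)} + Σ_{j=1}^{(p−1)/2} ω^{x(1 − j·2^r + n/2)}. Then λ_x = μ_{x + n/2} if gcd(x, n) = 2^m for some integer m > 0, and λ_x = μ_x otherwise. In particular, the multisets {λ_x : x ∈ ℤ/nℤ} and {μ_x : x ∈ ℤ/nℤ} are equal. -/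
/-- `λ_x = Σ_{i=0}^{(p−1)/2} ω^{x(1 + i·2^r)} + Σ_{j=1}^{(p−1)/2} ω^{x(1 + j·2^r + n/2)}`. -/
noncomputable def lamEig (p r n : ℕ) (ω : ℂ) (x : ℤ) : ℂ :=
  (∑ i ∈ Finset.range ((p - 1) / 2 + 1), ω ^ (x * (1 + (i : ℤ) * 2 ^ r))) +
  ∑ j ∈ Finset.Icc 1 ((p - 1) / 2), ω ^ (x * (1 + (j : ℤ) * 2 ^ r + ((n / 2 : ℕ) : ℤ)))

/-- `μ_x = Σ_{i=0}^{(p−1)/2} ω^{x(1 − i·2^r)} + Σ_{j=1}^{(p−1)/2} ω^{x(1 − j·2^r + n/2)}`. -/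
noncomputable def muEig (p r n : ℕ) (ω : ℂ) (x : ℤ) : ℂ :=
  (∑ i ∈ Finset.range ((p - 1) / 2 + 1), ω ^ (x * (1 - (i : ℤ) * 2 ^ r))) +
  ∑ j ∈ Finset.Icc 1 ((p - 1) / 2), ω ^ (x * (1 - (j : ℤ) * 2 ^ r + ((n / 2 : ℕ) : ℤ)))

private lemma range_succ_eq_insert (k : ℕ) :
    Finset.range (k + 1) = insert 0 (Finset.Icc 1 k) := by
  ext m; simp only [Finset.mem_range, Finset.mem_insert, Finset.mem_Icc]; omega

/-- The common shape of both eigenvalue sums. -/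
private lemma eig_formula (ω : ℂ) (hω0 : ω ≠ 0) (N : ℤ) (hN : ω ^ N = -1)
    (x a : ℤ) (k : ℕ) :
    ((∑ i ∈ Finset.range (k + 1), ω ^ (x * (1 + (i : ℤ) * a))) +
      ∑ j ∈ Finset.Icc 1 k, ω ^ (x * (1 + (j : ℤ) * a + N))) =
    ω ^ x * ((∑ i ∈ Finset.range (k + 1), (ω ^ (x * a)) ^ i) +
      (-1 : ℂ) ^ x * ((∑ i ∈ Finset.range (k + 1), (ω ^ (x * a)) ^ i) - 1)) := by
  have h1 : ∀ i : ℕ, ω ^ (x * (1 + (i : ℤ) * a)) = ω ^ x * (ω ^ (x * a)) ^ i := by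
    intro i
    rw [show x * (1 + (i : ℤ) * a) = x + x * a * (i : ℤ) by ring, zpow_add₀ hω0,
      zpow_mul, zpow_natCast]
  have h2 : ∀ j : ℕ, ω ^ (x * (1 + (j : ℤ) * a + N)) =
      ω ^ x * (ω ^ (x * a)) ^ j * (-1 : ℂ) ^ x := by
    intro j
    rw [show x * (1 + (j : ℤ) * a + N) = x + x * a * (j : ℤ) + N * x by ring,
      zpow_add₀ hω0, zpow_add₀ hω0, zpow_mul ω (x * a), zpow_natCast,
      zpow_mul ω N, hN]
  rw [Finset.sum_congr rfl fun i _ => h1 i, Finset.sum_congr rfl fun j _ => h2 j,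
    ← Finset.sum_mul, ← Finset.mul_sum, ← Finset.mul_sum]
  have hsplit : ∑ i ∈ Finset.range (k + 1), (ω ^ (x * a)) ^ i
      = 1 + ∑ i ∈ Finset.Icc 1 k, (ω ^ (x * a)) ^ i := by
    rw [range_succ_eq_insert, Finset.sum_insert (by simp), pow_zero]
  rw [hsplit]; ring

private lemma S_add_S_inv (u : ℂ) (k : ℕ) (hu0 : u ≠ 0) (hu1 : u ≠ 1)
    (hup : u ^ (2 * k + 1) = 1) :
    (∑ i ∈ Finset.range (k + 1), u ^ i) + ∑ i ∈ Finset.range (k + 1), u⁻¹ ^ i = 1 := by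
  set s := ∑ i ∈ Finset.range (k + 1), u ^ i with hs
  set t := ∑ i ∈ Finset.range (k + 1), u⁻¹ ^ i with ht
  have h1 : s * (u - 1) = u ^ (k + 1) - 1 := geom_sum_mul u (k + 1)
  have h2 : t * u ^ k = s := by
    rw [ht, Finset.sum_mul]
    calc ∑ i ∈ Finset.range (k + 1), u⁻¹ ^ i * u ^ k
        = ∑ i ∈ Finset.range (k + 1), u ^ (k - i) := by
          refine Finset.sum_congr rfl fun i hi => ?_
          have hik : i ≤ k := by simpa [Nat.lt_succ_iff] using hi
          rw [inv_pow, inv_mul_eq_iff_eq_mul₀ (pow_ne_zero _ hu0), ← pow_add,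
            Nat.add_sub_cancel' hik]
      _ = s := by simpa using Finset.sum_range_reflect (fun i => u ^ i) (k + 1)
  have key : (u - 1) * u ^ k * (s + t - 1) = 0 := by
    linear_combination (u ^ k + 1) * h1 + (u - 1) * h2 + hup
  rcases mul_eq_zero.mp key with h | h
  · rcases mul_eq_zero.mp h with h' | h'
    · exact absurd (sub_eq_zero.mp h') hu1
    · exact absurd h' (pow_ne_zero _ hu0)
  · linear_combination h

/-- The permutation used to match the two spectra. -/
def sigmaFun (p n x : ℕ) : ℕ := if 2 ∣ x ∧ ¬ p ∣ x then (x + n / 2) % n else x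

/-- For `n = 2^r·p` (`p` an odd prime, `r ≥ 2`) and `ω` a primitive `n`-th root of
unity: `λ_x = μ_{x+n/2}` when `gcd(x, n) = 2^m` for some `m > 0`, and `λ_x = μ_x`
otherwise; in particular the multisets `{λ_x : x ∈ ℤ/nℤ}` and `{μ_x : x ∈ ℤ/nℤ}`
coincide. -/
theorem lam_eq_mu (p r : ℕ) (hp : p.Prime) (hodd : Odd p) (hr : 2 ≤ r)
    (n : ℕ) (hn : n = 2 ^ r * p) (ω : ℂ) (hω : IsPrimitiveRoot ω n) :
    (∀ x : ℤ,
      ((∃ m : ℕ, 0 < m ∧ Int.gcd x n = 2 ^ m) →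
        lamEig p r n ω x = muEig p r n ω (x + ((n / 2 : ℕ) : ℤ))) ∧
      (¬ (∃ m : ℕ, 0 < m ∧ Int.gcd x n = 2 ^ m) →
        lamEig p r n ω x = muEig p r n ω x)) ∧
    (Multiset.range n).map (fun x => lamEig p r n ω (x : ℤ)) =
      (Multiset.range n).map (fun x => muEig p r n ω (x : ℤ)) := by
  classical
  have hppos : 0 < p := hp.pos
  have hp2 : p ≠ 2 := by rintro rfl; simp [Nat.odd_iff] at hodd
  have hp3 : 3 ≤ p := by have := hp.two_le; omega
  set k := (p - 1) / 2 with hk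
  have hpk : p = 2 * k + 1 := by obtain ⟨t, ht⟩ := hodd; omega
  have hnpos : 0 < n := by rw [hn]; positivity
  have hω0 : ω ≠ 0 := hω.ne_zero hnpos.ne'
  have hhalf : n / 2 = 2 ^ (r - 1) * p := by
    rw [hn]
    conv_lhs => rw [show r = r - 1 + 1 by omega]
    rw [pow_succ', mul_assoc, Nat.mul_div_cancel_left _ (by norm_num)]
  have h2n : 2 ∣ n := ⟨2 ^ (r - 1) * p, by
    rw [hn]; conv_lhs => rw [show r = r - 1 + 1 by omega]
    rw [pow_succ']; ring⟩
  have h2half : 2 ∣ n / 2 := ⟨2 ^ (r - 2) * p, by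
    rw [hhalf]; conv_lhs => rw [show r - 1 = r - 2 + 1 by omega]
    rw [pow_succ']; ring⟩
  have hphalf : p ∣ n / 2 := Dvd.intro_left _ hhalf.symm
  have hn2 : n / 2 + n / 2 = n := by omega
  have hNnat : ω ^ (n / 2) = -1 := by
    have hpow : (ω ^ (n / 2)) ^ 2 = 1 := by
      rw [← pow_mul, show n / 2 * 2 = n by omega, hω.pow_eq_one]
    have hne : ω ^ (n / 2) ≠ 1 :=
      hω.pow_ne_one_of_pos_of_lt (by omega) (by omega)
    rcases sq_eq_one_iff.mp hpow with h | h
    · exact absurd h hne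
    · exact h
  have hN : ω ^ (((n / 2 : ℕ) : ℤ)) = -1 := by rw [zpow_natCast]; exact hNnat
  set ζ := ω ^ (2 ^ r : ℕ) with hζdef
  have hζ : IsPrimitiveRoot ζ p := IsPrimitiveRoot.pow hnpos hω hn
  have hζ0 : ζ ≠ 0 := hζ.ne_zero hppos.ne'
  have hbase : ω ^ ((2 : ℤ) ^ r) = ζ := by
    rw [show ((2 : ℤ) ^ r) = ((2 ^ r : ℕ) : ℤ) by push_cast; ring, zpow_natCast]
  have hu : ∀ x : ℤ, ω ^ (x * (2 : ℤ) ^ r) = ζ ^ x := fun x => by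
    rw [mul_comm, zpow_mul, hbase]
  -- the geometric sums
  set S : ℂ → ℂ := fun u => ∑ i ∈ Finset.range (k + 1), u ^ i with hSdef
  have hlam : ∀ x : ℤ, lamEig p r n ω x =
      ω ^ x * (S (ζ ^ x) + (-1 : ℂ) ^ x * (S (ζ ^ x) - 1)) := by
    intro x
    have h := eig_formula ω hω0 _ hN x ((2 : ℤ) ^ r) k
    rw [hu x] at h
    exact h
  have hmu : ∀ x : ℤ, muEig p r n ω x =
      ω ^ x * (S ((ζ ^ x)⁻¹) + (-1 : ℂ) ^ x * (S ((ζ ^ x)⁻¹) - 1)) := by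
    intro x
    have h := eig_formula ω hω0 _ hN x (-(2 : ℤ) ^ r) k
    rw [show x * -(2 : ℤ) ^ r = -(x * (2 : ℤ) ^ r) by ring, zpow_neg, hu x] at h
    rw [← h]
    unfold muEig
    rw [← hk]
    congr 1
    · exact Finset.sum_congr rfl fun i _ => by
        rw [show x * (1 - (i : ℤ) * 2 ^ r) = x * (1 + (i : ℤ) * -(2 : ℤ) ^ r) by ring]
    · exact Finset.sum_congr rfl fun j _ => by
        rw [show x * (1 - (j : ℤ) * 2 ^ r + ((n / 2 : ℕ) : ℤ))
            = x * (1 + (j : ℤ) * -(2 : ℤ) ^ r + ((n / 2 : ℕ) : ℤ)) by ring]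
  have hcore : ∀ x : ℤ, ¬ ((p : ℤ) ∣ x) → S (ζ ^ x) + S ((ζ ^ x)⁻¹) = 1 := by
    intro x hpx
    refine S_add_S_inv _ _ (zpow_ne_zero _ hζ0) ?_ ?_
    · intro h; exact hpx ((hζ.zpow_eq_one_iff_dvd x).mp h)
    · rw [← hpk, ← zpow_natCast (ζ ^ x) p, ← zpow_mul, mul_comm, zpow_mul,
        zpow_natCast, hζ.pow_eq_one, one_zpow]
  have hneg_even : ∀ y : ℤ, 2 ∣ y → (-1 : ℂ) ^ y = 1 := by
    rintro y ⟨t, rfl⟩; rw [zpow_mul]; norm_num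
  have hneg_odd : ∀ y : ℤ, ¬ 2 ∣ y → (-1 : ℂ) ^ y = -1 := by
    intro y hy
    obtain ⟨t, ht⟩ : ∃ t, y = 2 * t + 1 := by
      rcases Int.even_or_odd y with ⟨t, ht⟩ | ⟨t, ht⟩
      · exact absurd ⟨t, by omega⟩ hy
      · exact ⟨t, by omega⟩
    rw [ht, zpow_add₀ (by norm_num : (-1 : ℂ) ≠ 0), zpow_mul]
    norm_num
  have hcond : ∀ x : ℤ, (∃ m : ℕ, 0 < m ∧ Int.gcd x n = 2 ^ m) ↔
      ((2 : ℤ) ∣ x ∧ ¬ (p : ℤ) ∣ x) := by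
    intro x
    constructor
    · rintro ⟨m, hm, hg⟩
      constructor
      · have h2g : (2 : ℤ) ∣ (Int.gcd x n : ℤ) := by
          rw [hg]; push_cast; exact dvd_pow_self 2 hm.ne'
        exact h2g.trans (Int.gcd_dvd_left x n)
      · intro hpx
        have hpg : (p : ℤ) ∣ (Int.gcd x n : ℤ) :=
          Int.dvd_coe_gcd hpx (by exact_mod_cast Int.natCast_dvd_natCast.mpr ⟨2 ^ r, by rw [hn]; ring⟩)
        have hpgn : p ∣ Int.gcd x n := Int.natCast_dvd_natCast.mp hpg
        rw [hg] at hpgn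
        have : p = 2 := (Nat.prime_dvd_prime_iff_eq hp Nat.prime_two).mp
          (hp.dvd_of_dvd_pow hpgn)
        exact hp2 this
    · rintro ⟨h2x, hpx⟩
      have hdn : (Int.gcd x n : ℤ) ∣ (n : ℤ) := Int.gcd_dvd_right x n
      have hdnat : Int.gcd x n ∣ n := Int.natCast_dvd_natCast.mp hdn
      have hpd : ¬ p ∣ Int.gcd x n := by
        intro h
        exact hpx ((Int.natCast_dvd_natCast.mpr h).trans (Int.gcd_dvd_left x n))
      have hcop : Nat.Coprime (Int.gcd x n) p :=
        Nat.Coprime.symm (hp.coprime_iff_not_dvd.mpr hpd)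
      have hd2r : Int.gcd x n ∣ 2 ^ r := hcop.dvd_of_dvd_mul_right (hn ▸ hdnat)
      obtain ⟨m, hmr, hdm⟩ := (Nat.dvd_prime_pow Nat.prime_two).mp hd2r
      refine ⟨m, ?_, hdm⟩
      have h2d : (2 : ℤ) ∣ (Int.gcd x n : ℤ) :=
        Int.dvd_coe_gcd h2x (by exact_mod_cast Int.natCast_dvd_natCast.mpr h2n)
      have h2dn : 2 ∣ Int.gcd x n := Int.natCast_dvd_natCast.mp h2d
      rw [hdm] at h2dn
      by_contra hm0
      have hm0' : m = 0 := by omega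
      subst hm0'
      norm_num at h2dn
  have hmain : ∀ x : ℤ,
      ((∃ m : ℕ, 0 < m ∧ Int.gcd x n = 2 ^ m) →
        lamEig p r n ω x = muEig p r n ω (x + ((n / 2 : ℕ) : ℤ))) ∧
      (¬ (∃ m : ℕ, 0 < m ∧ Int.gcd x n = 2 ^ m) →
        lamEig p r n ω x = muEig p r n ω x) := by
    intro x
    constructor
    · intro hex
      obtain ⟨h2x, hpx⟩ := (hcond x).mp hex
      have hζN : ζ ^ (x + ((n / 2 : ℕ) : ℤ)) = ζ ^ x := by
        rw [zpow_add₀ hζ0, zpow_natCast, (hζ.pow_eq_one_iff_dvd _).mpr hphalf, mul_one]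
      have hωN : ω ^ (x + ((n / 2 : ℕ) : ℤ)) = -(ω ^ x) := by
        rw [zpow_add₀ hω0, hN]; ring
      have heN : (-1 : ℂ) ^ (x + ((n / 2 : ℕ) : ℤ)) = 1 := by
        apply hneg_even
        refine dvd_add h2x ?_
        exact_mod_cast Int.natCast_dvd_natCast.mpr h2half
      have hex' : (-1 : ℂ) ^ x = 1 := hneg_even x h2x
      rw [hlam x, hmu _, hζN, hωN, heN, hex']
      have hS := hcore x hpx
      linear_combination (2 * ω ^ x) * hS
    · intro hnex
      by_cases hpx : (p : ℤ) ∣ x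
      · rw [hlam x, hmu x]
        have h1 : ζ ^ x = 1 := (hζ.zpow_eq_one_iff_dvd x).mpr hpx
        rw [h1, inv_one]
      · have h2x : ¬ (2 : ℤ) ∣ x := fun h => hnex ((hcond x).mpr ⟨h, hpx⟩)
        rw [hlam x, hmu x, hneg_odd x h2x]
        ring
  have hωn1 : ω ^ ((n : ℕ) : ℤ) = 1 := by rw [zpow_natCast, hω.pow_eq_one]
  have hmuper : ∀ x t : ℤ, muEig p r n ω (x + (n : ℤ) * t) = muEig p r n ω x := by
    intro x t
    unfold muEig
    congr 1
    · refine Finset.sum_congr rfl fun i _ => ?_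
      rw [show (x + (n : ℤ) * t) * (1 - (i : ℤ) * 2 ^ r)
          = x * (1 - (i : ℤ) * 2 ^ r) + (n : ℤ) * (t * (1 - (i : ℤ) * 2 ^ r)) by ring,
        zpow_add₀ hω0, zpow_mul ω ((n : ℕ) : ℤ), hωn1, one_zpow, mul_one]
    · refine Finset.sum_congr rfl fun j _ => ?_
      rw [show (x + (n : ℤ) * t) * (1 - (j : ℤ) * 2 ^ r + ((n / 2 : ℕ) : ℤ))
          = x * (1 - (j : ℤ) * 2 ^ r + ((n / 2 : ℕ) : ℤ))
            + (n : ℤ) * (t * (1 - (j : ℤ) * 2 ^ r + ((n / 2 : ℕ) : ℤ))) by ring,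
        zpow_add₀ hω0, zpow_mul ω ((n : ℕ) : ℤ), hωn1, one_zpow, mul_one]
  have hσlt : ∀ x : ℕ, x < n → sigmaFun p n x < n := by
    intro x hx
    unfold sigmaFun
    split
    · exact Nat.mod_lt _ hnpos
    · exact hx
  have hσcond : ∀ x : ℕ, (2 ∣ x ∧ ¬ p ∣ x) →
      2 ∣ (x + n / 2) % n ∧ ¬ p ∣ (x + n / 2) % n := by
    rintro x ⟨h2, hpn'⟩
    constructor
    · obtain ⟨q, hq⟩ : ∃ q, (x + n / 2) % n + n * q = x + n / 2 :=
        ⟨_, Nat.mod_add_div _ _⟩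
      obtain ⟨m, hm⟩ := h2n.mul_right q
      omega
    · intro hpy
      apply hpn'
      have h1 : (x + n / 2) % n % p = (x + n / 2) % p :=
        Nat.mod_mod_of_dvd _ ⟨2 ^ r, by rw [hn]; ring⟩
      obtain ⟨c, hc⟩ := hphalf
      have h2' : (x + n / 2) % p = x % p := by rw [hc, Nat.add_mul_mod_self_left]
      rw [Nat.dvd_iff_mod_eq_zero] at hpy ⊢
      rw [h1, h2'] at hpy
      exact hpy
  have hσinv : ∀ x : ℕ, x < n → sigmaFun p n (sigmaFun p n x) = x := by
    intro x hx
    by_cases hc : 2 ∣ x ∧ ¬ p ∣ x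
    · have h1 : sigmaFun p n x = (x + n / 2) % n := by
        unfold sigmaFun; rw [if_pos hc]
      have h2' : sigmaFun p n ((x + n / 2) % n) = ((x + n / 2) % n + n / 2) % n := by
        unfold sigmaFun; rw [if_pos (hσcond x hc)]
      rw [h1, h2', Nat.mod_add_mod, add_assoc, hn2, Nat.add_mod_right,
        Nat.mod_eq_of_lt hx]
    · have h1 : sigmaFun p n x = x := by unfold sigmaFun; rw [if_neg hc]
      rw [h1, h1]
  have hkey : ∀ x : ℕ, x < n →
      lamEig p r n ω (x : ℤ) = muEig p r n ω ((sigmaFun p n x : ℕ) : ℤ) := by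
    intro x hx
    by_cases hc : 2 ∣ x ∧ ¬ p ∣ x
    · rw [show sigmaFun p n x = (x + n / 2) % n by unfold sigmaFun; rw [if_pos hc]]
      have hcZ : (2 : ℤ) ∣ (x : ℤ) ∧ ¬ (p : ℤ) ∣ (x : ℤ) := by
        constructor
        · exact_mod_cast Int.natCast_dvd_natCast.mpr hc.1
        · intro h; exact hc.2 (Int.natCast_dvd_natCast.mp (by exact_mod_cast h))
      have h := (hmain x).1 ((hcond x).mpr hcZ)
      rw [h]
      have hcast : ((((x + n / 2) % n : ℕ)) : ℤ)
          = ((x : ℤ) + ((n / 2 : ℕ) : ℤ)) % (n : ℤ) := by push_cast; ring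
      rw [hcast, Int.emod_def]
      have hper := hmuper ((x : ℤ) + ((n / 2 : ℕ) : ℤ))
        (-(((x : ℤ) + ((n / 2 : ℕ) : ℤ)) / (n : ℤ)))
      rw [show ((x : ℤ) + ((n / 2 : ℕ) : ℤ))
            + (n : ℤ) * (-(((x : ℤ) + ((n / 2 : ℕ) : ℤ)) / (n : ℤ)))
          = (x : ℤ) + ((n / 2 : ℕ) : ℤ)
            - (n : ℤ) * (((x : ℤ) + ((n / 2 : ℕ) : ℤ)) / (n : ℤ)) by ring] at hper
      exact hper.symm
    · rw [show sigmaFun p n x = x by unfold sigmaFun; rw [if_neg hc]]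
      apply (hmain x).2
      intro hex
      obtain ⟨h2, hpx⟩ := (hcond x).mp hex
      refine hc ⟨?_, fun h => hpx (Int.natCast_dvd_natCast.mpr h)⟩
      exact_mod_cast h2
  refine ⟨hmain, ?_⟩
  have hnd : (Multiset.map (sigmaFun p n) (Multiset.range n)).Nodup := by
    refine Multiset.Nodup.map_on ?_ (Multiset.nodup_range n)
    intro a ha b hb hab
    rw [Multiset.mem_range] at ha hb
    rw [← hσinv a ha, ← hσinv b hb, hab]
  have himg : Finset.image (sigmaFun p n) (Finset.range n) = Finset.range n := by
    apply Finset.eq_of_subset_of_card_le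
    · intro y hy
      rw [Finset.mem_image] at hy
      obtain ⟨x, hx, rfl⟩ := hy
      rw [Finset.mem_range] at hx ⊢
      exact hσlt x hx
    · have hinj' : Set.InjOn (sigmaFun p n) ↑(Finset.range n) := by
        intro a ha b hb hab
        simp only [Finset.coe_range, Set.mem_Iio] at ha hb
        rw [← hσinv a ha, ← hσinv b hb, hab]
      rw [Finset.card_image_of_injOn hinj']
  have hmap : Multiset.map (sigmaFun p n) (Multiset.range n) = Multiset.range n := by
    have h1 : (Finset.image (sigmaFun p n) (Finset.range n)).val
        = ((Finset.range n).val.map (sigmaFun p n)).dedup := Finset.image_val _ _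
    rw [himg] at h1
    rw [Finset.range_val] at h1
    rw [Multiset.dedup_eq_self.mpr hnd] at h1
    exact h1.symm
  have hcoe : (do let a ← Multiset.range n
                  pure ((a : ℤ))) = Multiset.map (fun a : ℕ => (a : ℤ)) (Multiset.range n) := by
    simp [Multiset.bind_singleton]
  rw [hcoe, Multiset.map_map, Multiset.map_map]
  calc (Multiset.range n).map (fun x : ℕ => lamEig p r n ω (x : ℤ))
      = (Multiset.range n).map (fun x : ℕ => muEig p r n ω ((sigmaFun p n x : ℕ) : ℤ)) := by
        apply Multiset.map_congr rfl
        intro x hx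
        exact hkey x (Multiset.mem_range.mp hx)
    _ = (Multiset.map (sigmaFun p n) (Multiset.range n)).map
          (fun x : ℕ => muEig p r n ω (x : ℤ)) := by
        rw [Multiset.map_map]; rfl
    _ = (Multiset.range n).map (fun x : ℕ => muEig p r n ω (x : ℤ)) := by rw [hmap]
end

section
/- Let p be an odd prime, let r ≥ 2 be an integer, let n = 2^r·p, and let ω ∈ ℂ be a primitive n-th root of unity. Let A = {1 + i·2^r : 0 ≤ i ≤ (p−1)/2} ∪ {1 + j·2^r + p·2^{r−1} : 1 ≤ j ≤ (p−1)/2} ⊆ ℤ/nℤ, and for x ∈ ℤ set λ_x = Σ_{a ∈ A} ω^{x·a}. If λ_x = λ_y for integers x, y, then x ≡ y (mod n). Equivalently, the circulant graph X = Cay(ℤ/nℤ, A) has n pairwise distinct eigenvalues. -/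
/-- The connection set
`A = {1 + i·2^r : 0 ≤ i ≤ (p−1)/2} ∪ {1 + j·2^r + p·2^{r−1} : 1 ≤ j ≤ (p−1)/2}`
in `ℤ/nℤ`, `n = 2^r·p`. -/
def connA (n r p : ℕ) : Finset (ZMod n) :=
  ((Finset.range ((p - 1) / 2 + 1)).image fun i => ((1 + i * 2 ^ r : ℕ) : ZMod n)) ∪
  ((Finset.Icc 1 ((p - 1) / 2)).image fun j =>
    ((1 + j * 2 ^ r + p * 2 ^ (r - 1) : ℕ) : ZMod n))

/-- `λ_x = Σ_{a ∈ A} ω^{x·a}`. -/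
noncomputable def lamA (n r p : ℕ) (ω : ℂ) (x : ℤ) : ℂ :=
  ∑ a ∈ connA n r p, ω ^ (x * (a.val : ℤ))

private lemma lamA_sum (p r : ℕ) (hp : 3 ≤ p) (hodd : Odd p) (hr : 2 ≤ r)
    (n : ℕ) [NeZero n] (hn : n = 2 ^ r * p) (ω : ℂ) (x : ℤ) :
    lamA n r p ω x
      = (∑ i ∈ Finset.range ((p - 1) / 2 + 1), ω ^ (x * ((1 + i * 2 ^ r : ℕ) : ℤ)))
      + ∑ j ∈ Finset.Icc 1 ((p - 1) / 2), ω ^ (x * ((1 + j * 2 ^ r + p * 2 ^ (r - 1) : ℕ) : ℤ)) := by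
  set m := (p - 1) / 2 with hm
  set R := 2 ^ (r - 1) with hR
  have h2R : 2 ^ r = 2 * R := by
    rw [hR, ← pow_succ']
    congr 1
    omega
  have hRge : 2 ≤ R := by
    rw [hR]
    calc 2 = 2 ^ 1 := by norm_num
    _ ≤ 2 ^ (r - 1) := Nat.pow_le_pow_right (by norm_num) (by omega)
  have hpm : p = 2 * m + 1 := by
    obtain ⟨k, hk⟩ := hodd; omega
  have hnval : n = 4 * (R * m) + 2 * R := by
    rw [hn, h2R, hpm]; ring
  -- bounds
  have hb1 : ∀ i, i ≤ m → 1 + i * 2 ^ r < n := by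
    intro i hi
    rw [h2R, hnval]
    have : i * (2 * R) ≤ m * (2 * R) := Nat.mul_le_mul_right _ hi
    have h2 : m * (2 * R) = 2 * (R * m) := by ring
    omega
  have hb2 : ∀ j, j ≤ m → 1 + j * 2 ^ r + p * 2 ^ (r - 1) < n := by
    intro j hj
    rw [h2R, ← hR, hnval, hpm]
    have : j * (2 * R) ≤ m * (2 * R) := Nat.mul_le_mul_right _ hj
    have h2 : m * (2 * R) = 2 * (R * m) := by ring
    have h3 : (2 * m + 1) * R = 2 * (R * m) + R := by ring
    omega
  have hval1 : ∀ i, i ≤ m → ((((1 + i * 2 ^ r : ℕ) : ZMod n)).val) = 1 + i * 2 ^ r := by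
    intro i hi; exact ZMod.val_natCast_of_lt (hb1 i hi)
  have hval2 : ∀ j, j ≤ m → ((((1 + j * 2 ^ r + p * 2 ^ (r - 1) : ℕ) : ZMod n)).val)
      = 1 + j * 2 ^ r + p * 2 ^ (r - 1) := by
    intro j hj; exact ZMod.val_natCast_of_lt (hb2 j hj)
  have hpow : 0 < 2 ^ r := Nat.pow_pos (by norm_num)
  have hinj1 : Set.InjOn (fun i => ((1 + i * 2 ^ r : ℕ) : ZMod n))
      (Finset.range (m + 1)) := by
    intro a ha b hb hab
    simp only [Finset.coe_range, Set.mem_Iio] at ha hb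
    have := congrArg ZMod.val hab
    simp only at this
    rw [hval1 a (by omega), hval1 b (by omega)] at this
    have : a * 2 ^ r = b * 2 ^ r := by omega
    exact Nat.eq_of_mul_eq_mul_right hpow this
  have hinj2 : Set.InjOn (fun j => ((1 + j * 2 ^ r + p * 2 ^ (r - 1) : ℕ) : ZMod n))
      (Finset.Icc 1 m) := by
    intro a ha b hb hab
    simp only [Finset.coe_Icc, Set.mem_Icc] at ha hb
    have := congrArg ZMod.val hab
    simp only at this
    rw [hval2 a (by omega), hval2 b (by omega)] at this
    have : a * 2 ^ r = b * 2 ^ r := by omega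
    exact Nat.eq_of_mul_eq_mul_right hpow this
  have hdisj : Disjoint
      ((Finset.range (m + 1)).image fun i => ((1 + i * 2 ^ r : ℕ) : ZMod n))
      ((Finset.Icc 1 m).image fun j => ((1 + j * 2 ^ r + p * 2 ^ (r - 1) : ℕ) : ZMod n)) := by
    rw [Finset.disjoint_left]
    rintro z hz1 hz2
    simp only [Finset.mem_image, Finset.mem_range, Finset.mem_Icc] at hz1 hz2
    obtain ⟨i, hi, rfl⟩ := hz1
    obtain ⟨j, hj, hj2⟩ := hz2
    have := congrArg ZMod.val hj2
    rw [hval2 j (by omega), hval1 i (by omega)] at this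
    rw [h2R, ← hR] at this
    -- 1 + j*(2R) + p*R = 1 + i*(2R)
    have hR0 : 0 < R := by omega
    have e : (1 : ℤ) + j * (2 * R) + p * R = 1 + i * (2 * R) := by exact_mod_cast this
    have e2 : ((2 : ℤ) * j + p - 2 * i) * R = 0 := by linear_combination e
    have e3 : ((2 : ℤ) * j + p - 2 * i) = 0 := by
      rcases mul_eq_zero.mp e2 with h | h
      · exact h
      · exfalso; have : (R : ℤ) ≠ 0 := by exact_mod_cast hR0.ne'
        exact this h
    omega
  unfold lamA connA
  rw [← hm, Finset.sum_union hdisj, Finset.sum_image hinj1, Finset.sum_image hinj2]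
  congr 1
  · apply Finset.sum_congr rfl
    intro i hi
    rw [hval1 i (by simp at hi; omega)]
  · apply Finset.sum_congr rfl
    intro j hj
    rw [hval2 j (by simp at hj; omega)]

private lemma lamA_formula (p r : ℕ) (hp : 3 ≤ p) (hodd : Odd p) (hr : 2 ≤ r)
    (n : ℕ) [NeZero n] (hn : n = 2 ^ r * p) (ω : ℂ) (hω : IsPrimitiveRoot ω n) (x : ℤ) :
    lamA n r p ω x = ω ^ x *
      ((∑ i ∈ Finset.range ((p - 1) / 2 + 1), (ω ^ ((2 ^ r : ℤ) * x)) ^ i)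
        + (-1 : ℂ) ^ x * ((∑ i ∈ Finset.range ((p - 1) / 2 + 1), (ω ^ ((2 ^ r : ℤ) * x)) ^ i) - 1)) := by
  have hn0 : n ≠ 0 := NeZero.ne n
  have hω0 : ω ≠ 0 := by
    intro h
    have := hω.pow_eq_one
    rw [h, zero_pow hn0] at this
    exact zero_ne_one this
  set m := (p - 1) / 2 with hm
  set c : ℂ := ω ^ ((2 ^ r : ℤ) * x) with hc
  set ε : ℂ := ω ^ ((p * 2 ^ (r - 1) : ℕ) : ℤ) with hε
  have hεsq : ε * ε = 1 := by
    rw [hε, ← zpow_add₀ hω0]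
    have : ((p * 2 ^ (r - 1) : ℕ) : ℤ) + ((p * 2 ^ (r - 1) : ℕ) : ℤ) = (n : ℤ) := by
      rw [hn]
      push_cast
      have h2 : (2 : ℤ) ^ r = 2 * 2 ^ (r - 1) := by
        rw [← pow_succ']
        congr 1
        omega
      rw [h2]; ring
    rw [this]
    exact_mod_cast hω.zpow_eq_one
  have hεne : ε ≠ 1 := by
    rw [hε]
    intro h
    have := (hω.zpow_eq_one_iff_dvd _).mp h
    have h1 : (n : ℤ) ≤ (p * 2 ^ (r - 1) : ℕ) := by
      apply Int.le_of_dvd _ this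
      positivity
    have h2 : p * 2 ^ (r - 1) < n := by
      rw [hn]
      have : 2 ^ r = 2 * 2 ^ (r - 1) := by
        rw [← pow_succ']; congr 1; omega
      rw [this]
      have hpos : 0 < p * 2 ^ (r - 1) := by positivity
      calc p * 2 ^ (r - 1) < 2 * (p * 2 ^ (r - 1)) := by omega
        _ = 2 * 2 ^ (r - 1) * p := by ring
    exact absurd h1 (by exact_mod_cast Nat.not_le.mpr h2)
  have hεval : ε = -1 := by
    rcases mul_self_eq_one_iff.mp hεsq with h | h
    · exact absurd h hεne
    · exact h
  rw [lamA_sum p r hp hodd hr n hn ω x, ← hm]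
  have hterm1 : ∀ i : ℕ, ω ^ (x * ((1 + i * 2 ^ r : ℕ) : ℤ)) = ω ^ x * c ^ i := by
    intro i
    have he : x * ((1 + i * 2 ^ r : ℕ) : ℤ) = x + ((2 ^ r : ℤ) * x) * i := by
      push_cast; ring
    rw [he, zpow_add₀ hω0, zpow_mul, zpow_natCast]
  have hterm2 : ∀ j : ℕ, ω ^ (x * ((1 + j * 2 ^ r + p * 2 ^ (r - 1) : ℕ) : ℤ))
      = ω ^ x * ε ^ x * c ^ j := by
    intro j
    have he : x * ((1 + j * 2 ^ r + p * 2 ^ (r - 1) : ℕ) : ℤ)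
        = x + ((p * 2 ^ (r - 1) : ℕ) : ℤ) * x + ((2 ^ r : ℤ) * x) * j := by
      push_cast; ring
    rw [he, zpow_add₀ hω0, zpow_add₀ hω0, zpow_mul, zpow_mul,
      zpow_natCast (ω ^ ((2 ^ r : ℤ) * x)) j]
  simp only [hterm1, hterm2]
  rw [← Finset.mul_sum, ← Finset.mul_sum, hεval]
  have hsplit : Finset.range (m + 1) = insert 0 (Finset.Icc 1 m) := by
    ext a
    simp only [Finset.mem_range, Finset.mem_insert, Finset.mem_Icc]
    omega
  have hS : ∑ i ∈ Finset.range (m + 1), c ^ i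
      = 1 + ∑ j ∈ Finset.Icc 1 m, c ^ j := by
    rw [hsplit, Finset.sum_insert (by simp)]
    simp
  rw [hS]
  ring

private lemma eps_neg_one (p r : ℕ) (hp : 3 ≤ p) (hr : 2 ≤ r)
    (n : ℕ) [NeZero n] (hn : n = 2 ^ r * p) (ω : ℂ) (hω : IsPrimitiveRoot ω n)
    (hω0 : ω ≠ 0) : ω ^ ((p * 2 ^ (r - 1) : ℕ) : ℤ) = -1 := by
  set ε : ℂ := ω ^ ((p * 2 ^ (r - 1) : ℕ) : ℤ) with hε
  have hεsq : ε * ε = 1 := by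
    rw [hε, ← zpow_add₀ hω0]
    have : ((p * 2 ^ (r - 1) : ℕ) : ℤ) + ((p * 2 ^ (r - 1) : ℕ) : ℤ) = (n : ℤ) := by
      rw [hn]
      push_cast
      have h2 : (2 : ℤ) ^ r = 2 * 2 ^ (r - 1) := by
        rw [← pow_succ']; congr 1; omega
      rw [h2]; ring
    rw [this]
    exact_mod_cast hω.zpow_eq_one
  have hεne : ε ≠ 1 := by
    rw [hε]
    intro h
    have := (hω.zpow_eq_one_iff_dvd _).mp h
    have h1 : (n : ℤ) ≤ (p * 2 ^ (r - 1) : ℕ) := by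
      apply Int.le_of_dvd _ this
      positivity
    have h2 : p * 2 ^ (r - 1) < n := by
      rw [hn]
      have h3 : 2 ^ r = 2 * 2 ^ (r - 1) := by
        rw [← pow_succ']; congr 1; omega
      rw [h3]
      have hpos : 0 < p * 2 ^ (r - 1) := by positivity
      calc p * 2 ^ (r - 1) < 2 * (p * 2 ^ (r - 1)) := by omega
        _ = 2 * 2 ^ (r - 1) * p := by ring
    exact absurd h1 (by exact_mod_cast Nat.not_le.mpr h2)
  rcases mul_self_eq_one_iff.mp hεsq with h | h
  · exact absurd h hεne
  · exact h

private lemma key (p r : ℕ) (hp : p.Prime) (hodd : Odd p) (hr : 2 ≤ r)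
    (n : ℕ) [NeZero n] (hn : n = 2 ^ r * p) (ω : ℂ) (hω : IsPrimitiveRoot ω n)
    (x y : ℤ) (h : lamA n r p ω x = lamA n r p ω y) : Int.ModEq (n : ℤ) x y := by
  have hp3 : 3 ≤ p := by
    have h2 := hp.two_le
    have hne : p ≠ 2 := by
      intro h2'
      rw [h2'] at hodd
      exact absurd hodd (by decide)
    omega
  have hn0 : n ≠ 0 := NeZero.ne n
  have hω0 : ω ≠ 0 := by
    intro h0
    have := hω.pow_eq_one
    rw [h0, zero_pow hn0] at this
    exact zero_ne_one this
  set m := (p - 1) / 2 with hm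
  have hpm : p = 2 * m + 1 := by obtain ⟨k, hk⟩ := hodd; omega
  set ζ : ℂ := ω ^ (2 ^ r : ℕ) with hζdef
  have hζ : IsPrimitiveRoot ζ p := hω.pow (Nat.pos_of_ne_zero hn0) hn
  have hζ0 : ζ ≠ 0 := pow_ne_zero _ hω0
  have habs : ‖ω‖ = 1 := hω.norm'_eq_one hn0
  have hζabs : ‖ζ‖ = 1 := by rw [hζdef, norm_pow, habs, one_pow]
  have hcz : ∀ z : ℤ, ω ^ ((2 ^ r : ℤ) * z) = ζ ^ z := by
    intro z
    rw [hζdef, zpow_mul, ← zpow_natCast ω (2 ^ r)]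
    norm_cast
  -- the u and t functions
  set u : ℤ → ℂ := fun z => ζ ^ (z * (m + 1)) with hu
  set t : ℤ → ℂ := fun z => (1 - u z) / (1 + u z) with ht
  have hu0 : ∀ z, u z ≠ 0 := fun z => zpow_ne_zero _ hζ0
  have huabs : ∀ z, ‖u z‖ = 1 := by
    intro z
    rw [hu]
    simp only
    rw [norm_zpow, hζabs, one_zpow]
  have hζp : ∀ k : ℤ, ζ ^ ((p : ℤ) * k) = 1 := by
    intro k
    rw [zpow_mul]
    rw [show (ζ ^ (p : ℤ)) = 1 from hζ.zpow_eq_one, one_zpow]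
  have huu : ∀ z, u z * u z = ζ ^ z := by
    intro z
    rw [hu]
    simp only
    rw [← zpow_add₀ hζ0]
    have : z * (m + 1) + z * (m + 1) = (p : ℤ) * z + z := by
      push_cast [hpm]; ring
    rw [this, zpow_add₀ hζ0, hζp z]
    rw [one_mul]
  have hune : ∀ z : ℤ, ¬((p : ℤ) ∣ z) → u z ≠ 1 ∧ u z ≠ -1 := by
    intro z hz
    have hζz : ζ ^ z ≠ 1 := by
      intro h1
      exact hz ((hζ.zpow_eq_one_iff_dvd z).mp h1)
    constructor
    · intro h1
      apply hζz
      rw [← huu z, h1, one_mul]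
    · intro h1
      apply hζz
      rw [← huu z, h1]
      norm_num
  have hueq : ∀ z w : ℤ, (p : ℤ) ∣ (z - w) → u z = u w := by
    intro z w hzw
    obtain ⟨k, hk⟩ := hzw
    have : z * (m + 1) = w * (m + 1) + (p : ℤ) * (k * (m + 1)) := by
      rw [show z = w + (p:ℤ) * k by linarith]; ring
    rw [hu]
    simp only
    rw [this, zpow_add₀ hζ0, hζp, mul_one]
  have hcj : ∀ w : ℂ, ‖w‖ = 1 → (starRingEnd ℂ) w = w⁻¹ := by
    intro w hw
    exact (Complex.inv_eq_conj hw).symm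
  have hωz_abs : ∀ z : ℤ, ‖ω ^ z‖ = 1 := by
    intro z; rw [norm_zpow, habs, one_zpow]
  have hωcj : ∀ z : ℤ, (starRingEnd ℂ) (ω ^ z) = (ω ^ z)⁻¹ := fun z => hcj _ (hωz_abs z)
  have hu1 : ∀ z : ℤ, ¬((p : ℤ) ∣ z) → 1 + u z ≠ 0 := by
    intro z hz h0
    exact (hune z hz).2 (by linear_combination h0)
  have hu1' : ∀ z : ℤ, ¬((p : ℤ) ∣ z) → 1 - u z ≠ 0 := by
    intro z hz h0
    exact (hune z hz).1 (by linear_combination -h0)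
  have htne : ∀ z : ℤ, ¬((p : ℤ) ∣ z) → t z ≠ 0 := by
    intro z hz
    exact div_ne_zero (hu1' z hz) (hu1 z hz)
  have htcj : ∀ z : ℤ, ¬((p : ℤ) ∣ z) → (starRingEnd ℂ) (t z) = -(t z) := by
    intro z hz
    rw [ht]
    simp only
    rw [map_div₀, map_sub, map_add, map_one, hcj (u z) (huabs z)]
    have h1 : u z ≠ 0 := hu0 z
    have h2 : 1 + u z ≠ 0 := hu1 z hz
    have h3 : 1 + (u z)⁻¹ ≠ 0 := by
      intro h0
      apply (hune z hz).2
      have h4 : u z * (1 + (u z)⁻¹) = 0 := by rw [h0, mul_zero]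
      rw [mul_add, mul_inv_cancel₀ h1] at h4
      linear_combination h4
    have e1 : 1 - (u z)⁻¹ = (u z - 1) * (u z)⁻¹ := by field_simp
    have e2 : 1 + (u z)⁻¹ = (u z + 1) * (u z)⁻¹ := by
      rw [add_mul, one_mul, mul_inv_cancel₀ h1, add_comm]
    rw [e1, e2, mul_div_mul_right _ _ (inv_ne_zero h1), ← neg_div, neg_sub, add_comm]
  have hform : ∀ z : ℤ, lamA n r p ω z
      = ω ^ z * ((∑ i ∈ Finset.range (m + 1), (ζ ^ z) ^ i)
        + (-1 : ℂ) ^ z * ((∑ i ∈ Finset.range (m + 1), (ζ ^ z) ^ i) - 1)) := by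
    intro z
    have hf := lamA_formula p r hp3 hodd hr n hn ω hω z
    rw [hcz z] at hf
    rw [hf, ← hm]
  have hl1 : ∀ z : ℤ, Odd z → lamA n r p ω z = ω ^ z := by
    intro z hz
    rw [hform z, Odd.neg_one_zpow hz]
    ring
  have hl2 : ∀ z : ℤ, Even z → (p : ℤ) ∣ z → lamA n r p ω z = (p : ℂ) * ω ^ z := by
    intro z hze hzd
    rw [hform z, Even.neg_one_zpow hze]
    have hc1 : ζ ^ z = 1 := by
      obtain ⟨k, hk⟩ := hzd
      rw [hk, hζp]
    rw [hc1]
    simp only [one_pow, Finset.sum_const, Finset.card_range, nsmul_eq_mul, mul_one]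
    push_cast [hpm]
    ring
  have hl3 : ∀ z : ℤ, Even z → ¬((p : ℤ) ∣ z) → lamA n r p ω z = ω ^ z * t z := by
    intro z hze hzd
    rw [hform z, Even.neg_one_zpow hze]
    set S : ℂ := ∑ i ∈ Finset.range (m + 1), (ζ ^ z) ^ i with hS
    have hg : S * (ζ ^ z - 1) = (ζ ^ z) ^ (m + 1) - 1 := geom_sum_mul (ζ ^ z) (m + 1)
    have hcu : (ζ ^ z) ^ (m + 1) = u z := by
      rw [hu]; simp only
      rw [← zpow_natCast (ζ ^ z) (m + 1), ← zpow_mul]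
      norm_cast
    rw [hcu, ← huu z] at hg
    have hfac : (u z - 1) * (S * (1 + u z) - 1) = 0 := by linear_combination hg
    have hSu : S * (1 + u z) = 1 := by
      rcases mul_eq_zero.mp hfac with h0 | h0
      · exact absurd (by linear_combination h0) (hune z hzd).1
      · linear_combination h0
    have h2 : 1 + u z ≠ 0 := hu1 z hzd
    have hval : S + 1 * (S - 1) = (1 - u z) / (1 + u z) := by
      rw [eq_div_iff h2]
      linear_combination 2 * hSu
    rw [hval]
  -- helpers for the comparison
  have hmod : ∀ z w : ℤ, ω ^ z = ω ^ w → Int.ModEq (n : ℤ) z w := by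
    intro z w hzw
    have h1 : ω ^ (z - w) = 1 := by
      rw [zpow_sub₀ hω0, hzw, div_self (zpow_ne_zero _ hω0)]
    exact (Int.modEq_iff_dvd.mpr ((hω.zpow_eq_one_iff_dvd _).mp h1)).symm
  have hzeta_neg1 : ∀ z : ℤ, ζ ^ z = -1 → (p : ℤ) ∣ z := by
    intro z hz
    have h1 : ζ ^ (z + z) = 1 := by rw [zpow_add₀ hζ0, hz]; norm_num
    have h2 := (hζ.zpow_eq_one_iff_dvd _).mp h1
    rw [← two_mul] at h2
    have hpZ : Prime (p : ℤ) := Nat.prime_iff_prime_int.mp hp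
    rcases hpZ.dvd_mul.mp h2 with h3 | h3
    · exfalso
      have := Int.le_of_dvd (by norm_num) h3
      have : (3 : ℤ) ≤ (p : ℤ) := by exact_mod_cast hp3
      omega
    · exact h3
  have hupow : ∀ z : ℤ, u z ^ p = 1 := by
    intro z
    rw [hu]
    simp only
    rw [← zpow_natCast (ζ ^ (z * (↑m + 1))) p, ← zpow_mul, mul_comm, hζp]
  have no12 : ∀ z w : ℤ, ω ^ z = (p : ℂ) * ω ^ w → False := by
    intro z w hzw
    have hnorm := congrArg norm hzw
    rw [hωz_abs, norm_mul, hωz_abs, Complex.norm_natCast, mul_one] at hnorm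
    have h3 : (3 : ℝ) ≤ (p : ℝ) := by exact_mod_cast hp3
    linarith [hnorm]
  have no13 : ∀ z w : ℤ, ¬((p : ℤ) ∣ w) → ω ^ z = ω ^ w * t w → False := by
    intro z w hw hzw
    have hc := congrArg (starRingEnd ℂ) hzw
    rw [hωcj, map_mul, hωcj, htcj w hw] at hc
    have e1 : ω ^ z * (ω ^ z)⁻¹ = 1 := mul_inv_cancel₀ (zpow_ne_zero _ hω0)
    have e2 : ω ^ w * (ω ^ w)⁻¹ = 1 := mul_inv_cancel₀ (zpow_ne_zero _ hω0)
    have hmul := congrArg₂ (· * ·) hzw hc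
    -- hmul : ω^z * (ω^z)⁻¹ = (ω^w * t w) * ((ω^w)⁻¹ * -(t w))
    have ht2 : t w * t w = -1 := by
      linear_combination hmul - e1 - (t w * t w) * e2
    have h2 : 1 + u w ≠ 0 := hu1 w hw
    rw [ht] at ht2
    simp only at ht2
    rw [div_mul_div_comm, div_eq_iff (mul_ne_zero h2 h2)] at ht2
    have husq : u w * u w = -1 := by linear_combination ht2 / 2
    have : ζ ^ w = -1 := by rw [← huu w]; exact husq
    exact hw (hzeta_neg1 w this)
  have no23 : ∀ z w : ℤ, ¬((p : ℤ) ∣ w) → (p : ℂ) * ω ^ z = ω ^ w * t w → False := by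
    intro z w hw hzw
    have hc := congrArg (starRingEnd ℂ) hzw
    rw [map_mul, map_mul, hωcj, hωcj, htcj w hw, Complex.conj_natCast] at hc
    have e1 : ω ^ z * (ω ^ z)⁻¹ = 1 := mul_inv_cancel₀ (zpow_ne_zero _ hω0)
    have e2 : ω ^ w * (ω ^ w)⁻¹ = 1 := mul_inv_cancel₀ (zpow_ne_zero _ hω0)
    have hmul := congrArg₂ (· * ·) hzw hc
    have ht2 : t w * t w = -((p:ℂ) * (p:ℂ)) := by
      linear_combination hmul - (p:ℂ)*(p:ℂ) * e1 - (t w * t w) * e2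
    have h2 : 1 + u w ≠ 0 := hu1 w hw
    rw [ht] at ht2
    simp only at ht2
    rw [div_mul_div_comm, div_eq_iff (mul_ne_zero h2 h2)] at ht2
    -- (1-u)² = -p² (1+u)²
    have hinv : u w * (u w)⁻¹ = 1 := mul_inv_cancel₀ (hu0 w)
    have hq : ((1:ℂ) + (p:ℂ)^2) * (u w + (u w)⁻¹) = 2 - 2*(p:ℂ)^2 := by
      linear_combination (u w)⁻¹ * ht2 - ((1+(p:ℂ)^2) * (u w) + (2*(p:ℂ)^2 - 2)) * hinv
    -- integrality
    have hiu : IsIntegral ℤ (u w) :=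
      IsIntegral.of_pow hp.pos (by rw [hupow w]; exact isIntegral_one)
    have hinv_eq : (u w)⁻¹ = u w ^ (p - 1) := by
      apply inv_eq_of_mul_eq_one_right
      rw [← pow_succ']
      rw [show p - 1 + 1 = p by omega]
      exact hupow w
    have hint : IsIntegral ℤ (u w + (u w)⁻¹) := by
      rw [hinv_eq]
      exact hiu.add (hiu.pow _)
    have hpC : ((1:ℂ) + (p:ℂ)^2) ≠ 0 := by
      have h4 : ((1 + p^2 : ℕ) : ℂ) ≠ 0 := Nat.cast_ne_zero.mpr (by positivity)
      push_cast at h4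
      exact h4
    set qv : ℚ := (2 - 2*(p:ℚ)^2) / (1 + (p:ℚ)^2) with hqv
    have hqc : ((qv : ℚ) : ℂ) = u w + (u w)⁻¹ := by
      have h5 : u w + (u w)⁻¹ = (2 - 2*(p:ℂ)^2) / (1 + (p:ℂ)^2) := by
        rw [eq_div_iff hpC]; linear_combination hq
      rw [h5, hqv]
      push_cast
      ring
    have hqint : IsIntegral ℤ qv := by
      have h6 : IsIntegral ℤ (algebraMap ℚ ℂ qv) := by
        rw [show algebraMap ℚ ℂ qv = ((qv : ℚ) : ℂ) from rfl, hqc]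
        exact hint
      exact (isIntegral_algebraMap_iff (algebraMap ℚ ℂ).injective).mp h6
    obtain ⟨d, hd⟩ := IsIntegrallyClosed.isIntegral_iff.mp hqint
    have hpQ : ((1:ℚ) + (p:ℚ)^2) ≠ 0 := by positivity
    have hdq : ((1:ℚ) + (p:ℚ)^2) * (d : ℚ) = 2 - 2*(p:ℚ)^2 := by
      rw [show ((d:ℚ)) = qv by exact_mod_cast hd, hqv]
      field_simp
    have hdz : ((1:ℤ) + (p:ℤ)^2) * d = 2 - 2*(p:ℤ)^2 := by exact_mod_cast hdq
    have hdvd : ((1:ℤ) + (p:ℤ)^2) ∣ 4 := ⟨d + 2, by linarith⟩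
    have hle := Int.le_of_dvd (by norm_num) hdvd
    have hp2 : (3:ℤ) ≤ (p:ℤ) := by exact_mod_cast hp3
    nlinarith
  -- main case analysis
  rcases Int.even_or_odd x with hxE | hxO
  · by_cases hxp : (p : ℤ) ∣ x
    · rw [hl2 x hxE hxp] at h
      rcases Int.even_or_odd y with hyE | hyO
      · by_cases hyp : (p : ℤ) ∣ y
        · rw [hl2 y hyE hyp] at h
          apply hmod
          have hpne : (p : ℂ) ≠ 0 := Nat.cast_ne_zero.mpr (by omega)
          exact mul_left_cancel₀ hpne h
        · rw [hl3 y hyE hyp] at h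
          exact absurd h (fun hh => no23 x y hyp hh)
      · rw [hl1 y hyO] at h
        exact absurd h.symm (fun hh => no12 y x hh)
    · rw [hl3 x hxE hxp] at h
      rcases Int.even_or_odd y with hyE | hyO
      · by_cases hyp : (p : ℤ) ∣ y
        · rw [hl2 y hyE hyp] at h
          exact absurd h.symm (fun hh => no23 y x hxp hh)
        · rw [hl3 y hyE hyp] at h
          -- 3-3 case
          have hc := congrArg (starRingEnd ℂ) h
          rw [map_mul, map_mul, hωcj, hωcj, htcj x hxp, htcj y hyp] at hc
          have e1 : ω ^ x * (ω ^ x)⁻¹ = 1 := mul_inv_cancel₀ (zpow_ne_zero _ hω0)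
          have e2 : ω ^ y * (ω ^ y)⁻¹ = 1 := mul_inv_cancel₀ (zpow_ne_zero _ hω0)
          have hmul := congrArg₂ (· * ·) h hc
          have hsq : t x * t x = t y * t y := by
            linear_combination -hmul - (t x * t x) * e1 + (t y * t y) * e2
          rcases mul_self_eq_mul_self_iff.mp hsq with he | he
          · apply hmod
            rw [he] at h
            exact mul_right_cancel₀ (htne y hyp) h
          · have h' : (-(ω ^ x)) * t y = ω ^ y * t y := by
              rw [he] at h
              linear_combination h
            have hneg : -(ω ^ x) = ω ^ y := mul_right_cancel₀ (htne y hyp) h'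
            have hεv := eps_neg_one p r hp3 hr n hn ω hω hω0
            have hxeq : ω ^ x = ω ^ (((p * 2 ^ (r - 1) : ℕ) : ℤ) + y) := by
              rw [zpow_add₀ hω0, hεv]
              linear_combination -hneg
            have hmod1 := hmod x (((p * 2 ^ (r - 1) : ℕ) : ℤ) + y) hxeq
            have hpdvd : (p : ℤ) ∣ (x - y) := by
              have h1 : (n : ℤ) ∣ ((((p * 2 ^ (r - 1) : ℕ) : ℤ) + y) - x) :=
                Int.ModEq.dvd hmod1
              have h2 : (p : ℤ) ∣ (n : ℤ) := by
                rw [hn]; push_cast; exact ⟨2 ^ r, by ring⟩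
              have h3 : (p : ℤ) ∣ (((p * 2 ^ (r - 1) : ℕ) : ℤ)) := by
                push_cast; exact ⟨2 ^ (r - 1), rfl⟩
              have h4 := h2.trans h1
              have h5 : x - y = (((p * 2 ^ (r - 1) : ℕ) : ℤ))
                  - ((((p * 2 ^ (r - 1) : ℕ) : ℤ) + y) - x) := by ring
              rw [h5]
              exact dvd_sub h3 h4
            have huxy : u x = u y := hueq x y hpdvd
            have htxy : t x = t y := by rw [ht]; simp only [huxy]
            rw [htxy] at he
            have : t y = 0 := by linear_combination he / 2
            exact absurd this (htne y hyp)
      · rw [hl1 y hyO] at h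
        exact absurd h.symm (fun hh => no13 y x hxp hh)
  · rw [hl1 x hxO] at h
    rcases Int.even_or_odd y with hyE | hyO
    · by_cases hyp : (p : ℤ) ∣ y
      · rw [hl2 y hyE hyp] at h
        exact absurd h (fun hh => no12 x y hh)
      · rw [hl3 y hyE hyp] at h
        exact absurd h (fun hh => no13 x y hyp hh)
    · rw [hl1 y hyO] at h
      exact hmod x y h

/-- For `n = 2^r·p` (`p` an odd prime, `r ≥ 2`) and `ω` a primitive `n`-th root of
unity, the eigenvalues `λ_x = Σ_{a ∈ A} ω^{x·a}` of the circulant graph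
`Cay(ℤ/nℤ, A)` satisfy: `λ_x = λ_y` implies `x ≡ y (mod n)`; equivalently the `n`
eigenvalues are pairwise distinct. -/
theorem no_repeated_eigenvalues (p r : ℕ) (hp : p.Prime) (hodd : Odd p)
    (hr : 2 ≤ r) (n : ℕ) [NeZero n] (hn : n = 2 ^ r * p)
    (ω : ℂ) (hω : IsPrimitiveRoot ω n) :
    (∀ x y : ℤ, lamA n r p ω x = lamA n r p ω y → Int.ModEq (n : ℤ) x y) ∧
    Function.Injective (fun x : ZMod n => lamA n r p ω ((x.val : ℤ))) := by

  refine ⟨fun x y h => key p r hp hodd hr n hn ω hω x y h, ?_⟩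
  intro a b hab
  have h1 := key p r hp hodd hr n hn ω hω (a.val : ℤ) (b.val : ℤ) hab
  have h2 : (((a.val : ℤ)) : ZMod n) = (((b.val : ℤ)) : ZMod n) :=
    (ZMod.intCast_eq_intCast_iff' _ _ _).mpr h1
  have ha : ((a.val : ℤ) : ZMod n) = a := by
    push_cast
    simp [ZMod.natCast_val, ZMod.cast_id]
  have hb : ((b.val : ℤ) : ZMod n) = b := by
    push_cast
    simp [ZMod.natCast_val, ZMod.cast_id]
  rwa [ha, hb] at h2
end

section
/- Let n ≥ 1, let t be an integer, and let a₁, …, a_m, b₁, …, b_m ∈ ℤ/nℤ satisfy a_i = t·b_i in ℤ/nℤ and gcd(a_i, n) = gcd(b_i, n) for every 1 ≤ i ≤ m. Then there exists an integer τ with gcd(τ, n) = 1 such that a_i = τ·b_i in ℤ/nℤ for every 1 ≤ i ≤ m. -/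
/-- If `a_i = t·b_i` in `ℤ/nℤ` and `gcd(a_i, n) = gcd(b_i, n)` for all `i`, then
there is an integer `τ` coprime to `n` with `a_i = τ·b_i` in `ℤ/nℤ` for all `i`. -/
theorem exists_coprime_multiplier (n : ℕ) [NeZero n] (t : ℤ) (m : ℕ)
    (a b : Fin m → ZMod n)
    (h1 : ∀ i, a i = (t : ZMod n) * b i)
    (h2 : ∀ i, Nat.gcd (a i).val n = Nat.gcd (b i).val n) :
    ∃ τ : ℤ, Int.gcd τ n = 1 ∧ ∀ i, a i = (τ : ZMod n) * b i := by
  have hne : n ≠ 0 := NeZero.ne n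
  set d : ℕ := Nat.gcd n (Finset.univ.gcd fun i => (b i).val) with hd
  have hdn : d ∣ n := Nat.gcd_dvd_left _ _
  have hdb : ∀ i, d ∣ (b i).val := fun i =>
    (Nat.gcd_dvd_right _ _).trans (Finset.gcd_dvd (Finset.mem_univ i))
  have hd0 : d ≠ 0 := fun h => hne (Nat.eq_zero_of_gcd_eq_zero_left h)
  have hmul : d * (n / d) = n := Nat.mul_div_cancel' hdn
  have hnd0 : n / d ≠ 0 := by
    intro h
    exact hne (by rw [← hmul, h, mul_zero])
  -- key coprimality
  have hcop : Nat.Coprime t.natAbs (n / d) := by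
    by_contra hc
    set p := (Nat.gcd t.natAbs (n / d)).minFac with hp'
    have hp : p.Prime := Nat.minFac_prime hc
    have hpt : p ∣ t.natAbs := (Nat.minFac_dvd _).trans (Nat.gcd_dvd_left _ _)
    have hptz : (p : ℤ) ∣ t := Int.dvd_natAbs.mp (Int.natCast_dvd_natCast.mpr hpt)
    have hpnd : p ∣ n / d := (Nat.minFac_dvd _).trans (Nat.gcd_dvd_right _ _)
    set e := n.factorization p with he
    -- there is i with ¬ p^e ∣ (b i).val
    have hex : ∃ i, ¬ p ^ e ∣ (b i).val := by
      by_contra h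
      push_neg at h
      have hped : p ^ e ∣ d :=
        Nat.dvd_gcd (Nat.ordProj_dvd n p) (Finset.dvd_gcd fun i _ => h i)
      obtain ⟨c, hc'⟩ := hped
      obtain ⟨c', hc''⟩ := hpnd
      have hdd : p ^ (e + 1) ∣ n := ⟨c * c', by rw [← hmul, hc'', hc', pow_succ]; ring⟩
      exact Nat.pow_succ_factorization_not_dvd hne hp hdd
    obtain ⟨i, hi⟩ := hex
    have hb0 : (b i).val ≠ 0 := fun h => hi (by simp [h])
    set α := ((b i).val).factorization p with hα
    have hαe : α < e := by
      by_contra h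
      push_neg at h
      exact hi ((Nat.Prime.pow_dvd_iff_le_factorization hp hb0).mpr h)
    -- valuation of gcd(b i, n) is α
    have hg : (Nat.gcd (b i).val n).factorization p = α := by
      rw [Nat.factorization_gcd hb0 hne]
      simp only [Finsupp.inf_apply, ← hα, ← he]
      exact min_eq_left hαe.le
    have ha0 : (a i).val ≠ 0 := by
      intro h
      have h2i := h2 i
      rw [h, Nat.gcd_zero_left] at h2i
      rw [← h2i, ← he] at hg
      omega
    have hag : (Nat.gcd (a i).val n).factorization p = α := by rw [h2 i, hg]
    have hav : ((a i).val).factorization p = α := by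
      rw [Nat.factorization_gcd ha0 hne] at hag
      simp only [Finsupp.inf_apply, ← he] at hag
      omega
    -- n ∣ (a i).val - t * (b i).val over ℤ
    have hdvd : (n : ℤ) ∣ ((a i).val : ℤ) - t * ((b i).val : ℤ) := by
      rw [← ZMod.intCast_zmod_eq_zero_iff_dvd]
      push_cast
      rw [ZMod.natCast_val, ZMod.natCast_val, ZMod.cast_id, ZMod.cast_id, h1 i]
      ring
    have hpa : (p : ℤ) ^ (α + 1) ∣ ((a i).val : ℤ) := by
      have h1' : (p : ℤ) ^ (α + 1) ∣ (n : ℤ) := by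
        have : p ^ (α + 1) ∣ n :=
          (pow_dvd_pow p (Nat.succ_le_of_lt hαe)).trans (Nat.ordProj_dvd n p)
        exact_mod_cast Int.natCast_dvd_natCast.mpr this
      have h2' : (p : ℤ) ^ (α + 1) ∣ t * ((b i).val : ℤ) := by
        have hpb : (p : ℤ) ^ α ∣ ((b i).val : ℤ) := by
          have : p ^ α ∣ (b i).val := Nat.ordProj_dvd _ p
          exact_mod_cast Int.natCast_dvd_natCast.mpr this
        calc (p : ℤ) ^ (α + 1) = (p : ℤ) * (p : ℤ) ^ α := by ring
        _ ∣ t * ((b i).val : ℤ) := mul_dvd_mul hptz hpb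
      have heq : ((a i).val : ℤ)
          = (((a i).val : ℤ) - t * ((b i).val : ℤ)) + t * ((b i).val : ℤ) := by ring
      rw [heq]
      exact dvd_add (h1'.trans hdvd) h2'
    have hpan : p ^ (α + 1) ∣ (a i).val := by exact_mod_cast hpa
    have : α + 1 ≤ ((a i).val).factorization p :=
      (Nat.Prime.pow_dvd_iff_le_factorization hp ha0).mp hpan
    omega
  -- lift t to a unit mod n
  have hdvd' : n / d ∣ n := Nat.div_dvd_of_dvd hdn
  have : NeZero (n / d) := ⟨hnd0⟩
  have hunit : IsUnit (t : ZMod (n / d)) := by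
    rcases Int.natAbs_eq t with h | h
    · rw [h, Int.cast_natCast]
      exact (ZMod.isUnit_iff_coprime _ _).mpr hcop
    · rw [h, Int.cast_neg, Int.cast_natCast]
      exact ((ZMod.isUnit_iff_coprime _ _).mpr hcop).neg
  obtain ⟨u, hu⟩ := ZMod.unitsMap_surjective hdvd' hunit.unit
  refine ⟨((u : ZMod n).val : ℤ), ?_, ?_⟩
  · rw [Int.gcd_natCast_natCast]
    exact ZMod.val_coe_unit_coprime u
  · intro i
    rw [h1 i]
    have hcast : (ZMod.castHom hdvd' (ZMod (n/d))) (u : ZMod n) = (t : ZMod (n/d)) := by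
      have := congrArg (Units.val) hu
      simpa [ZMod.unitsMap_def] using this
    have hmod : ((n / d : ℕ) : ℤ) ∣ (((u : ZMod n).val : ℤ) - t) := by
      rw [← ZMod.intCast_zmod_eq_zero_iff_dvd]
      push_cast
      rw [sub_eq_zero, ZMod.natCast_val, ← ZMod.castHom_apply (h := hdvd'), hcast]
    obtain ⟨k, hk⟩ := hmod
    obtain ⟨l, hl⟩ := hdb i
    have key : ((((u : ZMod n).val : ℤ)) : ZMod n) * b i = (t : ZMod n) * b i := by
      have hb : b i = (((b i).val : ℤ) : ZMod n) := by
        push_cast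
        rw [ZMod.natCast_val, ZMod.cast_id]
      rw [hb, ← Int.cast_mul, ← Int.cast_mul, ← sub_eq_zero, ← Int.cast_sub]
      rw [ZMod.intCast_zmod_eq_zero_iff_dvd]
      have heq : (((u : ZMod n).val : ℤ)) * ((b i).val : ℤ) - t * ((b i).val : ℤ)
          = ((((u : ZMod n).val : ℤ)) - t) * ((b i).val : ℤ) := by ring
      rw [heq, hk, hl]
      have hnz : (n : ℤ) = (d : ℤ) * ((n / d : ℕ) : ℤ) := by exact_mod_cast hmul.symm
      refine ⟨k * l, ?_⟩
      rw [hnz]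
      push_cast
      ring
    rw [key]
end
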